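/- arXiv:math-ph/0105017 — 6 statements merged into one kernel-verified Lean document; each statement's English description precedes it below -/
import Mathlib

section
/- For every f ∈ F_M one has H_C(f) ≥ H_C^r(ρ_f), where ρ_f is the spatial density induced by f. -/
open MeasureTheory Real Filter Topology

noncomputable section

abbrev Space : Type := EuclideanSpace ℝ (Fin 3)
abbrev Phase : Type := Space × Space

/-- Spatial density induced by a phase-space density. -/
def rho (f : Phase → ℝ) : Space → ℝ := fun x => ∫ v : Space, f (x, v)

/-- Induced gravitational potential `U_ρ = -ρ ∗ 1/|·|`. -/
def Upot (ρ : Space → ℝ) : Space → ℝ := fun x => - ∫ y : Space, ρ y / ‖x - y‖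

/-- Kinetic energy. -/
def Ekin (f : Phase → ℝ) : ℝ := (1/2) * ∫ p : Phase, ‖p.2‖^2 * f p

/-- Casimir functional. -/
def Cas (Q : ℝ → ℝ) (f : Phase → ℝ) : ℝ := ∫ p : Phase, Q (f p)

/-- Potential energy. -/
def Epot (ρ : Space → ℝ) : ℝ :=
  -(1/2) * ∫ x : Space, ∫ y : Space, ρ x * ρ y / ‖x - y‖

/-- Energy-Casimir functional. -/
def HC (Q : ℝ → ℝ) (f : Phase → ℝ) : ℝ := Cas Q f + Ekin f + Epot (rho f)

/-- The constraint set `F_M`. -/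
def FM (Q : ℝ → ℝ) (M : ℝ) : Set (Phase → ℝ) :=
  {f | (∀ p, 0 ≤ f p) ∧ Integrable f ∧
       Integrable (fun p : Phase => Q (f p) + (1/2) * ‖p.2‖^2 * f p) ∧
       MemLp (rho f) (ENNReal.ofReal (6/5)) ∧
       (∫ p : Phase, f p) = M}

/-- `∫ ((1/2)|v|² g(v) + Q(g(v))) dv`. -/
def kinQint (Q : ℝ → ℝ) (g : Space → ℝ) : ℝ :=
  ∫ v : Space, ((1/2) * ‖v‖^2 * g v + Q (g v))

/-- The set `G_r`. -/
def Gset (Q : ℝ → ℝ) (r : ℝ) : Set (Space → ℝ) :=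
  {g | (∀ v, 0 ≤ g v) ∧ Integrable g ∧
       Integrable (fun v => (1/2) * ‖v‖^2 * g v + Q (g v)) ∧
       (∫ v : Space, g v) = r}

/-- The reduced integrand `Φ(r) = inf_{g ∈ G_r} ∫ ((1/2)|v|² g + Q(g))`. -/
def Phi (Q : ℝ → ℝ) (r : ℝ) : ℝ := sInf (kinQint Q '' Gset Q r)

/-- The reduced energy-Casimir functional. -/
def HCr (Q : ℝ → ℝ) (ρ : Space → ℝ) : ℝ := (∫ x : Space, Phi Q (ρ x)) + Epot ρ

/-- Assumptions on `Q`: `Q ∈ C¹([0,∞))` with derivative `Q'`, strictly convex,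
`Q(0) = Q'(0) = 0`, and `Q(f)/f → ∞` as `f → ∞`. -/
structure QHyp (Q Q' : ℝ → ℝ) : Prop where
  hasDeriv : ∀ r ∈ Set.Ici (0:ℝ), HasDerivWithinAt Q (Q' r) (Set.Ici 0) r
  contDeriv : ContinuousOn Q' (Set.Ici 0)
  strictConvex : StrictConvexOn ℝ (Set.Ici 0) Q
  zero : Q 0 = 0
  derivZero : Q' 0 = 0
  superlinear : Tendsto (fun f => Q f / f) atTop atTop

/-- For every `f ∈ F_M` one has `H_C(f) ≥ H_C^r(ρ_f)`. -/
theorem HC_ge_HCr (Q Q' : ℝ → ℝ) (hQ : QHyp Q Q') (M : ℝ) (hM : 0 < M)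
    (f : Phase → ℝ) (hf : f ∈ FM Q M) :
    HCr Q (rho f) ≤ HC Q f := by
  obtain ⟨hpos, hint, hQK, hLp, hmass⟩ := hf
  -- Q is nonnegative on [0, ∞)
  have hQ0 : ∀ r : ℝ, 0 ≤ r → 0 ≤ Q r := by
    intro r hr
    rcases hr.eq_or_lt with h | h
    · simp [← h, hQ.zero]
    have hconv := hQ.strictConvex.convexOn
    have hslope : ∀ s ∈ Set.Ioo (0:ℝ) r, slope Q 0 s ≤ Q r / r := by
      intro s hs
      have ha : (0:ℝ) ≤ 1 - s / r := by
        have : s / r ≤ 1 := (div_le_one h).mpr hs.2.le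
        linarith
      have hb : (0:ℝ) ≤ s / r := div_nonneg hs.1.le h.le
      have hcvx := hconv.2 (Set.self_mem_Ici) (Set.mem_Ici.mpr h.le) ha hb (by ring)
      have hsr : (1 - s / r) • (0:ℝ) + (s / r) • r = s := by
        simp only [smul_eq_mul]; field_simp; ring
      rw [hsr] at hcvx
      have hQs : Q s ≤ (s / r) * Q r := by
        rw [hQ.zero] at hcvx
        simpa using hcvx
      have : slope Q 0 s = Q s / s := by
        simp [slope_def_field, hQ.zero]
      rw [this, div_le_div_iff₀ hs.1 h]
      have : (s / r) * Q r * r = s * Q r := by field_simp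
      nlinarith [hs.1, h]
    have hder := hQ.hasDeriv 0 Set.self_mem_Ici
    have htend : Tendsto (slope Q 0) (𝓝[Set.Ici 0 \ {0}] 0) (𝓝 (Q' 0)) :=
      hasDerivWithinAt_iff_tendsto_slope.mp hder
    rw [Set.Ici_sdiff_left] at htend
    have hev : ∀ᶠ s in 𝓝[Set.Ioi (0:ℝ)] 0, slope Q 0 s ≤ Q r / r := by
      filter_upwards [Ioo_mem_nhdsGT_of_mem (Set.mem_Ico.mpr ⟨le_refl 0, h⟩)] with s hs
      exact hslope s hs
    have hle : Q' 0 ≤ Q r / r := le_of_tendsto htend hev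
    rw [hQ.derivZero] at hle
    have := mul_nonneg hle h.le
    rwa [div_mul_cancel₀ _ (ne_of_gt h)] at this
  -- every value of kinQint on Gset is nonnegative
  have himg_nonneg : ∀ r : ℝ, ∀ y ∈ kinQint Q '' Gset Q r, 0 ≤ y := by
    rintro r y ⟨g, ⟨hg0, _, _, _⟩, rfl⟩
    exact integral_nonneg fun v =>
      add_nonneg (mul_nonneg (by positivity) (hg0 v)) (hQ0 _ (hg0 v))
  have hPhi_nonneg : ∀ r : ℝ, 0 ≤ Phi Q r := by
    intro r
    rcases Set.eq_empty_or_nonempty (kinQint Q '' Gset Q r) with h | h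
    · simp [Phi, h, Real.sInf_empty]
    · exact Real.sInf_nonneg fun y hy => himg_nonneg r y hy
  -- the combined integrand
  set F : Phase → ℝ := fun p => (1/2) * ‖p.2‖^2 * f p + Q (f p) with hFdef
  have hF : Integrable F := by
    refine hQK.congr (Eventually.of_forall fun p => ?_)
    simp [hFdef]; ring
  have hFprod : Integrable F (volume.prod volume) := by rwa [← Measure.volume_eq_prod]
  have hfprod : Integrable f (volume.prod volume) := by rwa [← Measure.volume_eq_prod]
  -- pointwise (a.e.) bound Phi (rho f x) ≤ ∫ v, F (x, v)
  have hbound : ∀ᵐ x : Space, Phi Q (rho f x) ≤ ∫ v : Space, F (x, v) := by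
    filter_upwards [hFprod.prod_right_ae, hfprod.prod_right_ae] with x h1 h2
    have hg : (fun v => f (x, v)) ∈ Gset Q (rho f x) := ⟨fun v => hpos _, h2, h1, rfl⟩
    have hmem : (∫ v : Space, F (x, v)) ∈ kinQint Q '' Gset Q (rho f x) :=
      ⟨fun v => f (x, v), hg, rfl⟩
    exact csInf_le ⟨0, fun y hy => himg_nonneg _ y hy⟩ hmem
  have hmain : ∫ x : Space, Phi Q (rho f x) ≤ ∫ x : Space, ∫ v : Space, F (x, v) :=
    integral_mono_of_nonneg (Eventually.of_forall fun x => hPhi_nonneg _)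
      hFprod.integral_prod_left hbound
  -- Fubini
  have hiter : (∫ x : Space, ∫ v : Space, F (x, v)) = ∫ p : Phase, F p := by
    rw [Measure.volume_eq_prod]
    exact integral_integral hFprod
  -- split the integral of F
  have hkin : Integrable (fun p : Phase => ‖p.2‖^2 * f p) := by
    refine Integrable.mono (hF.const_mul 2) ?_ (Eventually.of_forall fun p => ?_)
    · exact ((continuous_norm.comp continuous_snd).pow 2).aestronglyMeasurable.mul hint.1
    · have h1 : (0:ℝ) ≤ ‖p.2‖^2 * f p := mul_nonneg (by positivity) (hpos p)
      have h2 : (0:ℝ) ≤ Q (f p) := hQ0 _ (hpos p)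
      have h3 : (0:ℝ) ≤ F p := add_nonneg (mul_nonneg (by positivity) (hpos p)) h2
      rw [Real.norm_eq_abs, Real.norm_eq_abs, abs_of_nonneg h1,
        abs_of_nonneg (by linarith : (0:ℝ) ≤ 2 * F p)]
      simp only [hFdef]
      nlinarith
  have hQf : Integrable (fun p : Phase => Q (f p)) := by
    refine (hF.sub (hkin.const_mul (1/2))).congr (Eventually.of_forall fun p => ?_)
    simp [hFdef]; ring
  have hsplit : (∫ p : Phase, F p) = Cas Q f + Ekin f := by
    have h1 : (∫ p : Phase, F p)
        = (∫ p : Phase, (1/2) * (‖p.2‖^2 * f p)) + ∫ p : Phase, Q (f p) := by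
      rw [← integral_add (hkin.const_mul (1/2)) hQf]
      congr 1; funext p; simp [hFdef]; ring
    rw [h1, integral_const_mul]
    unfold Cas Ekin
    ring
  -- conclude
  unfold HCr HC
  have : (∫ x : Space, Phi Q (rho f x)) ≤ Cas Q f + Ekin f := by
    rw [← hsplit, ← hiter]; exact hmain
  linarith
end
end

section
/- If f₀ ∈ F_M is a minimizer of H_C over F_M, then equality H_C(f₀) = H_C^r(ρ_{f₀}) holds. -/
open MeasureTheory Real Filter Topology

noncomputable section

namespace HCaux

variable {Q Q' : ℝ → ℝ}

lemma Q_contOn (hQ : QHyp Q Q') : ContinuousOn Q (Set.Ici 0) :=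
  fun r hr => ((hQ.hasDeriv r hr).continuousWithinAt)

lemma tangent (hQ : QHyp Q Q') {a b : ℝ} (ha : 0 ≤ a) (hb : 0 ≤ b) :
    Q b + Q' b * (a - b) ≤ Q a := by
  rcases lt_trichotomy a b with h | h | h
  · have hs := hQ.strictConvex.convexOn.slope_le_of_hasDerivWithinAt ha hb h (hQ.hasDeriv b hb)
    rw [slope_def_field] at hs
    have hba : (0:ℝ) < b - a := by linarith
    rw [div_le_iff₀ hba] at hs
    nlinarith
  · simp [h]
  · have hs := hQ.strictConvex.convexOn.le_slope_of_hasDerivWithinAt hb ha h (hQ.hasDeriv b hb)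
    rw [slope_def_field] at hs
    have hab : (0:ℝ) < a - b := by linarith
    rw [le_div_iff₀ hab] at hs
    nlinarith

lemma Q'_strictMono (hQ : QHyp Q Q') : StrictMonoOn Q' (Set.Ici 0) := by
  intro x hx y hy hxy
  have h1 := hQ.strictConvex.lt_slope_of_hasDerivWithinAt hx hy hxy (hQ.hasDeriv x hx)
  have h2 := hQ.strictConvex.slope_lt_of_hasDerivWithinAt hx hy hxy (hQ.hasDeriv y hy)
  exact h1.trans h2

lemma Q'_nonneg (hQ : QHyp Q Q') {t : ℝ} (ht : 0 ≤ t) : 0 ≤ Q' t := by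
  rcases eq_or_lt_of_le ht with h | h
  · rw [← h, hQ.derivZero]
  · have := Q'_strictMono hQ (Set.self_mem_Ici) (le_of_lt h) h
    rw [hQ.derivZero] at this
    exact this.le

lemma Q_nonneg (hQ : QHyp Q Q') {t : ℝ} (ht : 0 ≤ t) : 0 ≤ Q t := by
  have := tangent hQ ht le_rfl
  rw [hQ.zero, hQ.derivZero] at this
  linarith

lemma Q_smul_le (hQ : QHyp Q Q') {c t : ℝ} (hc0 : 0 ≤ c) (hc1 : c ≤ 1) (ht : 0 ≤ t) :
    Q (c * t) ≤ c * Q t := by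
  have := hQ.strictConvex.convexOn.2 (Set.mem_Ici.2 ht) (Set.self_mem_Ici)
    hc0 (by linarith : (0:ℝ) ≤ 1 - c) (by ring)
  simpa [hQ.zero, smul_eq_mul] using this

lemma Q'_atTop (hQ : QHyp Q Q') : Tendsto Q' atTop atTop := by
  apply tendsto_atTop_mono' atTop (_ : ∀ᶠ s in atTop, Q s / s ≤ Q' s) hQ.superlinear
  filter_upwards [eventually_gt_atTop (0:ℝ)] with s hs
  have hhalf : Q (s/2) ≤ Q s / 2 := by
    have h := hQ.strictConvex.convexOn.2 (Set.mem_Ici.2 hs.le) (Set.self_mem_Ici)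
      (by norm_num : (0:ℝ) ≤ 1/2) (by norm_num : (0:ℝ) ≤ 1/2) (by norm_num)
    simp only [smul_eq_mul, hQ.zero, mul_zero, add_zero] at h
    rw [(by ring : s/2 = 1/2 * s)]
    linarith
  have hmem : (s/2) ∈ Set.Ici (0:ℝ) := by simp; linarith
  have hs2 : s/2 < s := by linarith
  have hslope := hQ.strictConvex.convexOn.slope_le_of_hasDerivWithinAt hmem
    (Set.mem_Ici.2 hs.le) hs2 (hQ.hasDeriv s (Set.mem_Ici.2 hs.le))
  rw [slope_def_field] at hslope
  have hd : (0:ℝ) < s - s/2 := by linarith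
  rw [div_le_iff₀ hd] at hslope
  rw [div_le_iff₀ hs]
  nlinarith

/-- Properties of a generalized inverse of `Q'` on `[0,∞)`. -/
structure IsQInv (Q' q : ℝ → ℝ) : Prop where
  cont : Continuous q
  mono : Monotone q
  zero : q 0 = 0
  rinv : ∀ s, 0 ≤ s → Q' (q s) = s
  top : Tendsto q atTop atTop

lemma IsQInv.nonneg {q : ℝ → ℝ} (hq : IsQInv Q' q) {s : ℝ} (hs : 0 ≤ s) : 0 ≤ q s := by
  have := hq.mono hs
  rwa [hq.zero] at this

lemma exists_qinv (hQ : QHyp Q Q') : ∃ q : ℝ → ℝ, IsQInv Q' q := by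
  classical
  set R : ℝ → ℝ := fun t => if t ≤ 0 then t else Q' (max t 0) with hR
  have hRg : ∀ t, 0 ≤ t → R t = Q' t := by
    intro t ht
    rcases eq_or_lt_of_le ht with h | h
    · simp [hR, ← h, hQ.derivZero]
    · simp [hR, not_le.2 h, max_eq_left h.le]
  have hRmono : StrictMono R := by
    intro a b hab
    rcases le_or_gt a 0 with ha | ha
    · rcases le_or_gt b 0 with hb | hb
      · simpa [hR, ha, hb] using hab
      · have h1 : R a = a := by simp [hR, ha]
        have h2 : R b = Q' b := hRg b hb.le
        rw [h1, h2]
        rcases lt_or_eq_of_le ha with h | h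
        · exact h.trans_le (Q'_nonneg hQ hb.le)
        · subst h
          have := Q'_strictMono hQ Set.self_mem_Ici (Set.mem_Ici.2 hb.le) hb
          rwa [hQ.derivZero] at this
    · have h1 : R a = Q' a := hRg a ha.le
      have h2 : R b = Q' b := hRg b (ha.trans hab).le
      rw [h1, h2]
      exact Q'_strictMono hQ (Set.mem_Ici.2 ha.le) (Set.mem_Ici.2 (ha.trans hab).le) hab
  have hRcont : Continuous R := by
    have h2 : Continuous fun t : ℝ => Q' (max t 0) :=
      hQ.contDeriv.comp_continuous (continuous_id.max continuous_const)
        (fun t => Set.mem_Ici.2 (le_max_right _ _))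
    refine Continuous.if_le continuous_id h2 continuous_id continuous_const ?_
    intro t ht
    simp [ht, hQ.derivZero]
  have hRtop : Tendsto R atTop atTop := by
    refine (Q'_atTop hQ).congr' ?_
    filter_upwards [eventually_ge_atTop (0:ℝ)] with t ht
    exact (hRg t ht).symm
  have hRsurj : Function.Surjective R := by
    intro y
    obtain ⟨b, hb⟩ := (hRtop.eventually (eventually_ge_atTop y)).exists
    have ha : R (min y 0) ≤ y := by
      have h0 : min y 0 ≤ 0 := min_le_right _ _
      simp only [hR]
      rw [if_pos h0]
      exact min_le_left _ _
    exact intermediate_value_univ (min y 0) b hRcont ⟨ha, hb⟩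
  set e := StrictMono.orderIsoOfSurjective R hRmono hRsurj with he
  have hRe : ∀ s, R (e.symm s) = s := fun s =>
    StrictMono.orderIsoOfSurjective_self_symm_apply R hRmono hRsurj s
  have heR : ∀ t, e.symm (R t) = t := fun t =>
    StrictMono.orderIsoOfSurjective_symm_apply_self R hRmono hRsurj t
  have hq0 : e.symm 0 = 0 := by
    have : R 0 = 0 := by simp [hR]
    conv_lhs => rw [← this]
    exact heR 0
  have hqnn : ∀ s, 0 ≤ s → 0 ≤ e.symm s := by
    intro s hs
    have := e.symm.monotone hs
    rwa [hq0] at this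
  refine ⟨fun s => e.symm s, ?_, e.symm.monotone, hq0, ?_, ?_⟩
  · exact OrderIso.continuous e.symm
  · intro s hs
    rw [← hRg _ (hqnn s hs)]
    exact hRe s
  · refine tendsto_atTop_atTop_of_monotone e.symm.monotone ?_
    intro b
    exact ⟨R b, (heR b).ge⟩


/-- The candidate minimizing profile at energy level `E`. -/
def gbar (q : ℝ → ℝ) (E : ℝ) (v : Space) : ℝ := q (max (E - (1/2) * ‖v‖^2) 0)

def mfun (q : ℝ → ℝ) (E : ℝ) : ℝ := ∫ v : Space, gbar q E v

variable {q : ℝ → ℝ}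

lemma gbar_cont (hq : IsQInv Q' q) (E : ℝ) : Continuous (gbar q E) :=
  hq.cont.comp ((continuous_const.sub
    ((continuous_const.mul ((continuous_norm).pow 2)))).max continuous_const)

lemma gbar_nonneg (hq : IsQInv Q' q) (E : ℝ) (v : Space) : 0 ≤ gbar q E v :=
  hq.nonneg (le_max_right _ _)

lemma gbar_zero (hq : IsQInv Q' q) {E : ℝ} {v : Space}
    (hv : E ≤ (1/2) * ‖v‖^2) : gbar q E v = 0 := by
  rw [gbar, max_eq_right (by linarith), hq.zero]

lemma gbar_support (hq : IsQInv Q' q) (E : ℝ) :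
    ∀ v : Space, v ∉ Metric.closedBall (0:Space) (Real.sqrt (2 * max E 0)) → gbar q E v = 0 := by
  intro v hv
  rw [Metric.mem_closedBall, dist_zero_right, not_le] at hv
  have h1 : 0 ≤ Real.sqrt (2 * max E 0) := Real.sqrt_nonneg _
  have h2 : 2 * max E 0 < ‖v‖^2 := by
    calc 2 * max E 0 = Real.sqrt (2 * max E 0) ^ 2 :=
          (Real.sq_sqrt (by positivity)).symm
      _ < ‖v‖^2 := by
          apply pow_lt_pow_left₀ hv h1
          norm_num
  apply gbar_zero hq
  have := le_max_left E 0
  nlinarith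

lemma gbar_hasCompactSupport (hq : IsQInv Q' q) (E : ℝ) :
    HasCompactSupport (gbar q E) :=
  HasCompactSupport.intro (isCompact_closedBall _ _) (gbar_support hq E)

lemma gbar_integrable (hq : IsQInv Q' q) (E : ℝ) : Integrable (gbar q E) :=
  (gbar_cont hq E).integrable_of_hasCompactSupport (gbar_hasCompactSupport hq E)

lemma gbar_mono (hq : IsQInv Q' q) {E E' : ℝ} (h : E ≤ E') (v : Space) :
    gbar q E v ≤ gbar q E' v :=
  hq.mono (max_le_max (by linarith) le_rfl)

/-- The combined integrand `½|v|² g + Q(g)` for the profile. -/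
def kcomb (Q : ℝ → ℝ) (q : ℝ → ℝ) (E : ℝ) (v : Space) : ℝ :=
  (1/2) * ‖v‖^2 * gbar q E v + Q (gbar q E v)

lemma kcomb_cont (hQ : QHyp Q Q') (hq : IsQInv Q' q) (E : ℝ) : Continuous (kcomb Q q E) := by
  apply Continuous.add
  · exact (continuous_const.mul ((continuous_norm).pow 2)).mul (gbar_cont hq E)
  · exact (Q_contOn hQ).comp_continuous (gbar_cont hq E) (fun v => gbar_nonneg hq E v)

lemma kcomb_nonneg (hQ : QHyp Q Q') (hq : IsQInv Q' q) (E : ℝ) (v : Space) :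
    0 ≤ kcomb Q q E v := by
  have hg := gbar_nonneg hq E v
  have h1 : 0 ≤ (1/2) * ‖v‖^2 * gbar q E v := by positivity
  have h2 : 0 ≤ Q (gbar q E v) := Q_nonneg hQ hg
  exact add_nonneg h1 h2

lemma kcomb_integrable (hQ : QHyp Q Q') (hq : IsQInv Q' q) (E : ℝ) :
    Integrable (kcomb Q q E) := by
  apply (kcomb_cont hQ hq E).integrable_of_hasCompactSupport
  apply HasCompactSupport.intro (isCompact_closedBall (0:Space) (Real.sqrt (2 * max E 0)))
  intro v hv
  rw [kcomb, gbar_support hq E v hv]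
  simp [hQ.zero]


lemma mfun_nonneg (hq : IsQInv Q' q) (E : ℝ) : 0 ≤ mfun q E :=
  integral_nonneg (gbar_nonneg hq E)

lemma mfun_mono (hq : IsQInv Q' q) : Monotone (mfun q) := by
  intro E E' h
  exact integral_mono (gbar_integrable hq E) (gbar_integrable hq E') (gbar_mono hq h)

lemma mfun_zero (hq : IsQInv Q' q) : mfun q 0 = 0 := by
  have : gbar q 0 = fun _ => 0 := by
    funext v
    exact gbar_zero hq (by positivity)
  rw [mfun, this, integral_zero]

lemma mfun_continuous (hq : IsQInv Q' q) : Continuous (mfun q) := by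
  rw [continuous_iff_continuousAt]
  intro E₀
  apply continuousAt_of_dominated (bound := gbar q (|E₀| + 1))
  · exact Eventually.of_forall fun E => ((gbar_cont hq E).aestronglyMeasurable)
  · filter_upwards [Metric.ball_mem_nhds E₀ one_pos] with E hE
    apply Eventually.of_forall
    intro v
    rw [Real.norm_of_nonneg (gbar_nonneg hq E v)]
    apply gbar_mono hq _ v
    rw [Metric.mem_ball, Real.dist_eq] at hE
    have h := abs_lt.1 hE
    have := le_abs_self E₀
    linarith [h.2]
  · exact gbar_integrable hq _
  · apply Eventually.of_forall
    intro v
    exact (hq.cont.comp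
      ((continuous_id.sub continuous_const).max continuous_const)).continuousAt


lemma mfun_atTop (hq : IsQInv Q' q) : Tendsto (mfun q) atTop atTop := by
  set c : ℝ := (volume (Metric.closedBall (0:Space) 1)).toReal with hc
  have hcpos : 0 < c := by
    rw [hc]
    apply ENNReal.toReal_pos
    · exact (Metric.measure_closedBall_pos volume (0:Space) one_pos).ne'
    · exact (MeasureTheory.measure_closedBall_lt_top).ne
  have hlow : ∀ E : ℝ, 1 ≤ E → q (E/2) * c ≤ mfun q E := by
    intro E hE
    have hint : Integrable
        ((Metric.closedBall (0:Space) 1).indicator (fun _ => q (E/2))) := by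
      rw [integrable_indicator_iff measurableSet_closedBall]
      exact integrableOn_const MeasureTheory.measure_closedBall_lt_top.ne
    have hmono : ∀ v : Space,
        (Metric.closedBall (0:Space) 1).indicator (fun _ => q (E/2)) v ≤ gbar q E v := by
      intro v
      by_cases hv : v ∈ Metric.closedBall (0:Space) 1
      · rw [Set.indicator_of_mem hv]
        rw [Metric.mem_closedBall, dist_zero_right] at hv
        have hv2 : ‖v‖^2 ≤ 1 := by nlinarith [norm_nonneg v]
        have : E/2 ≤ max (E - (1/2) * ‖v‖^2) 0 := by
          apply le_max_of_le_left
          linarith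
        exact hq.mono this
      · rw [Set.indicator_of_notMem hv]
        exact gbar_nonneg hq E v
    calc q (E/2) * c
        = ∫ v : Space, (Metric.closedBall (0:Space) 1).indicator (fun _ => q (E/2)) v := by
          rw [integral_indicator_const _ measurableSet_closedBall, smul_eq_mul, measureReal_def, ← hc, mul_comm]
      _ ≤ mfun q E := integral_mono hint (gbar_integrable hq E) hmono
  have htend : Tendsto (fun E : ℝ => q (E/2) * c) atTop atTop := by
    apply Tendsto.atTop_mul_const hcpos
    exact hq.top.comp (tendsto_id.atTop_div_const two_pos)
  exact tendsto_atTop_mono' atTop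
    (by filter_upwards [eventually_ge_atTop (1:ℝ)] with E hE using hlow E hE) htend


/-- Energy cutoff level realizing mass `r`. -/
def Efun (q : ℝ → ℝ) (r : ℝ) : ℝ := sInf {E : ℝ | 0 ≤ E ∧ r ≤ mfun q E}

lemma Eset_nonempty (hq : IsQInv Q' q) (r : ℝ) : {E : ℝ | 0 ≤ E ∧ r ≤ mfun q E}.Nonempty := by
  obtain ⟨E₀, hE₀⟩ := ((mfun_atTop hq).eventually (eventually_ge_atTop r)).exists_forall_of_atTop
  exact ⟨max E₀ 0, le_max_right _ _, hE₀ _ (le_max_left _ _)⟩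

lemma Eset_bddBelow (r : ℝ) : BddBelow {E : ℝ | 0 ≤ E ∧ r ≤ mfun q E} :=
  ⟨0, fun E hE => hE.1⟩

lemma Efun_nonneg (hq : IsQInv Q' q) (r : ℝ) : 0 ≤ Efun q r :=
  le_csInf (Eset_nonempty hq r) (fun E hE => hE.1)

lemma Efun_mono (hq : IsQInv Q' q) : Monotone (Efun q) := by
  intro r r' h
  apply csInf_le_csInf (Eset_bddBelow r) (Eset_nonempty hq r')
  intro E hE
  exact ⟨hE.1, le_trans h hE.2⟩

lemma mfun_Efun (hq : IsQInv Q' q) {r : ℝ} (hr : 0 ≤ r) : mfun q (Efun q r) = r := by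
  have hclosed : IsClosed {E : ℝ | 0 ≤ E ∧ r ≤ mfun q E} := by
    have : {E : ℝ | 0 ≤ E ∧ r ≤ mfun q E} =
        Set.Ici 0 ∩ (mfun q) ⁻¹' (Set.Ici r) := by
      ext E; simp [Set.mem_Ici, and_comm]
    rw [this]
    exact isClosed_Ici.inter (IsClosed.preimage (mfun_continuous hq) isClosed_Ici)
  have hmem := hclosed.csInf_mem (Eset_nonempty hq r) (Eset_bddBelow r)
  obtain ⟨hE0, hrm⟩ := hmem
  -- apply IVT on [0, Efun q r]
  have hivt := intermediate_value_Icc hE0 ((mfun_continuous hq).continuousOn)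
  have hrmem : r ∈ Set.Icc (mfun q 0) (mfun q (Efun q r)) := by
    rw [mfun_zero hq]
    exact ⟨hr, hrm⟩
  obtain ⟨E, hEmem, hEeq⟩ := hivt hrmem
  have h1 : Efun q r ≤ E := csInf_le (Eset_bddBelow r) ⟨hEmem.1, hEeq.ge⟩
  have h2 : E = Efun q r := le_antisymm hEmem.2 h1
  rw [← h2, hEeq]


lemma kinQint_nonneg_of_mem (hQ : QHyp Q Q') {r : ℝ} {g : Space → ℝ} (hg : g ∈ Gset Q r) :
    0 ≤ kinQint Q g := by
  apply integral_nonneg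
  intro v
  have h1 := hg.1 v
  have h2 : 0 ≤ (1/2) * ‖v‖^2 * g v := by positivity
  exact add_nonneg h2 (Q_nonneg hQ h1)

lemma Gset_bddBelow (hQ : QHyp Q Q') (r : ℝ) : BddBelow (kinQint Q '' Gset Q r) := by
  refine ⟨0, ?_⟩
  rintro y ⟨g, hg, rfl⟩
  exact kinQint_nonneg_of_mem hQ hg

lemma kinQint_gbar (hQ : QHyp Q Q') (hq : IsQInv Q' q) (E : ℝ) :
    kinQint Q (gbar q E) = ∫ v : Space, kcomb Q q E v := rfl

lemma gbar_mem_Gset (hQ : QHyp Q Q') (hq : IsQInv Q' q) {r : ℝ} (hr : 0 ≤ r) :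
    gbar q (Efun q r) ∈ Gset Q r :=
  ⟨gbar_nonneg hq _, gbar_integrable hq _, kcomb_integrable hQ hq _, mfun_Efun hq hr⟩

lemma gbar_opt (hQ : QHyp Q Q') (hq : IsQInv Q' q) {r : ℝ} (hr : 0 ≤ r)
    {g : Space → ℝ} (hg : g ∈ Gset Q r) :
    kinQint Q (gbar q (Efun q r)) ≤ kinQint Q g := by
  obtain ⟨hgpos, hgint, hgcomb, hgmass⟩ := hg
  set E := Efun q r with hE
  have hE0 : 0 ≤ E := Efun_nonneg hq r
  have hkey : ∀ v : Space, kcomb Q q E v + E * (g v - gbar q E v)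
      ≤ (1/2) * ‖v‖^2 * g v + Q (g v) := by
    intro v
    set s := max (E - (1/2) * ‖v‖^2) 0 with hs
    have hs0 : 0 ≤ s := le_max_right _ _
    have hb0 : 0 ≤ gbar q E v := gbar_nonneg hq E v
    have hQ'b : Q' (gbar q E v) = s := hq.rinv s hs0
    have htan := tangent hQ (hgpos v) hb0
    rw [hQ'b] at htan
    rw [kcomb]
    rcases le_or_gt ((1/2) * ‖v‖^2) E with h | h
    · have hsval : s = E - (1/2) * ‖v‖^2 := max_eq_left (by linarith)
      rw [hsval] at htan
      nlinarith [htan]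
    · have hsval : s = 0 := max_eq_right (by linarith)
      have hb : gbar q E v = 0 := gbar_zero hq h.le
      rw [hb] at htan ⊢
      rw [hsval] at htan
      have hgv := hgpos v
      nlinarith [htan]
  have hsub : Integrable (fun v : Space => g v - gbar q E v) :=
    hgint.sub (gbar_integrable hq E)
  have hmul : Integrable (fun v : Space => E * (g v - gbar q E v)) := hsub.const_mul E
  have hint1 : Integrable (fun v => kcomb Q q E v + E * (g v - gbar q E v)) :=
    (kcomb_integrable hQ hq E).add hmul
  have h := integral_mono hint1 hgcomb hkey
  have heq : ∫ v : Space, (kcomb Q q E v + E * (g v - gbar q E v))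
      = kinQint Q (gbar q E) + E * (r - r) := by
    rw [integral_add (kcomb_integrable hQ hq E) hmul,
      MeasureTheory.integral_const_mul, integral_sub hgint (gbar_integrable hq E), hgmass]
    have h2 : ∫ v : Space, gbar q E v = r := mfun_Efun hq hr
    rw [h2, kinQint_gbar hQ hq]
  rw [heq, sub_self, mul_zero, add_zero] at h
  exact h

lemma Phi_eq (hQ : QHyp Q Q') (hq : IsQInv Q' q) {r : ℝ} (hr : 0 ≤ r) :
    Phi Q r = kinQint Q (gbar q (Efun q r)) := by
  apply IsLeast.csInf_eq
  constructor
  · exact ⟨gbar q (Efun q r), gbar_mem_Gset hQ hq hr, rfl⟩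
  · rintro y ⟨g, hg, rfl⟩
    exact gbar_opt hQ hq hr hg

lemma Phi_le (hQ : QHyp Q Q') {r : ℝ} {g : Space → ℝ} (hg : g ∈ Gset Q r) :
    Phi Q r ≤ kinQint Q g :=
  csInf_le (Gset_bddBelow hQ r) ⟨g, hg, rfl⟩

lemma Gset_neg_empty (hQ : QHyp Q Q') {r : ℝ} (hr : r < 0) : Gset Q r = ∅ := by
  ext g
  simp only [Set.mem_empty_iff_false, iff_false]
  rintro ⟨h1, h2, h3, h4⟩
  have hnn : (0:ℝ) ≤ ∫ v : Space, g v := integral_nonneg h1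
  rw [h4] at hnn
  linarith

lemma Phi_neg (hQ : QHyp Q Q') {r : ℝ} (hr : r < 0) : Phi Q r = 0 := by
  rw [Phi, Gset_neg_empty hQ hr, Set.image_empty, Real.sInf_empty]

lemma Phi_nonneg (hQ : QHyp Q Q') (hq : IsQInv Q' q) (r : ℝ) : 0 ≤ Phi Q r := by
  rcases lt_or_ge r 0 with h | h
  · rw [Phi_neg hQ h]
  · rw [Phi_eq hQ hq h]
    exact kinQint_nonneg_of_mem hQ (gbar_mem_Gset hQ hq h)


lemma Phi_mono (hQ : QHyp Q Q') (hq : IsQInv Q' q) : Monotone (Phi Q) := by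
  intro r r' hrr
  rcases lt_or_ge r 0 with h | h
  · rw [Phi_neg hQ h]
    exact Phi_nonneg hQ hq r'
  have hr' : 0 ≤ r' := h.trans hrr
  rcases eq_or_lt_of_le hr' with h0 | h0
  · have : r = 0 := le_antisymm (hrr.trans h0.symm.le) h
    rw [this, ← h0]
  set c := r / r' with hc
  have hc0 : 0 ≤ c := div_nonneg h hr'
  have hc1 : c ≤ 1 := by
    rw [hc, div_le_one h0]
    exact hrr
  set G := gbar q (Efun q r') with hG
  have hGnn : ∀ v, 0 ≤ G v := gbar_nonneg hq _
  have hGint : Integrable G := gbar_integrable hq _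
  have hGmass : ∫ v : Space, G v = r' := mfun_Efun hq hr'
  have hmemsc : (fun v => c * G v) ∈ Gset Q r := by
    refine ⟨fun v => mul_nonneg hc0 (hGnn v), hGint.const_mul c, ?_, ?_⟩
    · apply Continuous.integrable_of_hasCompactSupport
      · apply Continuous.add
        · exact (continuous_const.mul ((continuous_norm).pow 2)).mul
            (continuous_const.mul (gbar_cont hq _))
        · exact (Q_contOn hQ).comp_continuous (continuous_const.mul (gbar_cont hq _))
            (fun v => Set.mem_Ici.2 (mul_nonneg hc0 (hGnn v)))
      · apply HasCompactSupport.intro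
          (isCompact_closedBall (0:Space) (Real.sqrt (2 * max (Efun q r') 0)))
        intro v hv
        have hGv : G v = 0 := gbar_support hq _ v hv
        simp only [hGv, mul_zero, hQ.zero, add_zero]
    · rw [MeasureTheory.integral_const_mul, hGmass, hc, div_mul_cancel₀ _ (ne_of_gt h0)]
  have hb1 : Phi Q r ≤ kinQint Q (fun v => c * G v) := Phi_le hQ hmemsc
  have hb2 : kinQint Q (fun v => c * G v) ≤ c * kinQint Q G := by
    have hrhs : c * kinQint Q G = ∫ v : Space, c * ((1/2) * ‖v‖^2 * G v + Q (G v)) :=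
      (MeasureTheory.integral_const_mul c _).symm
    rw [kinQint, hrhs]
    apply integral_mono _ _ ?_
    · exact hmemsc.2.2.1
    · exact (kcomb_integrable hQ hq (Efun q r')).const_mul c
    · intro v
      have := Q_smul_le hQ hc0 hc1 (hGnn v)
      have h2 : (1/2) * ‖v‖^2 * (c * G v) = c * ((1/2) * ‖v‖^2 * G v) := by ring
      simp only []
      rw [h2]
      calc c * ((1/2) * ‖v‖^2 * G v) + Q (c * G v)
          ≤ c * ((1/2) * ‖v‖^2 * G v) + c * Q (G v) := by linarith
        _ = c * ((1/2) * ‖v‖^2 * G v + Q (G v)) := by ring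
  have hb3 : c * kinQint Q G ≤ kinQint Q G := by
    apply mul_le_of_le_one_left _ hc1
    exact kinQint_nonneg_of_mem hQ (gbar_mem_Gset hQ hq hr')
  rw [Phi_eq hQ hq hr']
  exact hb1.trans (hb2.trans hb3)


lemma Qext_cont (hQ : QHyp Q Q') : Continuous (fun t => Q (max t 0)) :=
  (Q_contOn hQ).comp_continuous (continuous_id.max continuous_const)
    (fun t => Set.mem_Ici.2 (le_max_right _ _))

lemma Epot_congr {ρ ρ' : Space → ℝ} (h : ρ =ᵐ[(volume : Measure Space)] ρ') :
    Epot ρ = Epot ρ' := by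
  rw [Epot, Epot]
  congr 1
  apply integral_congr_ae
  filter_upwards [h] with x hx
  apply integral_congr_ae
  filter_upwards [h] with y hy
  rw [hx, hy]

lemma cas_ekin_eq (hQ : QHyp Q Q') (f : Phase → ℝ) (hpos : ∀ p, 0 ≤ f p)
    (hmeas : AEStronglyMeasurable f (volume : Measure Phase))
    (hintQ : Integrable (fun p : Phase => Q (f p) + (1/2) * ‖p.2‖^2 * f p)) :
    Cas Q f + Ekin f = ∫ p : Phase, (Q (f p) + (1/2) * ‖p.2‖^2 * f p) := by
  have hQmeas : AEStronglyMeasurable (fun p : Phase => Q (f p)) volume := by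
    have : (fun p : Phase => Q (f p)) = (fun t => Q (max t 0)) ∘ f := by
      funext p
      simp [max_eq_left (hpos p)]
    rw [this]
    exact (Qext_cont hQ).comp_aestronglyMeasurable hmeas
  have hKmeas : AEStronglyMeasurable (fun p : Phase => (1/2) * ‖p.2‖^2 * f p) volume := by
    exact ((continuous_const.mul ((continuous_norm.comp continuous_snd).pow 2)).aestronglyMeasurable).mul hmeas
  have hQint : Integrable (fun p : Phase => Q (f p)) := by
    apply hintQ.mono' hQmeas
    apply Eventually.of_forall
    intro p
    rw [Real.norm_of_nonneg (Q_nonneg hQ (hpos p))]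
    have h2 : 0 ≤ (1/2) * ‖p.2‖^2 * f p := by
      have := hpos p; positivity
    linarith
  have hKint : Integrable (fun p : Phase => (1/2) * ‖p.2‖^2 * f p) := by
    apply hintQ.mono' hKmeas
    apply Eventually.of_forall
    intro p
    have h2 : 0 ≤ (1/2) * ‖p.2‖^2 * f p := by
      have := hpos p; positivity
    rw [Real.norm_of_nonneg h2]
    have := Q_nonneg hQ (hpos p)
    linarith
  have h3 : (1/2 : ℝ) * ∫ p : Phase, ‖p.2‖^2 * f p = ∫ p : Phase, (1/2) * ‖p.2‖^2 * f p := by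
    rw [← MeasureTheory.integral_const_mul]
    congr 1
    funext p
    ring
  rw [Cas, Ekin, h3, ← integral_add hQint hKint]

end HCaux

open HCaux

/-- If `f₀ ∈ F_M` is a minimizer of `H_C` over `F_M`, then
`H_C(f₀) = H_C^r(ρ_{f₀})`. -/
theorem HC_eq_HCr_of_minimizer (Q Q' : ℝ → ℝ) (hQ : QHyp Q Q') (M : ℝ) (hM : 0 < M)
    (f₀ : Phase → ℝ) (hf₀ : f₀ ∈ FM Q M)
    (hmin : ∀ f ∈ FM Q M, HC Q f₀ ≤ HC Q f) :
    HC Q f₀ = HCr Q (rho f₀) := by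
  obtain ⟨q, hq⟩ := exists_qinv hQ
  obtain ⟨hpos, hint, hintQ, hLp, hmass⟩ := hf₀
  have hvol : (volume : Measure Phase) = (volume : Measure Space).prod volume :=
    MeasureTheory.Measure.volume_eq_prod _ _
  set ρ₀ := rho f₀ with hρ₀
  have hρnn : ∀ x, 0 ≤ ρ₀ x := fun x => integral_nonneg (fun v => hpos (x, v))
  have hintP : Integrable f₀ ((volume : Measure Space).prod volume) := hvol ▸ hint
  have hintQP : Integrable (fun p : Phase => Q (f₀ p) + (1/2) * ‖p.2‖^2 * f₀ p)
      ((volume : Measure Space).prod volume) := hvol ▸ hintQ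
  have hρmeas : AEStronglyMeasurable ρ₀ (volume : Measure Space) :=
    hintP.aestronglyMeasurable.integral_prod_right'
  set h : Space → ℝ := fun x => ∫ v : Space, (Q (f₀ (x, v)) + (1/2) * ‖v‖^2 * f₀ (x, v))
    with hh
  have hh_int : Integrable h (volume : Measure Space) := hintQP.integral_prod_left
  have hae₁ : ∀ᵐ x : Space ∂(volume : Measure Space),
      Integrable (fun v => f₀ (x, v)) (volume : Measure Space) := hintP.prod_right_ae
  have hae₂ : ∀ᵐ x : Space ∂(volume : Measure Space),
      Integrable (fun v : Space => Q (f₀ (x, v)) + (1/2) * ‖v‖^2 * f₀ (x, v))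
        (volume : Measure Space) := hintQP.prod_right_ae
  have hmem : ∀ᵐ x : Space ∂(volume : Measure Space),
      (fun v => f₀ (x, v)) ∈ Gset Q (ρ₀ x) := by
    filter_upwards [hae₁, hae₂] with x h1 h2
    refine ⟨fun v => hpos (x, v), h1, ?_, rfl⟩
    have heq : (fun v : Space => (1/2) * ‖v‖^2 * f₀ (x, v) + Q (f₀ (x, v)))
        = fun v : Space => Q (f₀ (x, v)) + (1/2) * ‖v‖^2 * f₀ (x, v) := by
      funext v
      ring
    rw [heq]
    exact h2
  have hPhile : ∀ᵐ x : Space ∂(volume : Measure Space), Phi Q (ρ₀ x) ≤ h x := by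
    filter_upwards [hmem] with x hx
    have h1 : Phi Q (ρ₀ x) ≤ kinQint Q (fun v => f₀ (x, v)) := Phi_le hQ hx
    have h2 : kinQint Q (fun v => f₀ (x, v)) = h x := by
      rw [kinQint, hh]
      congr 1
      funext v
      ring
    linarith
  have hΦmeas : AEStronglyMeasurable (fun x => Phi Q (ρ₀ x)) (volume : Measure Space) :=
    ((Phi_mono hQ hq).measurable.comp_aemeasurable hρmeas.aemeasurable).aestronglyMeasurable
  have hΦint : Integrable (fun x => Phi Q (ρ₀ x)) (volume : Measure Space) := by
    apply hh_int.mono' hΦmeas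
    filter_upwards [hPhile] with x hx
    rw [Real.norm_of_nonneg (Phi_nonneg hQ hq _)]
    exact hx
  have hsplit₀ : Cas Q f₀ + Ekin f₀ = ∫ x : Space, h x := by
    rw [cas_ekin_eq hQ f₀ hpos hint.aestronglyMeasurable hintQ, hh]
    rw [show (∫ p : Phase, (Q (f₀ p) + (1/2) * ‖p.2‖^2 * f₀ p))
        = ∫ p, (Q (f₀ p) + (1/2) * ‖p.2‖^2 * f₀ p) ∂((volume : Measure Space).prod volume)
      from by rw [← hvol]]
    exact integral_prod _ hintQP
  have dir1 : (∫ x : Space, Phi Q (ρ₀ x)) ≤ Cas Q f₀ + Ekin f₀ := by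
    rw [hsplit₀]
    exact integral_mono_ae hΦint hh_int hPhile
  -- measurable nonnegative representative of ρ₀
  set ρm : Space → ℝ := fun x => max (hρmeas.mk ρ₀ x) 0 with hρm
  have hρm_meas : Measurable ρm :=
    (hρmeas.stronglyMeasurable_mk.measurable).max measurable_const
  have hρm_eq : ρ₀ =ᵐ[(volume : Measure Space)] ρm := by
    filter_upwards [hρmeas.ae_eq_mk] with x hx
    rw [hρm]
    simp only [← hx]
    exact (max_eq_left (hρnn x)).symm
  have hρm_nn : ∀ x, 0 ≤ ρm x := fun x => le_max_right _ _
  -- the competitor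
  set f : Phase → ℝ := fun p => gbar q (Efun q (ρm p.1)) p.2 with hf
  have hfm : Measurable f := by
    have m1 : Measurable fun p : Phase => Efun q (ρm p.1) :=
      ((Efun_mono hq).measurable.comp hρm_meas).comp measurable_fst
    have m2 : Measurable fun p : Phase => (1/2) * ‖p.2‖^2 :=
      (continuous_const.mul ((continuous_norm.comp continuous_snd).pow 2)).measurable
    exact hq.cont.measurable.comp ((m1.sub m2).max measurable_const)
  have hfpos : ∀ p, 0 ≤ f p := fun p => gbar_nonneg hq _ _
  have hrhof : rho f = ρm := by
    funext x
    show (∫ v : Space, gbar q (Efun q (ρm x)) v) = ρm x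
    exact mfun_Efun hq (hρm_nn x)
  have hρint : Integrable ρ₀ (volume : Measure Space) := hintP.integral_prod_left
  have hρm_int : Integrable ρm (volume : Measure Space) := hρint.congr hρm_eq
  have hfint : Integrable f := by
    rw [hvol]
    rw [integrable_prod_iff (hfm.aestronglyMeasurable)]
    constructor
    · exact Eventually.of_forall fun x => gbar_integrable hq (Efun q (ρm x))
    · have heq : (fun x : Space => ∫ v : Space, ‖f (x, v)‖) = ρm := by
        funext x
        have : (fun v : Space => ‖f (x, v)‖) = fun v => gbar q (Efun q (ρm x)) v := by
          funext v
          exact Real.norm_of_nonneg (hfpos (x, v))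
        rw [this]
        exact mfun_Efun hq (hρm_nn x)
      rw [heq]
      exact hρm_int
  have hΦm_int : Integrable (fun x => Phi Q (ρm x)) (volume : Measure Space) := by
    apply hΦint.congr
    filter_upwards [hρm_eq] with x hx
    rw [hx]
  have hkin_eq : ∀ x : Space,
      (∫ v : Space, (Q (f (x, v)) + (1/2) * ‖v‖^2 * f (x, v))) = Phi Q (ρm x) := by
    intro x
    have h1 : (∫ v : Space, (Q (f (x, v)) + (1/2) * ‖v‖^2 * f (x, v)))
        = kinQint Q (gbar q (Efun q (ρm x))) := by
      rw [kinQint]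
      congr 1
      funext v
      show Q (gbar q (Efun q (ρm x)) v) + (1/2) * ‖v‖^2 * gbar q (Efun q (ρm x)) v = _
      ring
    rw [h1, ← Phi_eq hQ hq (hρm_nn x)]
  have hfintQc : ∀ x : Space, Integrable
      (fun v : Space => Q (f (x, v)) + (1/2) * ‖v‖^2 * f (x, v)) (volume : Measure Space) := by
    intro x
    have := kcomb_integrable hQ hq (Efun q (ρm x))
    apply this.congr
    apply Eventually.of_forall
    intro v
    show kcomb Q q (Efun q (ρm x)) v = _
    rw [kcomb]
    ring
  have hfintQ : Integrable (fun p : Phase => Q (f p) + (1/2) * ‖p.2‖^2 * f p) := by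
    rw [hvol]
    have hfm' : AEStronglyMeasurable (fun p : Phase => Q (f p) + (1/2) * ‖p.2‖^2 * f p)
        ((volume : Measure Space).prod volume) := by
      have hQf : Measurable (fun p : Phase => Q (f p)) := by
        have : (fun p : Phase => Q (f p)) = (fun t => Q (max t 0)) ∘ f := by
          funext p
          simp [max_eq_left (hfpos p)]
        rw [this]
        exact (Qext_cont hQ).measurable.comp hfm
      have hKf : Measurable (fun p : Phase => (1/2) * ‖p.2‖^2 * f p) :=
        ((continuous_const.mul ((continuous_norm.comp continuous_snd).pow 2)).measurable).mul hfm
      exact (hQf.add hKf).aestronglyMeasurable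
    rw [integrable_prod_iff hfm']
    constructor
    · exact Eventually.of_forall hfintQc
    · have heq : (fun x : Space =>
          ∫ v : Space, ‖Q (f (x, v)) + (1/2) * ‖v‖^2 * f (x, v)‖) =
          fun x => Phi Q (ρm x) := by
        funext x
        rw [← hkin_eq x]
        congr 1
        funext v
        apply Real.norm_of_nonneg
        have h1 : 0 ≤ Q (f (x, v)) := Q_nonneg hQ (hfpos (x, v))
        have h2 : 0 ≤ (1/2) * ‖v‖^2 * f (x, v) := by
          have := hfpos (x, v); positivity
        linarith
      rw [heq]
      exact hΦm_int
  have hfLp : MemLp (rho f) (ENNReal.ofReal (6/5)) := by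
    rw [hrhof]
    exact hLp.ae_eq hρm_eq
  have hfmass : (∫ p : Phase, f p) = M := by
    have h1 : (∫ p : Phase, f p) = ∫ x : Space, ∫ v : Space, f (x, v) := by
      rw [hvol] at hfint ⊢
      exact integral_prod _ hfint
    have h2 : (fun x : Space => ∫ v : Space, f (x, v)) = ρm := hrhof
    have h3 : (∫ p : Phase, f₀ p) = ∫ x : Space, ρ₀ x := by
      rw [hvol]
      exact integral_prod _ hintP
    rw [h1, h2, ← integral_congr_ae hρm_eq, ← h3, hmass]
  have hfFM : f ∈ FM Q M := ⟨hfpos, hfint, hfintQ, hfLp, hfmass⟩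
  -- compute HC f
  have hHCf : HC Q f = (∫ x : Space, Phi Q (ρ₀ x)) + Epot ρ₀ := by
    rw [HC]
    have hsplit : Cas Q f + Ekin f = ∫ x : Space, Phi Q (ρm x) := by
      rw [cas_ekin_eq hQ f hfpos hfm.aestronglyMeasurable hfintQ]
      rw [show (∫ p : Phase, (Q (f p) + (1/2) * ‖p.2‖^2 * f p))
          = ∫ p, (Q (f p) + (1/2) * ‖p.2‖^2 * f p) ∂((volume : Measure Space).prod volume)
        from by rw [← hvol]]
      rw [integral_prod _ (hvol ▸ hfintQ)]
      congr 1
      funext x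
      exact hkin_eq x
    rw [hsplit, hrhof]
    have hPhi_congr : (∫ x : Space, Phi Q (ρm x)) = ∫ x : Space, Phi Q (ρ₀ x) := by
      apply integral_congr_ae
      filter_upwards [hρm_eq] with x hx
      rw [hx]
    rw [hPhi_congr, Epot_congr hρm_eq.symm]
  -- conclude
  have hub : HC Q f₀ ≤ HCr Q ρ₀ := by
    have h1 := hmin f hfFM
    rw [hHCf] at h1
    exact h1
  have hlb : HCr Q ρ₀ ≤ HC Q f₀ := by
    rw [HCr, HC]
    have := dir1
    linarith
  exact le_antisymm hub hlb
end
end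

section
/- Suppose f ∈ F_M satisfies, for some constant E₀ and up to sets of measure zero, the Euler–Lagrange relation Q'(f(x,v)) = E₀ − E(x,v) > 0 where f(x,v) > 0 and E₀ − E(x,v) ≤ 0 where f(x,v) = 0, where E(x,v) := (1/2)|v|² + U_f(x). Then H_C(f) = H_C^r(ρ_f). -/
open MeasureTheory Real Filter Topology

noncomputable section

/-- The particle energy `E(x,v) = (1/2)|v|² + U_f(x)` for the potential induced by `f`. -/
def Eng (f : Phase → ℝ) : Phase → ℝ := fun p => (1/2) * ‖p.2‖^2 + Upot (rho f) p.1

/-- Gradient inequality for a convex `C¹` function on `[0,∞)`. -/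
lemma QHyp.grad_ineq {Q Q' : ℝ → ℝ} (hQ : QHyp Q Q') {a b : ℝ} (ha : 0 ≤ a) (hb : 0 ≤ b) :
    Q a + Q' a * (b - a) ≤ Q b := by
  have hconv : ConvexOn ℝ (Set.Ici 0) Q := hQ.strictConvex.convexOn
  rcases lt_trichotomy a b with hab | hab | hab
  · have := hconv.le_slope_of_hasDerivWithinAt ha hb hab (hQ.hasDeriv a ha)
    rw [slope_def_field] at this
    have h1 : Q' a * (b - a) ≤ (Q b - Q a) / (b - a) * (b - a) := by
      apply mul_le_mul_of_nonneg_right this (by linarith)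
    rw [div_mul_cancel₀] at h1
    · linarith
    · exact sub_ne_zero.mpr hab.ne'
  · simp [hab]
  · have := hconv.slope_le_of_hasDerivWithinAt hb ha hab (hQ.hasDeriv a ha)
    rw [slope_def_field] at this
    have h1 : (Q a - Q b) / (a - b) * (a - b) ≤ Q' a * (a - b) := by
      apply mul_le_mul_of_nonneg_right this (by linarith)
    rw [div_mul_cancel₀] at h1
    · linarith
    · exact sub_ne_zero.mpr hab.ne'

lemma QHyp.nonneg {Q Q' : ℝ → ℝ} (hQ : QHyp Q Q') {b : ℝ} (hb : 0 ≤ b) : 0 ≤ Q b := by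
  have := hQ.grad_ineq le_rfl hb
  simpa [hQ.zero, hQ.derivZero] using this

lemma QHyp.continuous_comp_max {Q Q' : ℝ → ℝ} (hQ : QHyp Q Q') :
    Continuous (fun s : ℝ => Q (max s 0)) := by
  have hcont : ContinuousOn Q (Set.Ici 0) := fun r hr =>
    (hQ.hasDeriv r hr).continuousWithinAt
  exact hcont.comp_continuous (continuous_id.max continuous_const)
    (fun s => Set.mem_Ici.mpr (le_max_right _ _))

/-- If `f ∈ F_M` satisfies the Euler-Lagrange relation
`Q'(f) = E₀ - E > 0` where `f > 0` and `E₀ - E ≤ 0` where `f = 0` (a.e.),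
then `H_C(f) = H_C^r(ρ_f)`. -/
theorem HC_eq_HCr_of_eulerLagrange (Q Q' : ℝ → ℝ) (hQ : QHyp Q Q') (M : ℝ) (hM : 0 < M)
    (f : Phase → ℝ) (hf : f ∈ FM Q M) (E₀ : ℝ)
    (hEL : ∀ᵐ p : Phase ∂volume,
      (0 < f p → Q' (f p) = E₀ - Eng f p ∧ 0 < E₀ - Eng f p) ∧
      (f p = 0 → E₀ - Eng f p ≤ 0)) :
    HC Q f = HCr Q (rho f) := by
  obtain ⟨hf0, hfi, hhi, hρ, hfM⟩ := hf
  set h : Phase → ℝ := fun p => Q (f p) + (1/2) * ‖p.2‖^2 * f p with hh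
  -- measurability and integrability of the pieces
  have hQfm : AEStronglyMeasurable (fun p : Phase => Q (f p)) volume := by
    have := hQ.continuous_comp_max.comp_aestronglyMeasurable hfi.aestronglyMeasurable
    exact this.congr (Filter.Eventually.of_forall fun p => by
      simp [max_eq_left (hf0 p)])
  have hKm : AEStronglyMeasurable (fun p : Phase => (1/2) * ‖p.2‖^2 * f p) volume := by
    exact ((continuous_const.mul (continuous_snd.norm.pow 2)).aestronglyMeasurable.mul
      hfi.aestronglyMeasurable)
  have hQfint : Integrable (fun p : Phase => Q (f p)) := by
    refine hhi.mono' hQfm (Filter.Eventually.of_forall fun p => ?_)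
    have h1 : 0 ≤ Q (f p) := hQ.nonneg (hf0 p)
    have h2 : 0 ≤ (1/2) * ‖p.2‖^2 * f p :=
      mul_nonneg (by positivity) (hf0 p)
    rw [Real.norm_eq_abs, abs_of_nonneg h1]; simp only [hh]; linarith
  have hKint : Integrable (fun p : Phase => (1/2) * ‖p.2‖^2 * f p) := by
    refine hhi.mono' hKm (Filter.Eventually.of_forall fun p => ?_)
    have h1 : 0 ≤ Q (f p) := hQ.nonneg (hf0 p)
    have h2 : 0 ≤ (1/2) * ‖p.2‖^2 * f p :=
      mul_nonneg (by positivity) (hf0 p)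
    rw [Real.norm_eq_abs, abs_of_nonneg h2]; simp only [hh]; linarith
  -- step 1 : Cas + Ekin = ∫ h
  have step1 : Cas Q f + Ekin f = ∫ p : Phase, h p := by
    have e1 : Ekin f = ∫ p : Phase, (1/2) * ‖p.2‖^2 * f p := by
      rw [Ekin, ← integral_const_mul]
      exact integral_congr_ae (Filter.Eventually.of_forall fun p => by ring)
    rw [Cas, e1, ← integral_add hQfint hKint]
  -- step 2 : Fubini
  have hvol : (volume : Measure Phase) = (volume : Measure Space).prod volume :=
    Measure.volume_eq_prod _ _
  have hhiP : Integrable h ((volume : Measure Space).prod volume) := hvol ▸ hhi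
  have hfiP : Integrable f ((volume : Measure Space).prod volume) := hvol ▸ hfi
  have step2 : ∫ p : Phase, h p = ∫ x : Space, ∫ v : Space, h (x, v) := by
    rw [hvol]; exact integral_prod h hhiP
  -- step 3 : a.e. x, Phi Q (rho f x) = ∫ v, h (x,v)
  have hELP : ∀ᵐ p : Phase ∂(volume : Measure Space).prod volume,
      (0 < f p → Q' (f p) = E₀ - Eng f p ∧ 0 < E₀ - Eng f p) ∧
      (f p = 0 → E₀ - Eng f p ≤ 0) := hvol ▸ hEL
  have step3 : ∀ᵐ x : Space ∂volume, Phi Q (rho f x) = ∫ v : Space, h (x, v) := by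
    filter_upwards [hfiP.prod_right_ae, hhiP.prod_right_ae,
      Measure.ae_ae_of_ae_prod hELP] with x hix hih hELx
    set g₀ : Space → ℝ := fun v => f (x, v) with hg₀
    set U : ℝ := Upot (rho f) x with hU
    set r : ℝ := rho f x with hr
    have hg₀K : Integrable (fun v : Space => (1/2) * ‖v‖^2 * g₀ v + Q (g₀ v)) := by
      exact hih.congr (Filter.Eventually.of_forall fun v => by
        show h (x, v) = _ ; simp only [hh, hg₀] ; ring)
    have hg₀mem : g₀ ∈ Gset Q r := ⟨fun v => hf0 (x, v), hix, hg₀K, rfl⟩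
    have hkin_eq : kinQint Q g₀ = ∫ v : Space, h (x, v) := by
      exact integral_congr_ae (Filter.Eventually.of_forall fun v => by
        show _ = h (x, v) ; simp only [hh, hg₀] ; ring)
    -- lower bound
    have hlower : ∀ g ∈ Gset Q r, kinQint Q g₀ ≤ kinQint Q g := by
      rintro g ⟨hg0, hgi, hgK, hgr⟩
      have hptwise : ∀ᵐ v : Space ∂volume,
          (1/2) * ‖v‖^2 * g₀ v + Q (g₀ v) + (E₀ - U) * (g v - g₀ v)
            ≤ (1/2) * ‖v‖^2 * g v + Q (g v) := by
        filter_upwards [hELx] with v hv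
        have hEng : Eng f (x, v) = (1/2) * ‖v‖^2 + U := rfl
        rcases (hf0 (x, v)).eq_or_lt with ha | ha
        · -- f (x,v) = 0
          have hE : E₀ - Eng f (x, v) ≤ 0 := hv.2 ha.symm
          rw [hEng] at hE
          have h0 : g₀ v = 0 := ha.symm
          have hQg : 0 ≤ Q (g v) := hQ.nonneg (hg0 v)
          have hgv : 0 ≤ g v := hg0 v
          rw [h0, hQ.zero]
          nlinarith
        · -- f (x,v) > 0
          obtain ⟨he, _⟩ := hv.1 ha
          rw [hEng] at he
          have hgrad := hQ.grad_ineq (le_of_lt ha) (hg0 v)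
          rw [he] at hgrad
          nlinarith
      have hsub : Integrable (fun v : Space => (E₀ - U) * (g v - g₀ v)) volume := by
        simpa using (hgi.sub hix).const_mul (E₀ - U)
      have hRHSint : Integrable (fun v : Space =>
          (1/2) * ‖v‖^2 * g₀ v + Q (g₀ v) + (E₀ - U) * (g v - g₀ v)) :=
        hg₀K.add hsub
      have hmono := integral_mono_ae hRHSint hgK hptwise
      have hsplit : ∫ v : Space,
          ((1/2) * ‖v‖^2 * g₀ v + Q (g₀ v) + (E₀ - U) * (g v - g₀ v))
          = kinQint Q g₀ + (E₀ - U) * ((∫ v : Space, g v) - ∫ v : Space, g₀ v) := by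
        rw [integral_add hg₀K hsub, integral_const_mul, integral_sub hgi hix]
        rfl
      have hzero : (∫ v : Space, g v) - (∫ v : Space, g₀ v) = 0 := by
        rw [hgr]; simp [hr, rho, hg₀]
      rw [hsplit, hzero, mul_zero, add_zero] at hmono
      exact hmono
    have hleast : IsLeast (kinQint Q '' Gset Q r) (kinQint Q g₀) := by
      constructor
      · exact ⟨g₀, hg₀mem, rfl⟩
      · rintro y ⟨g, hg, rfl⟩; exact hlower g hg
    rw [Phi, hleast.csInf_eq, hkin_eq]
  -- assemble
  have step4 : ∫ x : Space, Phi Q (rho f x) = ∫ x : Space, ∫ v : Space, h (x, v) :=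
    integral_congr_ae step3
  rw [HC, HCr, step1, step2, ← step4]
end
end

section
/- Assume H_C^r has at least one minimizer in F_M^r. Then: if f₀ ∈ F_M is a minimizer of H_C over F_M, the induced density ρ₀ := ρ_{f₀} ∈ F_M^r is a minimizer of H_C^r over F_M^r; the map f₀ ↦ ρ_{f₀} is one-to-one and onto between the set of minimizers of H_C in F_M and the set of minimizers of H_C^r in F_M^r, and it is the inverse of the lifting map ρ₀ ↦ f₀ defined via the Euler–Lagrange multiplier (f₀ := (Q')⁻¹(E₀ − E) where E < E₀ and 0 elsewhere, with E = (1/2)|v|² + U₀(x)). -/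
open MeasureTheory Real Filter Topology

noncomputable section

/-- The reduced constraint set `F_M^r`. -/
def FMr (Q : ℝ → ℝ) (M : ℝ) : Set (Space → ℝ) :=
  {ρ | (∀ x, 0 ≤ ρ x) ∧ Integrable ρ ∧ MemLp ρ (ENNReal.ofReal (6/5)) ∧
       Integrable (fun x => Phi Q (ρ x)) ∧ (∫ x : Space, ρ x) = M}

/-- The lifted phase-space density `f₀ = (Q')⁻¹(E₀ - E)` where `E < E₀`, and `0` where
`E ≥ E₀`, with `E(x,v) = (1/2)|v|² + U(x)`; the inverse of `Q'` is taken on `[0,∞)`. -/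
def lift (Q' : ℝ → ℝ) (U : Space → ℝ) (E₀ : ℝ) : Phase → ℝ := fun p =>
  if (1/2) * ‖p.2‖^2 + U p.1 < E₀ then
    Function.invFunOn Q' (Set.Ici 0) (E₀ - ((1/2) * ‖p.2‖^2 + U p.1))
  else 0

/-! ### Auxiliary development -/

namespace EC

open Set Function

def qkin (v : Space) : ℝ := (1/2) * ‖v‖^2

lemma qkin_nonneg (v : Space) : 0 ≤ qkin v := by unfold qkin; positivity

lemma qkin_continuous : Continuous qkin := by
  unfold qkin; fun_prop

variable {Q Q' : ℝ → ℝ}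

/-! #### Convexity facts -/

def Qt (Q : ℝ → ℝ) (s : ℝ) : ℝ := Q (max s 0)

lemma Qt_eq (Q : ℝ → ℝ) {s : ℝ} (hs : 0 ≤ s) : Qt Q s = Q s := by rw [Qt, max_eq_left hs]

lemma Qt_continuous (hQ : QHyp Q Q') : Continuous (Qt Q) := by
  rw [continuous_iff_continuousAt]
  intro s
  have h1 : ContinuousWithinAt Q (Ici 0) (max s 0) :=
    (hQ.hasDeriv _ (mem_Ici.2 (le_max_right _ _))).continuousWithinAt
  have h2 : Tendsto (fun u : ℝ => max u 0) (𝓝 s) (𝓝[Ici 0] (max s 0)) := by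
    refine tendsto_nhdsWithin_iff.2 ⟨(continuous_id.max continuous_const).continuousAt, ?_⟩
    exact Eventually.of_forall fun u => mem_Ici.2 (le_max_right _ _)
  exact h1.tendsto.comp h2

lemma support_line_strict (hQ : QHyp Q Q') {a b : ℝ} (ha : 0 ≤ a) (hb : 0 ≤ b) (hne : b ≠ a) :
    Q a + Q' a * (b - a) < Q b := by
  have hconv := hQ.strictConvex.convexOn
  rcases lt_or_gt_of_ne hne with h | h
  · -- b < a
    set c := (b + a)/2 with hc
    have hbc : b < c := by rw [hc]; linarith
    have hca : c < a := by rw [hc]; linarith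
    have hc0 : 0 ≤ c := by linarith
    have h1 : (Q c - Q b)/(c - b) < (Q a - Q c)/(a - c) :=
      hQ.strictConvex.slope_strict_mono_adjacent hb ha hbc hca
    have h2 : slope Q c a ≤ Q' a :=
      hconv.slope_le_of_hasDerivWithinAt hc0 ha hca (hQ.hasDeriv a ha)
    rw [slope_def_field] at h2
    set s1 := (Q c - Q b)/(c - b) with hs1
    set s2 := (Q a - Q c)/(a - c) with hs2
    have e1 : Q c - Q b = (c - b) * s1 := by rw [hs1, mul_comm, div_mul_cancel₀ _ (ne_of_gt (sub_pos.2 hbc))]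
    have e2 : Q a - Q c = (a - c) * s2 := by rw [hs2, mul_comm, div_mul_cancel₀ _ (ne_of_gt (sub_pos.2 hca))]
    have m1 : (c - b) * s1 < (c - b) * s2 := by
      have := sub_pos.2 hbc; exact (mul_lt_mul_iff_right₀ this).2 h1
    have m2 : (a - b) * s2 ≤ (a - b) * Q' a := by
      have hab : (0:ℝ) < a - b := by linarith
      exact (mul_le_mul_iff_right₀ hab).2 h2
    have r1 : (c - b) * s2 + (a - c) * s2 = (a - b) * s2 := by ring
    linarith
  · -- a < b
    set c := (a + b)/2 with hc
    have hac : a < c := by rw [hc]; linarith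
    have hcb : c < b := by rw [hc]; linarith
    have hc0 : 0 ≤ c := by linarith
    have h1 : (Q c - Q a)/(c - a) < (Q b - Q c)/(b - c) :=
      hQ.strictConvex.slope_strict_mono_adjacent ha hb hac hcb
    have h2 : Q' a ≤ slope Q a c :=
      hconv.le_slope_of_hasDerivWithinAt ha hc0 hac (hQ.hasDeriv a ha)
    rw [slope_def_field] at h2
    set s1 := (Q c - Q a)/(c - a) with hs1
    set s2 := (Q b - Q c)/(b - c) with hs2
    have e1 : Q c - Q a = (c - a) * s1 := by rw [hs1, mul_comm, div_mul_cancel₀ _ (ne_of_gt (sub_pos.2 hac))]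
    have e2 : Q b - Q c = (b - c) * s2 := by rw [hs2, mul_comm, div_mul_cancel₀ _ (ne_of_gt (sub_pos.2 hcb))]
    have m1 : (b - c) * s1 < (b - c) * s2 := by
      have := sub_pos.2 hcb; exact (mul_lt_mul_iff_right₀ this).2 h1
    have m2 : (b - a) * Q' a ≤ (b - a) * s1 := by
      have hab : (0:ℝ) < b - a := by linarith
      exact (mul_le_mul_iff_right₀ hab).2 h2
    have r1 : (c - a) * s1 + (b - c) * s1 = (b - a) * s1 := by ring
    linarith

lemma support_line (hQ : QHyp Q Q') {a b : ℝ} (ha : 0 ≤ a) (hb : 0 ≤ b) :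
    Q a + Q' a * (b - a) ≤ Q b := by
  rcases eq_or_ne b a with rfl | hne
  · simp
  · exact (support_line_strict hQ ha hb hne).le

lemma Q'_strictMonoOn (hQ : QHyp Q Q') : StrictMonoOn Q' (Ici 0) := by
  intro a ha b hb hab
  have h1 := support_line_strict hQ ha hb (ne_of_gt hab)
  have h2 := support_line_strict hQ hb ha (ne_of_lt hab)
  by_contra hle
  push_neg at hle
  have m1 : Q' b * (b - a) ≤ Q' a * (b - a) :=
    mul_le_mul_of_nonneg_right hle (by linarith [sub_pos.2 hab])
  have r1 : Q' b * (a - b) = -(Q' b * (b - a)) := by ring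
  linarith

lemma Q'_monoOn (hQ : QHyp Q Q') : MonotoneOn Q' (Ici 0) := (Q'_strictMonoOn hQ).monotoneOn

lemma Q'_nonneg (hQ : QHyp Q Q') {a : ℝ} (ha : 0 ≤ a) : 0 ≤ Q' a := by
  rcases eq_or_lt_of_le ha with rfl | h
  · rw [hQ.derivZero]
  · rw [← hQ.derivZero]
    exact ((Q'_strictMonoOn hQ) self_mem_Ici (le_of_lt h) h).le

lemma Q'_pos (hQ : QHyp Q Q') {a : ℝ} (ha : 0 < a) : 0 < Q' a := by
  rw [← hQ.derivZero]
  exact (Q'_strictMonoOn hQ) self_mem_Ici ha.le ha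

lemma Q_nonneg (hQ : QHyp Q Q') {a : ℝ} (ha : 0 ≤ a) : 0 ≤ Q a := by
  have := support_line hQ (le_refl (0:ℝ)) ha
  rw [hQ.zero, hQ.derivZero] at this
  linarith

lemma Q_pos (hQ : QHyp Q Q') {a : ℝ} (ha : 0 < a) : 0 < Q a := by
  have := support_line_strict hQ (le_refl (0:ℝ)) ha.le (ne_of_gt ha)
  rw [hQ.zero, hQ.derivZero] at this
  linarith

lemma Q_monoOn (hQ : QHyp Q Q') : MonotoneOn Q (Ici 0) := by
  intro a ha b hb hab
  have := support_line hQ ha hb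
  have h2 : 0 ≤ Q' a * (b - a) := mul_nonneg (Q'_nonneg hQ ha) (by linarith)
  linarith

lemma Q'_unbounded (hQ : QHyp Q Q') (s : ℝ) : ∃ t, 0 ≤ t ∧ s < Q' t := by
  obtain ⟨t, ht⟩ := ((hQ.superlinear.eventually_gt_atTop s).and (eventually_gt_atTop 0)).exists
  refine ⟨t, ht.2.le, lt_of_lt_of_le ht.1 ?_⟩
  have h2 : slope Q 0 t ≤ Q' t :=
    hQ.strictConvex.convexOn.slope_le_of_hasDerivWithinAt self_mem_Ici ht.2.le ht.2
      (hQ.hasDeriv t ht.2.le)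
  rw [slope_def_field, hQ.zero] at h2
  calc Q t / t = (Q t - 0)/(t - 0) := by ring_nf
  _ ≤ Q' t := h2

lemma Q'_exists_preimage (hQ : QHyp Q Q') {s : ℝ} (hs : 0 < s) :
    ∃ t, 0 ≤ t ∧ Q' t = s ∧ 0 < s := by
  obtain ⟨T, hT0, hTs⟩ := Q'_unbounded hQ s
  have hcont : ContinuousOn Q' (Icc 0 T) := hQ.contDeriv.mono (Icc_subset_Ici_self)
  have hmem : s ∈ Icc (Q' 0) (Q' T) := ⟨by rw [hQ.derivZero]; exact hs.le, hTs.le⟩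
  obtain ⟨t, ht, hts⟩ := intermediate_value_Icc hT0 hcont hmem
  exact ⟨t, ht.1, hts, hs⟩

end EC

namespace EC
open Set Function
variable {Q Q' : ℝ → ℝ}

/-! #### The inverse of `Q'` -/

open Classical in
def Finv (Q' : ℝ → ℝ) (s : ℝ) : ℝ :=
  if h : ∃ t, 0 ≤ t ∧ Q' t = s ∧ 0 < s then h.choose else 0

lemma Finv_spec (hQ : QHyp Q Q') {s : ℝ} (hs : 0 < s) :
    0 ≤ Finv Q' s ∧ Q' (Finv Q' s) = s := by
  have h := Q'_exists_preimage hQ hs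
  rw [Finv, dif_pos h]
  exact ⟨h.choose_spec.1, h.choose_spec.2.1⟩

lemma Finv_of_nonpos {s : ℝ} (hs : s ≤ 0) : Finv Q' s = 0 := by
  rw [Finv, dif_neg]
  rintro ⟨t, -, -, h⟩
  linarith

lemma Finv_nonneg (hQ : QHyp Q Q') (s : ℝ) : 0 ≤ Finv Q' s := by
  rcases le_or_gt s 0 with h | h
  · rw [Finv_of_nonpos h]
  · exact (Finv_spec hQ h).1

lemma Finv_pos (hQ : QHyp Q Q') {s : ℝ} (hs : 0 < s) : 0 < Finv Q' s := by
  rcases (Finv_spec hQ hs).1.lt_or_eq with h | h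
  · exact h
  · exfalso
    have := (Finv_spec hQ hs).2
    rw [← h, hQ.derivZero] at this
    linarith

lemma Finv_mono (hQ : QHyp Q Q') : Monotone (Finv Q') := by
  intro s1 s2 h
  rcases le_or_gt s1 0 with h1 | h1
  · rw [Finv_of_nonpos h1]; exact Finv_nonneg hQ s2
  · have h2 : 0 < s2 := lt_of_lt_of_le h1 h
    by_contra hlt
    push_neg at hlt
    have := (Q'_strictMonoOn hQ) (Finv_spec hQ h2).1 (Finv_spec hQ h1).1 hlt
    rw [(Finv_spec hQ h1).2, (Finv_spec hQ h2).2] at this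
    linarith

lemma Finv_lt (hQ : QHyp Q Q') {s1 s2 : ℝ} (h0 : 0 ≤ s1) (h : s1 < s2) :
    Finv Q' s1 < Finv Q' s2 := by
  rcases eq_or_lt_of_le h0 with rfl | h1
  · rw [Finv_of_nonpos (le_refl 0)]; exact Finv_pos hQ h
  · by_contra hle
    push_neg at hle
    have h2 : 0 < s2 := h1.trans h
    rcases eq_or_lt_of_le hle with heq | hlt
    · have := (Finv_spec hQ h1).2
      rw [← heq, (Finv_spec hQ h2).2] at this
      linarith
    · have := (Q'_strictMonoOn hQ) (Finv_spec hQ h2).1 (Finv_spec hQ h1).1 hlt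
      rw [(Finv_spec hQ h1).2, (Finv_spec hQ h2).2] at this
      linarith

lemma Finv_Q' (hQ : QHyp Q Q') {t : ℝ} (ht : 0 < t) : Finv Q' (Q' t) = t := by
  have hs : 0 < Q' t := Q'_pos hQ ht
  exact (Q'_strictMonoOn hQ).injOn (Finv_spec hQ hs).1 (le_of_lt ht) (Finv_spec hQ hs).2

lemma Finv_measurable (hQ : QHyp Q Q') : Measurable (Finv Q') := (Finv_mono hQ).measurable

lemma invFunOn_eq_Finv (hQ : QHyp Q Q') {s : ℝ} (hs : 0 < s) :
    Function.invFunOn Q' (Set.Ici 0) s = Finv Q' s := by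
  obtain ⟨t, ht0, hts, -⟩ := Q'_exists_preimage hQ hs
  have hex : ∃ a ∈ Ici (0:ℝ), Q' a = s := ⟨t, ht0, hts⟩
  have h1 := Function.invFunOn_mem hex
  have h2 := Function.invFunOn_eq hex
  exact (Q'_strictMonoOn hQ).injOn h1 (Finv_spec hQ hs).1 (by rw [h2, (Finv_spec hQ hs).2])

lemma invFunOn_mem_Ici (hQ : QHyp Q Q') {s : ℝ} (hs : 0 < s) :
    0 ≤ Function.invFunOn Q' (Set.Ici 0) s := by
  rw [invFunOn_eq_Finv hQ hs]; exact Finv_nonneg hQ s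

end EC

namespace EC
open Set Function Metric
variable {Q Q' : ℝ → ℝ}

/-! #### Parametric integrals over velocity space -/

lemma qkin_gt {e : ℝ} {v : Space} (h : v ∉ closedBall (0:Space) (Real.sqrt (2 * max e 0) + 1)) :
    e < qkin v := by
  rw [mem_closedBall, dist_zero_right, not_le] at h
  have h0 : Real.sqrt (2 * max e 0) ≤ ‖v‖ := by
    have := Real.sqrt_nonneg (2 * max e 0); linarith
  have h3 : (Real.sqrt (2 * max e 0) + 1)^2 < ‖v‖^2 :=
    pow_lt_pow_left₀ h (by positivity) (two_ne_zero)
  have h4 : (Real.sqrt (2 * max e 0))^2 = 2 * max e 0 :=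
    Real.sq_sqrt (by positivity)
  unfold qkin
  nlinarith [le_max_left e 0, Real.sqrt_nonneg (2 * max e 0)]

section PAR
variable (φ : ℝ → ℝ) (w : Space → ℝ)

lemma par_aesm (hφm : Monotone φ) (hw : Continuous w) (e : ℝ) :
    AEStronglyMeasurable (fun v : Space => w v * φ (e - qkin v)) volume := by
  have h1 : Measurable fun v : Space => φ (e - qkin v) :=
    hφm.measurable.comp ((measurable_const.sub qkin_continuous.measurable))
  exact (hw.measurable.mul h1).aestronglyMeasurable

lemma par_bound (hφm : Monotone φ) (hφ0 : ∀ s ≤ 0, φ s = 0) (hφnn : ∀ s, 0 ≤ φ s)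
    (hw0 : ∀ v, 0 ≤ w v) {C R : ℝ}
    (hC : ∀ v ∈ closedBall (0:Space) R, ‖w v‖ ≤ C) (hC0 : 0 ≤ C) {e E : ℝ}
    (heE : e ≤ E) (hRE : Real.sqrt (2 * max E 0) + 1 ≤ R) (v : Space) :
    ‖w v * φ (e - qkin v)‖ ≤ (closedBall (0:Space) R).indicator (fun _ => C * φ E) v := by
  by_cases hv : v ∈ closedBall (0:Space) R
  · rw [indicator_of_mem hv]
    rw [norm_mul]
    have h1 : ‖φ (e - qkin v)‖ ≤ φ E := by
      rw [Real.norm_of_nonneg (hφnn _)]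
      exact hφm (by nlinarith [qkin_nonneg v])
    exact mul_le_mul (hC v hv) h1 (norm_nonneg _) hC0
  · rw [indicator_of_notMem hv]
    have hv' : v ∉ closedBall (0:Space) (Real.sqrt (2 * max E 0) + 1) := by
      intro hmem
      exact hv (closedBall_subset_closedBall hRE hmem)
    have := qkin_gt hv'
    rw [hφ0 _ (by linarith), mul_zero, norm_zero]

lemma par_bound_integrable (C R : ℝ) :
    Integrable ((closedBall (0:Space) R).indicator (fun _ => C)) := by
  rw [integrable_indicator_iff measurableSet_closedBall]
  exact integrableOn_const ((isCompact_closedBall _ _).measure_lt_top.ne)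

lemma par_integrable (hφm : Monotone φ) (hφ0 : ∀ s ≤ 0, φ s = 0) (hφnn : ∀ s, 0 ≤ φ s)
    (hw : Continuous w) (hw0 : ∀ v, 0 ≤ w v) (e : ℝ) :
    Integrable (fun v : Space => w v * φ (e - qkin v)) := by
  set R := Real.sqrt (2 * max e 0) + 1 with hR
  obtain ⟨C, hC⟩ := (isCompact_closedBall (0:Space) R).exists_bound_of_continuousOn
    hw.continuousOn
  have hC0 : 0 ≤ C := le_trans (norm_nonneg _) (hC 0 (mem_closedBall_self (by positivity)))
  refine Integrable.mono' (par_bound_integrable (C * φ e) R) (par_aesm φ w hφm hw e) ?_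
  exact Eventually.of_forall
    (par_bound φ w hφm hφ0 hφnn hw0 hC hC0 (le_refl e) (le_refl R))

lemma qkin_level_null (c : ℝ) : volume {v : Space | qkin v = c} = 0 := by
  rcases lt_or_ge c 0 with h | h
  · convert measure_empty (μ := (volume : Measure Space))
    ext v
    simp only [mem_setOf_eq, mem_empty_iff_false, iff_false]
    intro hc
    nlinarith [qkin_nonneg v, hc ▸ h]
  · have : {v : Space | qkin v = c} = sphere (0:Space) (Real.sqrt (2*c)) := by
      ext v
      rw [mem_setOf_eq, mem_sphere_iff_norm, sub_zero]
      constructor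
      · intro hv
        rw [show (2:ℝ)*c = ‖v‖^2 by unfold qkin at hv; linarith]
        exact (Real.sqrt_sq (norm_nonneg v)).symm ▸ rfl
      · intro hv
        have : ‖v‖^2 = 2*c := by
          rw [hv, Real.sq_sqrt (by linarith)]
        unfold qkin; linarith
    rw [this]
    exact Measure.addHaar_sphere volume 0 _

lemma par_continuous (hφm : Monotone φ) (hφ0 : ∀ s ≤ 0, φ s = 0) (hφnn : ∀ s, 0 ≤ φ s)
    (hw : Continuous w) (hw0 : ∀ v, 0 ≤ w v) :
    Continuous (fun e => ∫ v : Space, w v * φ (e - qkin v)) := by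
  rw [continuous_iff_continuousAt]
  intro e₀
  set E := |e₀| + 1 with hE
  set R := Real.sqrt (2 * max E 0) + 1 with hR
  obtain ⟨C, hC⟩ := (isCompact_closedBall (0:Space) R).exists_bound_of_continuousOn
    hw.continuousOn
  have hC0 : 0 ≤ C := le_trans (norm_nonneg _) (hC 0 (mem_closedBall_self (by positivity)))
  apply continuousAt_of_dominated
    (bound := (closedBall (0:Space) R).indicator (fun _ => C * φ E))
  · exact Eventually.of_forall fun e => par_aesm φ w hφm hw e
  · have hmem : Ioo (e₀ - 1) (e₀ + 1) ∈ 𝓝 e₀ := Ioo_mem_nhds (by linarith) (by linarith)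
    filter_upwards [hmem] with e he
    refine Eventually.of_forall
      (par_bound φ w hφm hφ0 hφnn hw0 hC hC0 ?_ (le_refl R))
    have := abs_nonneg e₀
    have := le_abs_self e₀
    rw [hE]
    linarith [he.2]
  · exact par_bound_integrable _ _
  · -- a.e. continuity in the parameter
    have hD : Set.Countable {s : ℝ | ¬ ContinuousAt φ s} := hφm.countable_not_continuousAt
    have hnull : volume {v : Space | ¬ ContinuousAt φ (e₀ - qkin v)} = 0 := by
      have hsub : {v : Space | ¬ ContinuousAt φ (e₀ - qkin v)} ⊆
          ⋃ d ∈ {s : ℝ | ¬ ContinuousAt φ s}, {v : Space | qkin v = e₀ - d} := by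
        intro v hv
        exact mem_biUnion hv (by simp)
      refine measure_mono_null hsub ?_
      exact (measure_biUnion_null_iff hD).2 fun d _ => qkin_level_null _
    rw [← compl_mem_ae_iff] at hnull
    filter_upwards [hnull] with v hv
    simp only [mem_compl_iff, mem_setOf_eq, not_not] at hv
    have h1 : ContinuousAt (fun e : ℝ => e - qkin v) e₀ :=
      (continuous_id.sub continuous_const).continuousAt
    have h2 : ContinuousAt (fun e : ℝ => φ (e - qkin v)) e₀ := ContinuousAt.comp hv h1
    exact continuousAt_const.mul h2

end PAR

end EC

namespace EC
open Set Function Metric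
variable {Q Q' : ℝ → ℝ}

/-! #### The functions `gE`, `mQ`, `PsiQ`, `eFun` -/

def gE (Q' : ℝ → ℝ) (e : ℝ) (v : Space) : ℝ := Finv Q' (e - qkin v)

def mQ (Q' : ℝ → ℝ) (e : ℝ) : ℝ := ∫ v : Space, gE Q' e v

def PsiQ (Q Q' : ℝ → ℝ) (e : ℝ) : ℝ := kinQint Q (gE Q' e)

lemma gE_nonneg (hQ : QHyp Q Q') (e : ℝ) (v : Space) : 0 ≤ gE Q' e v := Finv_nonneg hQ _

lemma Finv_zero_nonpos : ∀ s ≤ (0:ℝ), Finv Q' s = 0 := fun _ hs => Finv_of_nonpos hs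

lemma QtFinv_mono (hQ : QHyp Q Q') : Monotone (fun s => Qt Q (Finv Q' s)) := by
  intro s1 s2 h
  simp only [Qt_eq Q (Finv_nonneg hQ _)]
  exact Q_monoOn hQ (Finv_nonneg hQ s1) (Finv_nonneg hQ s2) (Finv_mono hQ h)

lemma QtFinv_zero (hQ : QHyp Q Q') : ∀ s ≤ (0:ℝ), Qt Q (Finv Q' s) = 0 := by
  intro s hs
  rw [Finv_of_nonpos hs, Qt_eq Q (le_refl 0), hQ.zero]

lemma QtFinv_nonneg (hQ : QHyp Q Q') : ∀ s, 0 ≤ Qt Q (Finv Q' s) := by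
  intro s
  rw [Qt_eq Q (Finv_nonneg hQ s)]
  exact Q_nonneg hQ (Finv_nonneg hQ s)

lemma integrable_gE (hQ : QHyp Q Q') (e : ℝ) : Integrable (gE Q' e) := by
  have := par_integrable (Finv Q') (fun _ => 1) (Finv_mono hQ) Finv_zero_nonpos
    (Finv_nonneg hQ) continuous_const (fun _ => zero_le_one) e
  unfold gE
  simpa only [one_mul] using this

lemma integrable_kin_gE (hQ : QHyp Q Q') (e : ℝ) :
    Integrable (fun v => qkin v * gE Q' e v) :=
  par_integrable (Finv Q') qkin (Finv_mono hQ) Finv_zero_nonpos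
    (Finv_nonneg hQ) qkin_continuous qkin_nonneg e

lemma integrable_Q_gE (hQ : QHyp Q Q') (e : ℝ) :
    Integrable (fun v => Q (gE Q' e v)) := by
  have := par_integrable (fun s => Qt Q (Finv Q' s)) (fun _ => 1) (QtFinv_mono hQ)
    (QtFinv_zero hQ) (QtFinv_nonneg hQ) continuous_const (fun _ => zero_le_one) e
  simp only [one_mul] at this
  refine this.congr (Eventually.of_forall fun v => ?_)
  show Qt Q (Finv Q' (e - qkin v)) = Q (gE Q' e v)
  rw [Qt_eq Q (Finv_nonneg hQ _)]
  rfl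

lemma integrable_comb_gE (hQ : QHyp Q Q') (e : ℝ) :
    Integrable (fun v => (1/2) * ‖v‖^2 * gE Q' e v + Q (gE Q' e v)) := by
  have h := (integrable_kin_gE hQ e).add (integrable_Q_gE hQ e)
  exact h

lemma mQ_nonneg (hQ : QHyp Q Q') (e : ℝ) : 0 ≤ mQ Q' e :=
  integral_nonneg fun v => Finv_nonneg hQ _

lemma mQ_of_nonpos (he : e ≤ 0) : mQ Q' e = 0 := by
  have h : gE Q' e = fun _ => (0:ℝ) := funext fun v => Finv_of_nonpos (by
    have := qkin_nonneg v; linarith)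
  rw [mQ, h, integral_zero]

lemma mQ_continuous (hQ : QHyp Q Q') : Continuous (mQ Q') := by
  have := par_continuous (Finv Q') (fun _ => 1) (Finv_mono hQ) Finv_zero_nonpos
    (Finv_nonneg hQ) continuous_const (fun _ => zero_le_one)
  unfold mQ gE
  simpa only [one_mul] using this

lemma mQ_strictMonoOn (hQ : QHyp Q Q') : StrictMonoOn (mQ Q') (Ici 0) := by
  intro e1 he1 e2 he2 h12
  rw [mem_Ici] at he1 he2
  set δ := (e2 - e1)/2 with hδ
  have hδ0 : 0 < δ := by rw [hδ]; linarith
  set rr := Real.sqrt δ with hrr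
  have hr0 : 0 < rr := Real.sqrt_pos.2 hδ0
  set c := Finv Q' (e1 + δ) - Finv Q' e1 with hc
  have hc0 : 0 < c := sub_pos.2 (Finv_lt hQ he1 (by linarith))
  have hint1 := integrable_gE hQ (Q' := Q') e1
  have hint2 := integrable_gE hQ (Q' := Q') e2
  have hdiff : Integrable (fun v => gE Q' e2 v - gE Q' e1 v) := hint2.sub hint1
  have hpt : ∀ v, 0 ≤ gE Q' e2 v - gE Q' e1 v :=
    fun v => sub_nonneg.2 (Finv_mono hQ (by linarith))
  have hB : ∀ v ∈ closedBall (0:Space) rr, c ≤ gE Q' e2 v - gE Q' e1 v := by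
    intro v hv
    rw [mem_closedBall, dist_zero_right] at hv
    have hq : qkin v ≤ δ := by
      have h1 : ‖v‖^2 ≤ rr^2 := by nlinarith [norm_nonneg v]
      have h2 : rr^2 = δ := Real.sq_sqrt hδ0.le
      unfold qkin; nlinarith
    have h1 : Finv Q' (e1 + δ) ≤ gE Q' e2 v := Finv_mono hQ (by
      unfold qkin at hq ⊢; rw [hδ] at hq ⊢; linarith)
    have h2 : gE Q' e1 v ≤ Finv Q' e1 := Finv_mono hQ (by linarith [qkin_nonneg v])
    unfold gE at h1 h2 ⊢
    linarith
  have hvolpos : 0 < (volume (closedBall (0:Space) rr)).toReal :=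
    ENNReal.toReal_pos (measure_closedBall_pos volume 0 hr0).ne'
      (isCompact_closedBall _ _).measure_lt_top.ne
  have h1 : c * (volume (closedBall (0:Space) rr)).toReal
      = ∫ _ in closedBall (0:Space) rr, c := by
    rw [setIntegral_const, smul_eq_mul, mul_comm, measureReal_def]
  have h2 : (∫ _ in closedBall (0:Space) rr, c)
      ≤ ∫ v in closedBall (0:Space) rr, (gE Q' e2 v - gE Q' e1 v) :=
    setIntegral_mono_on (integrableOn_const
      (isCompact_closedBall _ _).measure_lt_top.ne) hdiff.integrableOn
      measurableSet_closedBall hB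
  have h3 : (∫ v in closedBall (0:Space) rr, (gE Q' e2 v - gE Q' e1 v))
      ≤ ∫ v, (gE Q' e2 v - gE Q' e1 v) :=
    setIntegral_le_integral hdiff (Eventually.of_forall hpt)
  have h4 : ∫ v, (gE Q' e2 v - gE Q' e1 v) = mQ Q' e2 - mQ Q' e1 :=
    integral_sub hint2 hint1
  have : 0 < c * (volume (closedBall (0:Space) rr)).toReal := mul_pos hc0 hvolpos
  linarith

lemma mQ_monoOn (hQ : QHyp Q Q') : MonotoneOn (mQ Q') (Ici 0) :=
  (mQ_strictMonoOn hQ).monotoneOn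

lemma mQ_unbounded (hQ : QHyp Q Q') (r : ℝ) : ∃ e, 0 ≤ e ∧ r ≤ mQ Q' e := by
  rcases le_or_gt r 0 with h | h
  · exact ⟨0, le_refl 0, h.trans (mQ_nonneg hQ 0)⟩
  · set Vol := (volume (closedBall (0:Space) 1)).toReal with hV
    have hV0 : 0 < Vol :=
      ENNReal.toReal_pos (measure_closedBall_pos volume 0 one_pos).ne'
        (isCompact_closedBall _ _).measure_lt_top.ne
    set A := r / Vol + 1 with hA
    have hA0 : 0 < A := by positivity
    set e := Q' A + 1/2 with he
    have he0 : 0 < e := by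
      have := Q'_pos hQ hA0; rw [he]; linarith
    refine ⟨e, he0.le, ?_⟩
    have hAF : ∀ v ∈ closedBall (0:Space) 1, A ≤ gE Q' e v := by
      intro v hv
      rw [mem_closedBall, dist_zero_right] at hv
      have hq : qkin v ≤ 1/2 := by unfold qkin; nlinarith [norm_nonneg v]
      have h2 : Q' A ≤ e - qkin v := by rw [he]; linarith
      calc A = Finv Q' (Q' A) := (Finv_Q' hQ hA0).symm
      _ ≤ gE Q' e v := Finv_mono hQ h2
    have h2 : (∫ _ in closedBall (0:Space) 1, A)
        ≤ ∫ v in closedBall (0:Space) 1, gE Q' e v :=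
      setIntegral_mono_on (integrableOn_const
        (isCompact_closedBall _ _).measure_lt_top.ne)
        (integrable_gE hQ e).integrableOn measurableSet_closedBall hAF
    have h3 : (∫ v in closedBall (0:Space) 1, gE Q' e v) ≤ mQ Q' e :=
      setIntegral_le_integral (integrable_gE hQ e)
        (Eventually.of_forall fun v => Finv_nonneg hQ _)
    have h4 : (∫ _ in closedBall (0:Space) 1, A) = Vol * A := by
      rw [setIntegral_const, smul_eq_mul, measureReal_def]
    have h5 : r ≤ Vol * A := by
      have h6 : Vol * (r / Vol) = r := by field_simp
      rw [hA, mul_add, h6]; linarith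
    linarith

open Classical in
def eFun (Q' : ℝ → ℝ) (r : ℝ) : ℝ :=
  if h : ∃ e, 0 ≤ e ∧ mQ Q' e = r ∧ 0 < r then h.choose else 0

lemma eFun_exists (hQ : QHyp Q Q') {r : ℝ} (hr : 0 < r) :
    ∃ e, 0 ≤ e ∧ mQ Q' e = r ∧ 0 < r := by
  obtain ⟨E, hE0, hrE⟩ := mQ_unbounded hQ r
  obtain ⟨e, he, hme⟩ := intermediate_value_Icc hE0 ((mQ_continuous hQ).continuousOn)
    ⟨by rw [mQ_of_nonpos (le_refl 0)]; exact hr.le, hrE⟩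
  exact ⟨e, he.1, hme, hr⟩

lemma eFun_nonneg (r : ℝ) : 0 ≤ eFun Q' r := by
  rw [eFun]
  split_ifs with h
  · exact h.choose_spec.1
  · exact le_refl 0

lemma eFun_of_nonpos {r : ℝ} (hr : r ≤ 0) : eFun Q' r = 0 := by
  rw [eFun, dif_neg]
  rintro ⟨e, -, -, h⟩
  linarith

lemma mQ_eFun (hQ : QHyp Q Q') {r : ℝ} (hr : 0 ≤ r) : mQ Q' (eFun Q' r) = r := by
  rcases eq_or_lt_of_le hr with rfl | h
  · rw [eFun_of_nonpos (le_refl 0), mQ_of_nonpos (le_refl 0)]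
  · have hex := eFun_exists hQ h
    rw [eFun, dif_pos hex]
    exact hex.choose_spec.2.1

lemma eFun_mono (hQ : QHyp Q Q') : Monotone (eFun Q') := by
  intro r1 r2 h
  rcases le_or_gt r1 0 with h1 | h1
  · rw [eFun_of_nonpos h1]; exact eFun_nonneg _
  · have h2 : 0 < r2 := h1.trans_le h
    by_contra hlt
    push_neg at hlt
    have := mQ_strictMonoOn hQ (eFun_nonneg r2) (eFun_nonneg r1) hlt
    rw [mQ_eFun hQ h1.le, mQ_eFun hQ h2.le] at this
    linarith

lemma eFun_pos (hQ : QHyp Q Q') {r : ℝ} (hr : 0 < r) : 0 < eFun Q' r := by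
  rcases (eFun_nonneg (Q' := Q') r).lt_or_eq with h | h
  · exact h
  · exfalso
    have h2 := mQ_eFun hQ hr.le
    rw [← h, mQ_of_nonpos (le_refl 0)] at h2
    linarith

lemma eFun_measurable (hQ : QHyp Q Q') : Measurable (eFun Q') := (eFun_mono hQ).measurable

lemma eFun_continuousWithinAt (hQ : QHyp Q Q') {r : ℝ} (hr : 0 ≤ r) :
    ContinuousWithinAt (eFun Q') (Ici 0) r := by
  have hmem : mQ Q' (eFun Q' r) = r := mQ_eFun hQ hr
  apply tendsto_order.2
  constructor
  · intro a ha
    rcases lt_or_ge a 0 with ha0 | ha0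
    · exact Eventually.of_forall fun s => lt_of_lt_of_le ha0 (eFun_nonneg s)
    · have h1 : mQ Q' a < r := by
        rw [← hmem]; exact mQ_strictMonoOn hQ ha0 (eFun_nonneg r) ha
      have h2 : ∀ᶠ s in 𝓝[Ici 0] r, mQ Q' a < s :=
        (eventually_gt_nhds h1).filter_mono nhdsWithin_le_nhds
      filter_upwards [h2, self_mem_nhdsWithin] with s hs hs0
      by_contra hle
      push_neg at hle
      have h3 : mQ Q' (eFun Q' s) ≤ mQ Q' a := mQ_monoOn hQ (eFun_nonneg s) ha0 hle
      rw [mQ_eFun hQ hs0] at h3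
      linarith
  · intro b hb
    have hb0 : 0 ≤ b := ((eFun_nonneg r).trans_lt hb).le
    have h1 : r < mQ Q' b := by
      rw [← hmem]; exact mQ_strictMonoOn hQ (eFun_nonneg r) hb0 hb
    have h2 : ∀ᶠ s in 𝓝[Ici 0] r, s < mQ Q' b :=
      (eventually_lt_nhds h1).filter_mono nhdsWithin_le_nhds
    filter_upwards [h2, self_mem_nhdsWithin] with s hs hs0
    by_contra hle
    push_neg at hle
    have h3 : mQ Q' b ≤ mQ Q' (eFun Q' s) := mQ_monoOn hQ hb0 (eFun_nonneg s) hle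
    rw [mQ_eFun hQ hs0] at h3
    linarith

end EC

namespace EC
open Set Function Metric
variable {Q Q' : ℝ → ℝ}

/-! #### Pointwise optimality and the reduced variational problem -/

lemma point_min (hQ : QHyp Q Q') (c : ℝ) {s : ℝ} (hs : 0 ≤ s) :
    Q (Finv Q' c) - c * Finv Q' c ≤ Q s - c * s := by
  rcases le_or_gt c 0 with hc | hc
  · rw [Finv_of_nonpos hc, hQ.zero, mul_zero, sub_zero]
    have h1 : c * s ≤ 0 := mul_nonpos_of_nonpos_of_nonneg hc hs
    have h2 : 0 ≤ Q s := Q_nonneg hQ hs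
    linarith
  · have hspec := Finv_spec hQ hc
    have h := support_line hQ hspec.1 hs
    rw [hspec.2] at h
    have hr : c * (s - Finv Q' c) = c * s - c * Finv Q' c := by ring
    linarith

lemma point_min_strict (hQ : QHyp Q Q') (c : ℝ) {s : ℝ} (hs : 0 ≤ s)
    (hne : s ≠ Finv Q' c) :
    Q (Finv Q' c) - c * Finv Q' c < Q s - c * s := by
  rcases le_or_gt c 0 with hc | hc
  · rw [Finv_of_nonpos hc] at hne ⊢
    rw [hQ.zero, mul_zero, sub_zero]
    have hs' : 0 < s := hs.lt_of_ne (Ne.symm hne)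
    have h1 : c * s ≤ 0 := mul_nonpos_of_nonpos_of_nonneg hc hs'.le
    have h2 : 0 < Q s := Q_pos hQ hs'
    linarith
  · have hspec := Finv_spec hQ hc
    have h := support_line_strict hQ hspec.1 hs hne
    rw [hspec.2] at h
    have hr : c * (s - Finv Q' c) = c * s - c * Finv Q' c := by ring
    linarith

lemma point_min' (hQ : QHyp Q Q') (e : ℝ) (v : Space) {s : ℝ} (hs : 0 ≤ s) :
    (1/2) * ‖v‖^2 * gE Q' e v + Q (gE Q' e v) - e * gE Q' e v
      ≤ (1/2) * ‖v‖^2 * s + Q s - e * s := by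
  have h := point_min hQ (e - qkin v) hs
  have h1 : (e - qkin v) * Finv Q' (e - qkin v)
      = e * gE Q' e v - (1/2) * ‖v‖^2 * gE Q' e v := by
    unfold gE qkin; ring
  have h2 : (e - qkin v) * s = e * s - (1/2) * ‖v‖^2 * s := by unfold qkin; ring
  unfold gE at h1 ⊢
  linarith

lemma point_min'_strict (hQ : QHyp Q Q') (e : ℝ) (v : Space) {s : ℝ} (hs : 0 ≤ s)
    (hne : s ≠ gE Q' e v) :
    (1/2) * ‖v‖^2 * gE Q' e v + Q (gE Q' e v) - e * gE Q' e v
      < (1/2) * ‖v‖^2 * s + Q s - e * s := by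
  have h := point_min_strict hQ (e - qkin v) hs hne
  have h1 : (e - qkin v) * Finv Q' (e - qkin v)
      = e * gE Q' e v - (1/2) * ‖v‖^2 * gE Q' e v := by
    unfold gE qkin; ring
  have h2 : (e - qkin v) * s = e * s - (1/2) * ‖v‖^2 * s := by unfold qkin; ring
  unfold gE at h1 ⊢
  linarith

lemma gE_mem_Gset' (hQ : QHyp Q Q') (e : ℝ) : gE Q' e ∈ Gset Q (mQ Q' e) :=
  ⟨gE_nonneg hQ e, integrable_gE hQ e, integrable_comb_gE hQ e, rfl⟩

lemma gE_mem_Gset (hQ : QHyp Q Q') {r : ℝ} (hr : 0 ≤ r) :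
    gE Q' (eFun Q' r) ∈ Gset Q r := by
  have := gE_mem_Gset' hQ (Q' := Q') (eFun Q' r)
  rwa [mQ_eFun hQ hr] at this

lemma kinQint_nonneg (hQ : QHyp Q Q') {g : Space → ℝ} (hg : ∀ v, 0 ≤ g v) :
    0 ≤ kinQint Q g :=
  integral_nonneg fun v => add_nonneg (mul_nonneg (by positivity) (hg v)) (Q_nonneg hQ (hg v))

lemma Phi_bddBelow (hQ : QHyp Q Q') (r : ℝ) : BddBelow (kinQint Q '' Gset Q r) := by
  refine ⟨0, ?_⟩
  rintro b ⟨g, hg, rfl⟩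
  exact kinQint_nonneg hQ hg.1

lemma Phi_nonneg (hQ : QHyp Q Q') (r : ℝ) : 0 ≤ Phi Q r := by
  apply Real.sInf_nonneg
  rintro b ⟨g, hg, rfl⟩
  exact kinQint_nonneg hQ hg.1

lemma Phi_le_kinQint (hQ : QHyp Q Q') {r : ℝ} {g : Space → ℝ} (hg : g ∈ Gset Q r) :
    Phi Q r ≤ kinQint Q g :=
  csInf_le (Phi_bddBelow hQ r) ⟨g, hg, rfl⟩

lemma kinQint_shift (e : ℝ) {r : ℝ} {g : Space → ℝ} (hg : g ∈ Gset Q r) :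
    ∫ v : Space, ((1/2) * ‖v‖^2 * g v + Q (g v) - e * g v) = kinQint Q g - e * r := by
  obtain ⟨h0, hint, hcomb, hmass⟩ := hg
  rw [integral_sub hcomb (hint.const_mul e), integral_const_mul, hmass]
  rfl

lemma core_ineq (hQ : QHyp Q Q') {r : ℝ} {g : Space → ℝ} (hg : g ∈ Gset Q r) (e : ℝ) :
    kinQint Q (gE Q' e) - e * mQ Q' e ≤ kinQint Q g - e * r := by
  rw [← kinQint_shift e hg, ← kinQint_shift e (gE_mem_Gset' hQ e)]
  have hint1 : Integrable (fun v : Space =>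
      (1/2) * ‖v‖^2 * gE Q' e v + Q (gE Q' e v) - e * gE Q' e v) :=
    (integrable_comb_gE hQ e).sub ((integrable_gE hQ e).const_mul e)
  have hint2 : Integrable (fun v : Space =>
      (1/2) * ‖v‖^2 * g v + Q (g v) - e * g v) :=
    hg.2.2.1.sub (hg.2.1.const_mul e)
  exact integral_mono hint1 hint2 fun v => point_min' hQ e v (hg.1 v)

lemma Phi_eq (hQ : QHyp Q Q') {r : ℝ} (hr : 0 ≤ r) :
    Phi Q r = PsiQ Q Q' (eFun Q' r) := by
  have hPsi : PsiQ Q Q' (eFun Q' r) = kinQint Q (gE Q' (eFun Q' r)) := rfl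
  rw [hPsi]
  apply le_antisymm (Phi_le_kinQint hQ (gE_mem_Gset hQ hr))
  apply le_csInf ⟨kinQint Q (gE Q' (eFun Q' r)), Set.mem_image_of_mem _ (gE_mem_Gset hQ hr)⟩
  rintro b ⟨g, hg, rfl⟩
  have h := core_ineq hQ hg (eFun Q' r)
  rw [mQ_eFun hQ hr] at h
  linarith

lemma Phi_subgrad (hQ : QHyp Q Q') {r s : ℝ} (hr : 0 ≤ r) (hs : 0 ≤ s) :
    Phi Q r + eFun Q' r * (s - r) ≤ Phi Q s := by
  apply le_csInf ⟨kinQint Q (gE Q' (eFun Q' s)), Set.mem_image_of_mem _ (gE_mem_Gset hQ hs)⟩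
  rintro b ⟨g, hg, rfl⟩
  have h := core_ineq hQ hg (eFun Q' r)
  rw [mQ_eFun hQ hr] at h
  rw [Phi_eq hQ hr]
  have hPsi : PsiQ Q Q' (eFun Q' r) = kinQint Q (gE Q' (eFun Q' r)) := rfl
  rw [hPsi]
  have hrr : eFun Q' r * (s - r) = eFun Q' r * s - eFun Q' r * r := by ring
  linarith

lemma PsiQ_continuous (hQ : QHyp Q Q') : Continuous (PsiQ Q Q') := by
  have c1 := par_continuous (Finv Q') qkin (Finv_mono hQ) Finv_zero_nonpos
    (Finv_nonneg hQ) qkin_continuous qkin_nonneg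
  have c2 := par_continuous (fun s => Qt Q (Finv Q' s)) (fun _ => 1) (QtFinv_mono hQ)
    (QtFinv_zero hQ) (QtFinv_nonneg hQ) continuous_const (fun _ => zero_le_one)
  simp only [one_mul] at c2
  have h2 : ∀ e : ℝ, Integrable (fun v : Space => Qt Q (Finv Q' (e - qkin v))) := by
    intro e
    have := par_integrable (fun s => Qt Q (Finv Q' s)) (fun _ => 1) (QtFinv_mono hQ)
      (QtFinv_zero hQ) (QtFinv_nonneg hQ) continuous_const (fun _ => zero_le_one) e
    simpa only [one_mul] using this
  have heq : PsiQ Q Q' = fun e => (∫ v : Space, qkin v * Finv Q' (e - qkin v))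
      + ∫ v : Space, Qt Q (Finv Q' (e - qkin v)) := by
    funext e
    have h1 : Integrable (fun v : Space => qkin v * Finv Q' (e - qkin v)) :=
      integrable_kin_gE hQ e
    rw [← integral_add h1 (h2 e)]
    apply integral_congr_ae (Eventually.of_forall fun v => ?_)
    show (1/2) * ‖v‖^2 * gE Q' e v + Q (gE Q' e v)
      = qkin v * Finv Q' (e - qkin v) + Qt Q (Finv Q' (e - qkin v))
    rw [Qt_eq Q (Finv_nonneg hQ _)]
    rfl
  rw [heq]
  exact c1.add c2

lemma Phi_hasDerivWithinAt (hQ : QHyp Q Q') {r : ℝ} (hr : 0 ≤ r) :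
    HasDerivWithinAt (Phi Q) (eFun Q' r) (Ici 0) r := by
  rw [hasDerivWithinAt_iff_tendsto_slope]
  have key : ∀ s ∈ Ici (0:ℝ) \ {r},
      dist (slope (Phi Q) r s) (eFun Q' r) ≤ dist (eFun Q' s) (eFun Q' r) := by
    intro s hs
    obtain ⟨hs0, hsr⟩ := hs
    rw [mem_singleton_iff] at hsr
    rw [mem_Ici] at hs0
    have h1 := Phi_subgrad hQ hr hs0
    have h2 := Phi_subgrad hQ hs0 hr
    rw [slope_def_field]
    rcases lt_or_gt_of_ne hsr with h | h
    · have hd : s - r < 0 := by linarith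
      have hle1 : (Phi Q s - Phi Q r)/(s - r) ≤ eFun Q' r := by
        rw [div_le_iff_of_neg hd]
        linarith
      have hle2 : eFun Q' s ≤ (Phi Q s - Phi Q r)/(s - r) := by
        rw [le_div_iff_of_neg hd]
        have hrr : eFun Q' s * (r - s) = -(eFun Q' s * (s - r)) := by ring
        linarith
      have hm : eFun Q' s ≤ eFun Q' r := eFun_mono hQ h.le
      rw [Real.dist_eq, Real.dist_eq, abs_of_nonpos (by linarith),
        abs_of_nonpos (by linarith)]
      linarith
    · have hd : 0 < s - r := by linarith
      have hle1 : eFun Q' r ≤ (Phi Q s - Phi Q r)/(s - r) := by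
        rw [le_div_iff₀ hd]
        linarith
      have hle2 : (Phi Q s - Phi Q r)/(s - r) ≤ eFun Q' s := by
        rw [div_le_iff₀ hd]
        have hrr : eFun Q' s * (r - s) = -(eFun Q' s * (s - r)) := by ring
        linarith
      have hm : eFun Q' r ≤ eFun Q' s := eFun_mono hQ h.le
      rw [Real.dist_eq, Real.dist_eq, abs_of_nonneg (by linarith),
        abs_of_nonneg (by linarith)]
      linarith
  have htend : Tendsto (fun s => eFun Q' s) (𝓝[Ici 0 \ {r}] r) (𝓝 (eFun Q' r)) :=
    (eFun_continuousWithinAt hQ hr).mono_left (nhdsWithin_mono _ diff_subset)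
  rw [tendsto_iff_dist_tendsto_zero]
  apply squeeze_zero' (Eventually.of_forall fun s => dist_nonneg)
    (by filter_upwards [self_mem_nhdsWithin] with s hs using key s hs)
  exact tendsto_iff_dist_tendsto_zero.mp htend

lemma Phi_derivWithin (hQ : QHyp Q Q') {r : ℝ} (hr : 0 ≤ r) :
    derivWithin (Phi Q) (Ici 0) r = eFun Q' r :=
  (Phi_hasDerivWithinAt hQ hr).derivWithin (uniqueDiffOn_Ici 0 r hr)

lemma Gset_eq_case (hQ : QHyp Q Q') {r : ℝ} (hr : 0 ≤ r) {g : Space → ℝ}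
    (hg : g ∈ Gset Q r) (heq : kinQint Q g = Phi Q r) :
    g =ᵐ[volume] gE Q' (eFun Q' r) := by
  set e := eFun Q' r with he
  have hg0mem : gE Q' e ∈ Gset Q r := gE_mem_Gset hQ hr
  have hint1 : Integrable (fun v : Space =>
      (1/2) * ‖v‖^2 * g v + Q (g v) - e * g v) :=
    hg.2.2.1.sub (hg.2.1.const_mul e)
  have hint0 : Integrable (fun v : Space =>
      (1/2) * ‖v‖^2 * gE Q' e v + Q (gE Q' e v) - e * gE Q' e v) :=
    (integrable_comb_gE hQ e).sub ((integrable_gE hQ e).const_mul e)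
  set D := fun v : Space => ((1/2) * ‖v‖^2 * g v + Q (g v) - e * g v)
      - ((1/2) * ‖v‖^2 * gE Q' e v + Q (gE Q' e v) - e * gE Q' e v) with hD
  have hDint : Integrable D := hint1.sub hint0
  have hD0 : ∀ v, 0 ≤ D v := fun v => sub_nonneg.2 (point_min' hQ e v (hg.1 v))
  have hDi : ∫ v, D v = 0 := by
    rw [hD, integral_sub hint1 hint0, kinQint_shift e hg, kinQint_shift e hg0mem]
    rw [heq, Phi_eq hQ hr]
    have h3 : PsiQ Q Q' (eFun Q' r) = kinQint Q (gE Q' e) := rfl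
    rw [h3]
    ring
  have hae : D =ᵐ[volume] 0 :=
    (integral_eq_zero_iff_of_nonneg hD0 hDint).1 hDi
  filter_upwards [hae] with v hv
  by_contra hne
  have hstrict := point_min'_strict hQ e v (hg.1 v) hne
  have : 0 < D v := by rw [hD]; dsimp only; linarith
  rw [hv] at this
  exact lt_irrefl _ this

end EC

namespace EC
open Set Function

/-! #### Product-measure glue -/

lemma vol_prod : (volume : Measure Phase) = (volume : Measure Space).prod volume :=
  MeasureTheory.Measure.volume_eq_prod Space Space

lemma prod_null_fst {N : Set Space} (hN : volume N = 0) :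
    volume {p : Phase | p.1 ∈ N} = 0 := by
  rw [vol_prod]
  have hsub : {p : Phase | p.1 ∈ N} ⊆ (toMeasurable volume N) ×ˢ (univ : Set Space) :=
    fun p hp => ⟨subset_toMeasurable volume N hp, mem_univ _⟩
  apply measure_mono_null hsub
  rw [Measure.prod_prod, measure_toMeasurable, hN, zero_mul]

lemma aemeasurable_comp_fst {g : Space → ℝ} (hg : AEMeasurable g volume) :
    AEMeasurable (fun p : Phase => g p.1) volume := by
  refine ⟨fun p => hg.mk g p.1, hg.measurable_mk.comp measurable_fst, ?_⟩
  have hN : volume {x : Space | ¬ g x = hg.mk g x} = 0 := ae_iff.1 hg.ae_eq_mk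
  have h2 := prod_null_fst hN
  rw [Filter.EventuallyEq, ae_iff]
  convert h2 using 2
  rfl

lemma ae_of_ae_fst {P : Space → Prop} (h : ∀ᵐ x : Space, P x) :
    ∀ᵐ p : Phase, P p.1 := by
  rw [ae_iff]
  exact prod_null_fst (ae_iff.1 h)

lemma ae_prod_of_ae_ae {f g : Phase → ℝ} (hf : AEStronglyMeasurable f volume)
    (hg : AEStronglyMeasurable g volume)
    (h : ∀ᵐ x : Space, ∀ᵐ v : Space, f (x, v) = g (x, v)) : f =ᵐ[volume] g := by
  set f' := hf.mk f with hf'def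
  set g' := hg.mk g with hg'def
  have hf' : f =ᵐ[volume] f' := hf.ae_eq_mk
  have hg' : g =ᵐ[volume] g' := hg.ae_eq_mk
  have hf'' : ∀ᵐ x : Space, ∀ᵐ v : Space, f (x, v) = f' (x, v) :=
    Measure.ae_ae_of_ae_prod hf.ae_eq_mk
  have hg'' : ∀ᵐ x : Space, ∀ᵐ v : Space, g (x, v) = g' (x, v) :=
    Measure.ae_ae_of_ae_prod hg.ae_eq_mk
  have hxy : ∀ᵐ x : Space, ∀ᵐ v : Space, f' (x, v) = g' (x, v) := by
    filter_upwards [h, hf'', hg''] with x h1 h2 h3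
    filter_upwards [h1, h2, h3] with v e1 e2 e3
    rw [← e2, e1, e3]
  have hmeas : MeasurableSet {p : Phase | ¬ f' p = g' p} :=
    (measurableSet_eq_fun hf.stronglyMeasurable_mk.measurable
      hg.stronglyMeasurable_mk.measurable).compl
  have hnull : volume {p : Phase | ¬ f' p = g' p} = 0 := by
    rw [vol_prod, Measure.measure_prod_null hmeas]

    filter_upwards [hxy] with x hx
    have : volume {v : Space | ¬ f' (x, v) = g' (x, v)} = 0 := ae_iff.1 hx
    show volume (Prod.mk x ⁻¹' {p : Phase | ¬ f' p = g' p}) = 0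
    convert this using 2
    rfl
  have hfg' : f' =ᵐ[volume] g' := by
    rw [Filter.EventuallyEq, ae_iff]
    exact hnull
  exact hf'.trans (hfg'.trans hg'.symm)

lemma Epot_congr {ρ σ : Space → ℝ} (h : ρ =ᵐ[volume] σ) : Epot ρ = Epot σ := by
  unfold Epot
  congr 1
  apply integral_congr_ae
  filter_upwards [h] with x hx
  apply integral_congr_ae
  filter_upwards [h] with y hy
  rw [hx, hy]

end EC

namespace EC
open Set Function

variable {Q Q' : ℝ → ℝ}

/-! #### The lifted distribution and the main reduction lemmas -/

def fLift (Q' : ℝ → ℝ) (ρ : Space → ℝ) : Phase → ℝ :=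
  fun p => gE Q' (eFun Q' (ρ p.1)) p.2

lemma fLift_nonneg (hQ : QHyp Q Q') (ρ : Space → ℝ) (p : Phase) : 0 ≤ fLift Q' ρ p :=
  Finv_nonneg hQ _

lemma rho_fLift (hQ : QHyp Q Q') {ρ : Space → ℝ} (hρ0 : ∀ x, 0 ≤ ρ x) :
    rho (fLift Q' ρ) = ρ :=
  funext fun x => mQ_eFun hQ (hρ0 x)

lemma fLift_aesm (hQ : QHyp Q Q') {ρ : Space → ℝ} (hρ : AEMeasurable ρ volume) :
    AEStronglyMeasurable (fLift Q' ρ) volume := by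
  have h1 : AEMeasurable (fun p : Phase => eFun Q' (ρ p.1)) volume :=
    aemeasurable_comp_fst ((eFun_measurable hQ).comp_aemeasurable hρ)
  have h2 : AEMeasurable (fun p : Phase => eFun Q' (ρ p.1) - qkin p.2) volume :=
    h1.sub ((qkin_continuous.measurable.comp measurable_snd).aemeasurable)
  exact ((Finv_measurable hQ).comp_aemeasurable h2).aestronglyMeasurable

lemma comb_aesm (hQ : QHyp Q Q') {f : Phase → ℝ} (hf0 : ∀ p, 0 ≤ f p)
    (hA : AEStronglyMeasurable f volume) :
    AEStronglyMeasurable (fun p : Phase => Q (f p) + (1/2) * ‖p.2‖^2 * f p) volume := by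
  have h3 : AEStronglyMeasurable (fun p : Phase => Q (f p)) volume := by
    refine ((Qt_continuous hQ).comp_aestronglyMeasurable hA).congr
      (Filter.Eventually.of_forall fun p => ?_)
    exact Qt_eq Q (hf0 p)
  have h4 : AEStronglyMeasurable (fun p : Phase => (1/2) * ‖p.2‖^2 * f p) volume := by
    have h5 : Continuous (fun p : Phase => (1/2) * ‖p.2‖^2) := by fun_prop
    exact h5.aestronglyMeasurable.mul hA
  exact h3.add h4

lemma casEkin (hQ : QHyp Q Q') {f : Phase → ℝ} (hf0 : ∀ p, 0 ≤ f p)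
    (hA : AEStronglyMeasurable f volume)
    (hfc : Integrable (fun p : Phase => Q (f p) + (1/2) * ‖p.2‖^2 * f p) volume) :
    Integrable (fun p : Phase => Q (f p)) volume ∧
    Integrable (fun p : Phase => (1/2) * ‖p.2‖^2 * f p) volume ∧
    Cas Q f + Ekin f = ∫ p : Phase, (Q (f p) + (1/2) * ‖p.2‖^2 * f p) := by
  have hQf_meas : AEStronglyMeasurable (fun p : Phase => Q (f p)) volume := by
    refine ((Qt_continuous hQ).comp_aestronglyMeasurable hA).congr
      (Filter.Eventually.of_forall fun p => ?_)
    exact Qt_eq Q (hf0 p)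
  have hQf : Integrable (fun p : Phase => Q (f p)) volume := by
    refine hfc.mono' hQf_meas (Filter.Eventually.of_forall fun p => ?_)
    rw [Real.norm_of_nonneg (Q_nonneg hQ (hf0 p))]
    have h1 : 0 ≤ (1/2) * ‖p.2‖^2 * f p := mul_nonneg (by positivity) (hf0 p)
    linarith
  have hkin : Integrable (fun p : Phase => (1/2) * ‖p.2‖^2 * f p) volume := by
    refine (hfc.sub hQf).congr (Filter.Eventually.of_forall fun p => ?_)
    simp only [Pi.sub_apply]
    ring
  refine ⟨hQf, hkin, ?_⟩
  rw [integral_add hQf hkin]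
  have h2 : Ekin f = ∫ p : Phase, (1/2) * ‖p.2‖^2 * f p := by
    unfold Ekin
    rw [← integral_const_mul]
    exact integral_congr_ae (Filter.Eventually.of_forall fun p => by ring)
  unfold Cas
  rw [h2]

lemma fLift_integrable (hQ : QHyp Q Q') {ρ : Space → ℝ} (hρ0 : ∀ x, 0 ≤ ρ x)
    (hρi : Integrable ρ volume) : Integrable (fLift Q' ρ) volume := by
  have hA : AEStronglyMeasurable (fLift Q' ρ)
      ((volume : Measure Space).prod volume) := fLift_aesm hQ hρi.aemeasurable
  have key : Integrable (fLift Q' ρ) ((volume : Measure Space).prod volume) := by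
    refine (MeasureTheory.integrable_prod_iff hA).2 ⟨?_, ?_⟩
    · exact Filter.Eventually.of_forall fun x => integrable_gE hQ (eFun Q' (ρ x))
    · have heq : (fun x : Space => ∫ v : Space, ‖fLift Q' ρ (x, v)‖) = ρ := by
        funext x
        have h1 : (∫ v : Space, ‖fLift Q' ρ (x, v)‖)
            = ∫ v : Space, gE Q' (eFun Q' (ρ x)) v :=
          integral_congr_ae (Filter.Eventually.of_forall fun v =>
            Real.norm_of_nonneg (Finv_nonneg hQ _))
        rw [h1]
        exact mQ_eFun hQ (hρ0 x)
      rw [heq]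
      exact hρi
  exact key

lemma fLift_comb_integrable (hQ : QHyp Q Q') {ρ : Space → ℝ} (hρ0 : ∀ x, 0 ≤ ρ x)
    (hρi : Integrable ρ volume) (hΦ : Integrable (fun x => Phi Q (ρ x)) volume) :
    Integrable (fun p : Phase => Q (fLift Q' ρ p) + (1/2) * ‖p.2‖^2 * fLift Q' ρ p)
      volume := by
  have hA : AEStronglyMeasurable
      (fun p : Phase => Q (fLift Q' ρ p) + (1/2) * ‖p.2‖^2 * fLift Q' ρ p)
      ((volume : Measure Space).prod volume) :=
    comb_aesm hQ (fLift_nonneg hQ ρ) (fLift_aesm hQ hρi.aemeasurable)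
  have key : Integrable
      (fun p : Phase => Q (fLift Q' ρ p) + (1/2) * ‖p.2‖^2 * fLift Q' ρ p)
      ((volume : Measure Space).prod volume) := by
    refine (MeasureTheory.integrable_prod_iff hA).2 ⟨?_, ?_⟩
    · refine Filter.Eventually.of_forall fun x => ?_
      refine (integrable_comb_gE hQ (eFun Q' (ρ x))).congr
        (Filter.Eventually.of_forall fun v => ?_)
      dsimp only [fLift]
      ring
    · have heq : (fun x : Space => ∫ v : Space,
          ‖Q (fLift Q' ρ (x, v)) + (1/2) * ‖v‖^2 * fLift Q' ρ (x, v)‖)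
          = fun x => Phi Q (ρ x) := by
        funext x
        have h1 : (∫ v : Space,
            ‖Q (fLift Q' ρ (x, v)) + (1/2) * ‖v‖^2 * fLift Q' ρ (x, v)‖)
            = ∫ v : Space, ((1/2) * ‖v‖^2 * gE Q' (eFun Q' (ρ x)) v
              + Q (gE Q' (eFun Q' (ρ x)) v)) := by
          refine integral_congr_ae (Filter.Eventually.of_forall fun v => ?_)
          have h0 : 0 ≤ Q (gE Q' (eFun Q' (ρ x)) v) := Q_nonneg hQ (gE_nonneg hQ _ v)
          have h0' : 0 ≤ (1/2) * ‖v‖^2 * gE Q' (eFun Q' (ρ x)) v :=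
            mul_nonneg (by positivity) (gE_nonneg hQ _ v)
          dsimp only [fLift]
          rw [Real.norm_of_nonneg (by exact add_nonneg h0 (mul_nonneg (by positivity) (gE_nonneg hQ _ v)))]
          ring
        rw [h1]
        exact (Phi_eq hQ (hρ0 x)).symm
      rw [heq]
      exact hΦ
  exact key

lemma fLift_mass (hQ : QHyp Q Q') {ρ : Space → ℝ} (hρ0 : ∀ x, 0 ≤ ρ x)
    (hρi : Integrable ρ volume) :
    ∫ p : Phase, fLift Q' ρ p = ∫ x : Space, ρ x := by
  have key := MeasureTheory.integral_prod (fLift Q' ρ)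
    (μ := (volume : Measure Space)) (ν := (volume : Measure Space))
    (fLift_integrable hQ hρ0 hρi)
  rw [show (∫ x : Space, ∫ v : Space, fLift Q' ρ (x, v)) = ∫ x : Space, ρ x from
    integral_congr_ae (Filter.Eventually.of_forall fun x => mQ_eFun hQ (hρ0 x))] at key
  exact key

lemma fLift_mem_FM (hQ : QHyp Q Q') {M : ℝ} {ρ : Space → ℝ} (hρ : ρ ∈ FMr Q M) :
    fLift Q' ρ ∈ FM Q M := by
  obtain ⟨hρ0, hρi, hρlp, hρΦ, hρm⟩ := hρ
  refine ⟨fLift_nonneg hQ ρ, fLift_integrable hQ hρ0 hρi,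
    fLift_comb_integrable hQ hρ0 hρi hρΦ, ?_, ?_⟩
  · rw [rho_fLift hQ hρ0]
    exact hρlp
  · rw [fLift_mass hQ hρ0 hρi, hρm]

lemma HC_fLift (hQ : QHyp Q Q') {M : ℝ} {ρ : Space → ℝ} (hρ : ρ ∈ FMr Q M) :
    HC Q (fLift Q' ρ) = HCr Q ρ := by
  obtain ⟨hρ0, hρi, hρlp, hρΦ, hρm⟩ := hρ
  unfold HC HCr
  rw [rho_fLift hQ hρ0]
  congr 1
  obtain ⟨-, -, hCE⟩ := casEkin hQ (fLift_nonneg hQ ρ)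
    (fLift_aesm hQ hρi.aemeasurable) (fLift_comb_integrable hQ hρ0 hρi hρΦ)
  rw [hCE]
  have key := MeasureTheory.integral_prod
    (fun p : Phase => Q (fLift Q' ρ p) + (1/2) * ‖p.2‖^2 * fLift Q' ρ p)
    (μ := (volume : Measure Space)) (ν := (volume : Measure Space))
    (fLift_comb_integrable hQ hρ0 hρi hρΦ)
  have key2 : (∫ p : Phase, (Q (fLift Q' ρ p) + (1/2) * ‖p.2‖^2 * fLift Q' ρ p))
      = ∫ x : Space, ∫ v : Space,
        (Q (fLift Q' ρ (x, v)) + (1/2) * ‖v‖^2 * fLift Q' ρ (x, v)) := key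
  rw [key2]
  refine integral_congr_ae (Filter.Eventually.of_forall fun x => ?_)
  dsimp only
  have h1 : (∫ v : Space, (Q (fLift Q' ρ (x, v)) + (1/2) * ‖v‖^2 * fLift Q' ρ (x, v)))
      = ∫ v : Space, ((1/2) * ‖v‖^2 * gE Q' (eFun Q' (ρ x)) v
        + Q (gE Q' (eFun Q' (ρ x)) v)) :=
    integral_congr_ae (Filter.Eventually.of_forall fun v => by dsimp only [fLift]; ring)
  rw [h1]
  exact (Phi_eq hQ (hρ0 x)).symm

end EC

namespace EC
open Set Function

variable {Q Q' : ℝ → ℝ}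

lemma reduction (hQ : QHyp Q Q') {M : ℝ} {f : Phase → ℝ} (hf : f ∈ FM Q M) :
    rho f ∈ FMr Q M ∧ HCr Q (rho f) ≤ HC Q f ∧
      (HC Q f = HCr Q (rho f) → f =ᵐ[volume] fLift Q' (rho f)) := by
  obtain ⟨hf0, hfi, hfc, hflp, hfm⟩ := hf
  have hfiP : Integrable f ((volume : Measure Space).prod volume) := hfi
  have hfcP : Integrable (fun p : Phase => Q (f p) + (1/2) * ‖p.2‖^2 * f p)
      ((volume : Measure Space).prod volume) := hfc
  have hρ0 : ∀ x, 0 ≤ rho f x := fun x => integral_nonneg fun v => hf0 (x, v)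
  have hρi : Integrable (rho f) volume := hfiP.integral_prod_left
  have hh : Integrable
      (fun x : Space => ∫ v : Space, (Q (f (x, v)) + (1/2) * ‖v‖^2 * f (x, v)))
      volume := hfcP.integral_prod_left
  have hs1 : ∀ᵐ x : Space, Integrable (fun v => f (x, v)) volume := hfiP.prod_right_ae
  have hs2 : ∀ᵐ x : Space,
      Integrable (fun v => Q (f (x, v)) + (1/2) * ‖v‖^2 * f (x, v)) volume :=
    hfcP.prod_right_ae
  have hmem : ∀ᵐ x : Space, (fun v => f (x, v)) ∈ Gset Q (rho f x) := by
    filter_upwards [hs1, hs2] with x h1 h2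
    refine ⟨fun v => hf0 (x, v), h1, ?_, rfl⟩
    exact h2.congr (Filter.Eventually.of_forall fun v => by dsimp only; ring)
  have hΦle : ∀ᵐ x : Space, Phi Q (rho f x)
      ≤ ∫ v : Space, (Q (f (x, v)) + (1/2) * ‖v‖^2 * f (x, v)) := by
    filter_upwards [hmem] with x hx
    have h1 := Phi_le_kinQint hQ hx
    have heq : kinQint Q (fun v => f (x, v))
        = ∫ v : Space, (Q (f (x, v)) + (1/2) * ‖v‖^2 * f (x, v)) :=
      integral_congr_ae (Filter.Eventually.of_forall fun v => by dsimp only; ring)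
    rw [heq] at h1
    exact h1
  have hΦmeas : AEStronglyMeasurable (fun x => Phi Q (rho f x)) volume := by
    have h1 : (fun x => Phi Q (rho f x)) = fun x => PsiQ Q Q' (eFun Q' (rho f x)) :=
      funext fun x => Phi_eq hQ (hρ0 x)
    rw [h1]
    exact ((PsiQ_continuous hQ).measurable.comp_aemeasurable
      ((eFun_measurable hQ).comp_aemeasurable hρi.aemeasurable)).aestronglyMeasurable
  have hΦint : Integrable (fun x => Phi Q (rho f x)) volume := by
    refine Integrable.mono' hh hΦmeas ?_
    filter_upwards [hΦle] with x hx
    rw [Real.norm_of_nonneg (Phi_nonneg hQ _)]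
    exact hx
  have hmass : ∫ x : Space, rho f x = M := by
    have key := MeasureTheory.integral_prod f hfiP
    exact key.symm.trans hfm
  have hFMr : rho f ∈ FMr Q M := ⟨hρ0, hρi, hflp, hΦint, hmass⟩
  obtain ⟨hQfint, hkinint, hCE⟩ := casEkin hQ hf0 hfi.aestronglyMeasurable hfc
  have hprod : (∫ p : Phase, (Q (f p) + (1/2) * ‖p.2‖^2 * f p))
      = ∫ x : Space, ∫ v : Space, (Q (f (x, v)) + (1/2) * ‖v‖^2 * f (x, v)) :=
    MeasureTheory.integral_prod _ hfcP
  have hle : HCr Q (rho f) ≤ HC Q f := by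
    unfold HCr HC
    have h5 : ∫ x : Space, Phi Q (rho f x)
        ≤ ∫ x : Space, ∫ v : Space, (Q (f (x, v)) + (1/2) * ‖v‖^2 * f (x, v)) :=
      integral_mono_ae hΦint hh hΦle
    rw [← hprod] at h5
    linarith
  refine ⟨hFMr, hle, ?_⟩
  intro heq
  -- equality case
  have hint_eq : ∫ x : Space, Phi Q (rho f x)
      = ∫ x : Space, ∫ v : Space, (Q (f (x, v)) + (1/2) * ‖v‖^2 * f (x, v)) := by
    unfold HC HCr at heq
    rw [← hprod]
    linarith
  have hgap : ∫ x : Space,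
      ((∫ v : Space, (Q (f (x, v)) + (1/2) * ‖v‖^2 * f (x, v))) - Phi Q (rho f x)) = 0 := by
    rw [integral_sub hh hΦint, ← hint_eq]
    ring
  have hnn : 0 ≤ᵐ[volume] fun x : Space =>
      ((∫ v : Space, (Q (f (x, v)) + (1/2) * ‖v‖^2 * f (x, v))) - Phi Q (rho f x)) := by
    filter_upwards [hΦle] with x hx
    simp only [Pi.zero_apply]
    linarith
  have hae0 := (integral_eq_zero_iff_of_nonneg_ae hnn (hh.sub hΦint)).1 hgap
  have haex : ∀ᵐ x : Space, (fun v => f (x, v)) =ᵐ[volume]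
      gE Q' (eFun Q' (rho f x)) := by
    filter_upwards [hae0, hmem] with x hx hxm
    have h1 : (∫ v : Space, (Q (f (x, v)) + (1/2) * ‖v‖^2 * f (x, v)))
        - Phi Q (rho f x) = 0 := hx
    have heqk : kinQint Q (fun v => f (x, v)) = Phi Q (rho f x) := by
      have h2 : kinQint Q (fun v => f (x, v))
          = ∫ v : Space, (Q (f (x, v)) + (1/2) * ‖v‖^2 * f (x, v)) :=
        integral_congr_ae (Filter.Eventually.of_forall fun v => by dsimp only; ring)
      linarith
    exact Gset_eq_case hQ (hρ0 x) hxm heqk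
  refine ae_prod_of_ae_ae hfi.aestronglyMeasurable
    (fLift_aesm hQ hρi.aemeasurable) ?_
  filter_upwards [haex] with x hx
  exact hx

end EC

namespace EC
open Set Function

variable {Q Q' : ℝ → ℝ}

lemma fLift_congr {ρ σ : Space → ℝ} (h : ρ =ᵐ[volume] σ) :
    fLift Q' ρ =ᵐ[volume] fLift Q' σ := by
  have hN : volume {x : Space | ¬ ρ x = σ x} = 0 := ae_iff.1 h
  rw [Filter.EventuallyEq, ae_iff]
  apply measure_mono_null ?_ (prod_null_fst hN)
  intro p hp
  simp only [mem_setOf_eq] at hp ⊢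
  intro hee
  exact hp (by unfold fLift; rw [hee])

lemma lift_eq_fLift (hQ : QHyp Q Q') {ρ₀ : Space → ℝ} (hρ0 : ∀ x, 0 ≤ ρ₀ x) {E₀ : ℝ}
    (hEL : ∀ᵐ x : Space ∂volume,
      (Upot ρ₀ x < E₀ → derivWithin (Phi Q) (Set.Ici 0) (ρ₀ x) = E₀ - Upot ρ₀ x) ∧
      (E₀ ≤ Upot ρ₀ x → ρ₀ x = 0)) :
    ∀ᵐ x : Space, ∀ v : Space, lift Q' (Upot ρ₀) E₀ (x, v) = fLift Q' ρ₀ (x, v) := by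
  filter_upwards [hEL] with x hx
  intro v
  rcases lt_or_ge (Upot ρ₀ x) E₀ with hU | hU
  · have he : eFun Q' (ρ₀ x) = E₀ - Upot ρ₀ x := by
      rw [← Phi_derivWithin hQ (hρ0 x)]
      exact hx.1 hU
    unfold lift fLift gE
    dsimp only
    rw [he]
    by_cases hc : (1/2) * ‖v‖^2 + Upot ρ₀ x < E₀
    · rw [if_pos hc]
      have hs : 0 < E₀ - ((1/2) * ‖v‖^2 + Upot ρ₀ x) := by linarith
      rw [invFunOn_eq_Finv hQ hs]
      congr 1
      unfold qkin
      ring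
    · rw [if_neg hc]
      push_neg at hc
      rw [Finv_of_nonpos (by unfold qkin; linarith)]
  · have h0 : ρ₀ x = 0 := hx.2 hU
    unfold lift fLift gE
    dsimp only
    rw [h0, eFun_of_nonpos (le_refl 0)]
    rw [if_neg (by push_neg; nlinarith [sq_nonneg ‖v‖])]
    rw [Finv_of_nonpos (by have := qkin_nonneg v; linarith)]

lemma lift_ae_fLift (hQ : QHyp Q Q') {ρ₀ : Space → ℝ} (hρ0 : ∀ x, 0 ≤ ρ₀ x) {E₀ : ℝ}
    (hEL : ∀ᵐ x : Space ∂volume,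
      (Upot ρ₀ x < E₀ → derivWithin (Phi Q) (Set.Ici 0) (ρ₀ x) = E₀ - Upot ρ₀ x) ∧
      (E₀ ≤ Upot ρ₀ x → ρ₀ x = 0)) :
    lift Q' (Upot ρ₀) E₀ =ᵐ[volume] fLift Q' ρ₀ := by
  have hLf := lift_eq_fLift hQ hρ0 hEL
  rw [Filter.EventuallyEq, ae_iff]
  apply measure_mono_null ?_ (prod_null_fst
    (N := {x : Space | ¬ ∀ v : Space, lift Q' (Upot ρ₀) E₀ (x, v) = fLift Q' ρ₀ (x, v)})
    (ae_iff.1 hLf))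
  intro p hp
  simp only [mem_setOf_eq] at hp ⊢
  intro hall
  exact hp (hall p.2)

end EC
/-- Assume `H_C^r` has at least one minimizer in `F_M^r`.  Then:
(i) if `f₀ ∈ F_M` minimizes `H_C`, then `ρ_{f₀} ∈ F_M^r` minimizes `H_C^r`;
(ii) the map `f₀ ↦ ρ_{f₀}` is one-to-one (up to a.e. equality) on minimizers of `H_C`;
(iii) it is onto the set of minimizers of `H_C^r`;
(iv) it is inverse to the lifting map `ρ₀ ↦ f₀` of the Euler-Lagrange multiplier:
for a minimizer `ρ₀` with multiplier `E₀`, the lift of `ρ₀` has induced density `ρ₀`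
again, and any minimizer `f₀` of `H_C` inducing `ρ₀` agrees a.e. with the lift. -/
theorem rho_bijection_on_minimizers (Q Q' : ℝ → ℝ) (hQ : QHyp Q Q') (M : ℝ) (hM : 0 < M)
    (hex : ∃ ρ ∈ FMr Q M, ∀ σ ∈ FMr Q M, HCr Q ρ ≤ HCr Q σ) :
    (∀ f₀ ∈ FM Q M, (∀ f ∈ FM Q M, HC Q f₀ ≤ HC Q f) →
      rho f₀ ∈ FMr Q M ∧ ∀ σ ∈ FMr Q M, HCr Q (rho f₀) ≤ HCr Q σ) ∧
    (∀ f₀ ∈ FM Q M, ∀ g₀ ∈ FM Q M, (∀ f ∈ FM Q M, HC Q f₀ ≤ HC Q f) →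
      (∀ f ∈ FM Q M, HC Q g₀ ≤ HC Q f) →
      rho f₀ =ᵐ[volume] rho g₀ → f₀ =ᵐ[volume] g₀) ∧
    (∀ ρ₀ ∈ FMr Q M, (∀ σ ∈ FMr Q M, HCr Q ρ₀ ≤ HCr Q σ) →
      ∃ f₀ ∈ FM Q M, (∀ f ∈ FM Q M, HC Q f₀ ≤ HC Q f) ∧ rho f₀ =ᵐ[volume] ρ₀) ∧
    (∀ ρ₀ ∈ FMr Q M, (∀ σ ∈ FMr Q M, HCr Q ρ₀ ≤ HCr Q σ) → ∀ E₀ : ℝ,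
      (∀ᵐ x : Space ∂volume,
        (Upot ρ₀ x < E₀ → derivWithin (Phi Q) (Set.Ici 0) (ρ₀ x) = E₀ - Upot ρ₀ x) ∧
        (E₀ ≤ Upot ρ₀ x → ρ₀ x = 0)) →
      (lift Q' (Upot ρ₀) E₀ ∈ FM Q M ∧
        (∀ f ∈ FM Q M, HC Q (lift Q' (Upot ρ₀) E₀) ≤ HC Q f) ∧
        rho (lift Q' (Upot ρ₀) E₀) =ᵐ[volume] ρ₀) ∧
      ∀ f₀ ∈ FM Q M, (∀ f ∈ FM Q M, HC Q f₀ ≤ HC Q f) → rho f₀ =ᵐ[volume] ρ₀ →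
        f₀ =ᵐ[volume] lift Q' (Upot ρ₀) E₀) := by
  open EC in
  classical
  clear hex
  have hmain : ∀ f₀ ∈ FM Q M, (∀ f ∈ FM Q M, HC Q f₀ ≤ HC Q f) →
      HC Q f₀ = HCr Q (rho f₀) ∧ f₀ =ᵐ[volume] EC.fLift Q' (rho f₀) := by
    intro f₀ hf₀ hmin
    obtain ⟨hFMr, hle, heqc⟩ := EC.reduction (Q' := Q') hQ hf₀
    have h1 : HC Q f₀ = HCr Q (rho f₀) := by
      refine le_antisymm ?_ hle
      calc HC Q f₀ ≤ HC Q (EC.fLift Q' (rho f₀)) := hmin _ (EC.fLift_mem_FM hQ hFMr)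
      _ = HCr Q (rho f₀) := EC.HC_fLift hQ hFMr
    exact ⟨h1, heqc h1⟩
  refine ⟨?_, ?_, ?_, ?_⟩
  · -- (i)
    intro f₀ hf₀ hmin
    obtain ⟨hFMr, hle, -⟩ := EC.reduction (Q' := Q') hQ hf₀
    refine ⟨hFMr, fun σ hσ => ?_⟩
    calc HCr Q (rho f₀) ≤ HC Q f₀ := hle
    _ ≤ HC Q (EC.fLift Q' σ) := hmin _ (EC.fLift_mem_FM hQ hσ)
    _ = HCr Q σ := EC.HC_fLift hQ hσ
  · -- (ii)
    intro f₀ hf₀ g₀ hg₀ hminf hming hρeq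
    obtain ⟨-, hf'⟩ := hmain f₀ hf₀ hminf
    obtain ⟨-, hg'⟩ := hmain g₀ hg₀ hming
    have hmid : EC.fLift Q' (rho f₀) =ᵐ[volume] EC.fLift Q' (rho g₀) :=
      EC.fLift_congr hρeq
    exact hf'.trans (hmid.trans hg'.symm)
  · -- (iii)
    intro ρ₀ hρ₀ hmin
    refine ⟨EC.fLift Q' ρ₀, EC.fLift_mem_FM hQ hρ₀, fun f hf => ?_, ?_⟩
    · obtain ⟨hFMr, hle, -⟩ := EC.reduction (Q' := Q') hQ hf
      calc HC Q (EC.fLift Q' ρ₀) = HCr Q ρ₀ := EC.HC_fLift hQ hρ₀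
      _ ≤ HCr Q (rho f) := hmin _ hFMr
      _ ≤ HC Q f := hle
    · rw [EC.rho_fLift hQ hρ₀.1]
  · -- (iv)
    intro ρ₀ hρ₀ hmin E₀ hEL
    have hLfP : lift Q' (Upot ρ₀) E₀ =ᵐ[volume] EC.fLift Q' ρ₀ :=
      EC.lift_ae_fLift hQ hρ₀.1 hEL
    have hLf : ∀ᵐ x : Space, ∀ v : Space,
        lift Q' (Upot ρ₀) E₀ (x, v) = EC.fLift Q' ρ₀ (x, v) :=
      EC.lift_eq_fLift hQ hρ₀.1 hEL
    have hrhoL : rho (lift Q' (Upot ρ₀) E₀) =ᵐ[volume] ρ₀ := by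
      filter_upwards [hLf] with x hx
      have h2 : rho (lift Q' (Upot ρ₀) E₀) x = rho (EC.fLift Q' ρ₀) x :=
        integral_congr_ae (Filter.Eventually.of_forall fun v => hx v)
      rw [h2, EC.rho_fLift hQ hρ₀.1]
    have hmemL : lift Q' (Upot ρ₀) E₀ ∈ FM Q M := by
      obtain ⟨w0, w1, w2, w3, w4⟩ := EC.fLift_mem_FM (M := M) hQ hρ₀
      refine ⟨?_, w1.congr hLfP.symm, ?_, ?_, ?_⟩
      · intro p
        unfold lift
        split_ifs with hc
        · exact EC.invFunOn_mem_Ici hQ (by linarith)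
        · exact le_refl 0
      · refine w2.congr ?_
        filter_upwards [hLfP] with p hp
        rw [hp]
      · exact hρ₀.2.2.1.ae_eq hrhoL.symm
      · rw [integral_congr_ae hLfP]
        exact w4
    have hHCL : HC Q (lift Q' (Upot ρ₀) E₀) = HCr Q ρ₀ := by
      rw [← EC.HC_fLift hQ hρ₀]
      unfold HC
      have hCas : Cas Q (lift Q' (Upot ρ₀) E₀) = Cas Q (EC.fLift Q' ρ₀) := by
        unfold Cas
        refine integral_congr_ae ?_
        filter_upwards [hLfP] with p hp
        rw [hp]
      have hEk : Ekin (lift Q' (Upot ρ₀) E₀) = Ekin (EC.fLift Q' ρ₀) := by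
        unfold Ekin
        congr 1
        refine integral_congr_ae ?_
        filter_upwards [hLfP] with p hp
        rw [hp]
      have hEp : Epot (rho (lift Q' (Upot ρ₀) E₀)) = Epot (rho (EC.fLift Q' ρ₀)) := by
        apply EC.Epot_congr
        rw [EC.rho_fLift hQ hρ₀.1]
        exact hrhoL
      rw [hCas, hEk, hEp]
    refine ⟨⟨hmemL, fun f hf => ?_, hrhoL⟩, ?_⟩
    · obtain ⟨hFMr, hle, -⟩ := EC.reduction (Q' := Q') hQ hf
      calc HC Q (lift Q' (Upot ρ₀) E₀) = HCr Q ρ₀ := hHCL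
      _ ≤ HCr Q (rho f) := hmin _ hFMr
      _ ≤ HC Q f := hle
    · intro f₀ hf₀ hminf hρf
      obtain ⟨-, hf'⟩ := hmain f₀ hf₀ hminf
      have hmid : EC.fLift Q' (rho f₀) =ᵐ[volume] EC.fLift Q' ρ₀ := EC.fLift_congr hρf
      exact hf'.trans (hmid.trans hLfP.symm)
end
end

section
/- Extending Q and Φ by +∞ on (−∞,0), the Legendre transform of Φ is given for every λ ∈ ℝ by Φ*(λ) = ∫_{ℝ³} Q*(λ − (1/2)|v|²) dv; in particular Q*(λ) = 0 = Φ*(λ) for λ < 0. -/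
open MeasureTheory Real Filter Topology

noncomputable section

/-- Legendre transform of a function extended by `+∞` off the set `s`:
`h*(λ) = sup_{r ∈ s} (λ r - h(r))`. -/
def legendre (h : ℝ → ℝ) (s : Set ℝ) (lam : ℝ) : ℝ :=
  sSup ((fun r => lam * r - h r) '' s)

namespace LegAux

variable {Q Q' : ℝ → ℝ}

lemma Q_cont (hQ : QHyp Q Q') : ContinuousOn Q (Set.Ici 0) :=
  fun r hr => (hQ.hasDeriv r hr).continuousWithinAt

lemma Q_nonneg (hQ : QHyp Q Q') {r : ℝ} (hr : 0 ≤ r) : 0 ≤ Q r := by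
  rcases eq_or_lt_of_le hr with h | h
  · rw [← h, hQ.zero]
  · have h0 := hQ.hasDeriv 0 Set.self_mem_Ici
    rw [hQ.derivZero] at h0
    have hs := hQ.strictConvex.convexOn.le_slope_of_hasDerivWithinAt
      Set.self_mem_Ici (Set.mem_Ici.mpr hr) h h0
    rw [slope_def_field, hQ.zero, sub_zero, sub_zero] at hs
    have := mul_nonneg hs h.le
    rw [div_mul_cancel₀ _ h.ne'] at this
    exact this

lemma exists_max (hQ : QHyp Q Q') (s : ℝ) :
    ∃ r0, 0 ≤ r0 ∧ ∀ r, 0 ≤ r → s * r - Q r ≤ s * r0 - Q r0 := by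
  obtain ⟨R0, hR0⟩ := eventually_atTop.mp (hQ.superlinear.eventually_ge_atTop (|s| + 1))
  set R := max R0 1 with hRdef
  have hR1 : (1:ℝ) ≤ R := le_max_right _ _
  have hRtail : ∀ r, R ≤ r → s * r - Q r ≤ 0 := by
    intro r hr
    have hr1 : (1:ℝ) ≤ r := le_trans hR1 hr
    have hq : |s| + 1 ≤ Q r / r := hR0 r (le_trans (le_max_left _ _) hr)
    have hrpos : (0:ℝ) < r := lt_of_lt_of_le one_pos hr1
    have : (|s| + 1) * r ≤ Q r := (le_div_iff₀ hrpos).mp hq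
    nlinarith [le_abs_self s, abs_nonneg s]
  have hcont : ContinuousOn (fun r => s * r - Q r) (Set.Icc 0 R) :=
    ((continuous_const.mul continuous_id).continuousOn).sub
      ((Q_cont hQ).mono (Set.Icc_subset_Ici_self))
  obtain ⟨r0, hr0mem, hmax⟩ := isCompact_Icc.exists_isMaxOn
    (Set.nonempty_Icc.mpr (le_trans zero_le_one hR1)) hcont
  refine ⟨r0, hr0mem.1, fun r hr => ?_⟩
  by_cases hrR : r ≤ R
  · exact hmax ⟨hr, hrR⟩
  · have h1 : s * r - Q r ≤ 0 := hRtail r (le_of_not_ge hrR)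
    have h2 : s * 0 - Q 0 ≤ s * r0 - Q r0 := hmax ⟨le_refl 0, le_trans zero_le_one hR1⟩
    rw [hQ.zero] at h2
    linarith

lemma bddAbove_obj (hQ : QHyp Q Q') (s : ℝ) :
    BddAbove ((fun r => s * r - Q r) '' Set.Ici 0) := by
  obtain ⟨r0, _, hmax⟩ := exists_max hQ s
  exact ⟨s * r0 - Q r0, by rintro x ⟨r, hr, rfl⟩; exact hmax r hr⟩

lemma obj_le_Qs (hQ : QHyp Q Q') (s : ℝ) {r : ℝ} (hr : 0 ≤ r) :
    s * r - Q r ≤ legendre Q (Set.Ici 0) s :=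
  le_csSup (bddAbove_obj hQ s) ⟨r, hr, rfl⟩

lemma Qs_nonneg (hQ : QHyp Q Q') (s : ℝ) : 0 ≤ legendre Q (Set.Ici 0) s := by
  have := obj_le_Qs hQ s (le_refl 0)
  rw [hQ.zero] at this; linarith

lemma Qs_mono (hQ : QHyp Q Q') : Monotone (legendre Q (Set.Ici 0)) := by
  intro s t hst
  apply csSup_le (Set.nonempty_Ici.image _)
  rintro x ⟨r, hr, rfl⟩
  show s * r - Q r ≤ _
  calc s * r - Q r ≤ t * r - Q r := by nlinarith [Set.mem_Ici.mp hr]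
    _ ≤ _ := obj_le_Qs hQ t hr

lemma Qs_zero (hQ : QHyp Q Q') {s : ℝ} (hs : s ≤ 0) : legendre Q (Set.Ici 0) s = 0 := by
  refine le_antisymm (csSup_le (Set.nonempty_Ici.image _) ?_) (Qs_nonneg hQ s)
  rintro x ⟨r, hr, rfl⟩
  show s * r - Q r ≤ 0
  have h1 : 0 ≤ Q r := Q_nonneg hQ hr
  have h2 : s * r ≤ 0 := mul_nonpos_of_nonpos_of_nonneg hs hr
  linarith

/-- The set of maximizers. -/
def Mset (Q : ℝ → ℝ) (s : ℝ) : Set ℝ :=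
  {r : ℝ | 0 ≤ r ∧ s * r - Q r = legendre Q (Set.Ici 0) s}

/-- The (least) maximizer. -/
def yfun (Q : ℝ → ℝ) (s : ℝ) : ℝ := sInf (Mset Q s)

lemma Mset_nonempty (hQ : QHyp Q Q') (s : ℝ) : (Mset Q s).Nonempty := by
  obtain ⟨r0, hr0, hmax⟩ := exists_max hQ s
  refine ⟨r0, hr0, le_antisymm (obj_le_Qs hQ s hr0) ?_⟩
  apply csSup_le (Set.nonempty_Ici.image _)
  rintro x ⟨r, hr, rfl⟩
  exact hmax r hr

lemma Mset_bddBelow (s : ℝ) : BddBelow (Mset Q s) := ⟨0, fun r hr => hr.1⟩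

lemma Mset_closed (hQ : QHyp Q Q') (s : ℝ) : IsClosed (Mset Q s) := by
  have : Mset Q s = Set.Ici 0 ∩ (fun r => s * r - Q r) ⁻¹' {legendre Q (Set.Ici 0) s} := by
    ext r; simp [Mset, Set.mem_Ici]
  rw [this]
  apply ContinuousOn.preimage_isClosed_of_isClosed _ isClosed_Ici isClosed_singleton
  exact ((continuous_const.mul continuous_id).continuousOn).sub (Q_cont hQ)

lemma yfun_mem (hQ : QHyp Q Q') (s : ℝ) : yfun Q s ∈ Mset Q s :=
  (Mset_closed hQ s).csInf_mem (Mset_nonempty hQ s) (Mset_bddBelow s)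

lemma yfun_nonneg (hQ : QHyp Q Q') (s : ℝ) : 0 ≤ yfun Q s := (yfun_mem hQ s).1

lemma fenchel (hQ : QHyp Q Q') (s : ℝ) :
    s * yfun Q s - Q (yfun Q s) = legendre Q (Set.Ici 0) s := (yfun_mem hQ s).2

lemma yfun_mono (hQ : QHyp Q Q') : Monotone (yfun Q) := by
  intro s t hst
  rcases eq_or_lt_of_le hst with h | h
  · rw [h]
  · apply le_csInf (Mset_nonempty hQ t)
    intro b hb
    have ha := yfun_mem hQ s
    have h1 : s * b - Q b ≤ s * yfun Q s - Q (yfun Q s) := by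
      rw [ha.2]; exact obj_le_Qs hQ s hb.1
    have h2 : t * yfun Q s - Q (yfun Q s) ≤ t * b - Q b := by
      rw [hb.2]; exact obj_le_Qs hQ t ha.1
    nlinarith

lemma yfun_zero (hQ : QHyp Q Q') {s : ℝ} (hs : s ≤ 0) : yfun Q s = 0 := by
  have h0 : (0:ℝ) ∈ Mset Q s := ⟨le_refl 0, by rw [Qs_zero hQ hs, hQ.zero]; ring⟩
  exact le_antisymm (csInf_le (Mset_bddBelow s) h0)
    (le_csInf (Mset_nonempty hQ s) fun b hb => hb.1)


variable {Q Q' : ℝ → ℝ}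

lemma kinQint_nonneg (hQ : QHyp Q Q') {g : Space → ℝ} (hg : ∀ v, 0 ≤ g v) :
    0 ≤ kinQint Q g := by
  apply integral_nonneg
  intro v
  have h1 := Q_nonneg hQ (hg v)
  have h2 : 0 ≤ (1/2) * ‖v‖^2 * g v := by
    have := hg v; positivity
  exact add_nonneg h2 h1

lemma Gset_nonempty (hQ : QHyp Q Q') {r : ℝ} (hr : 0 ≤ r) : (Gset Q r).Nonempty := by
  set T : ℝ := (volume (Metric.ball (0:Space) 1)).toReal with hT
  have hTpos : 0 < T := by
    apply ENNReal.toReal_pos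
    · exact (Metric.measure_ball_pos volume (0:Space) one_pos).ne'
    · exact measure_ball_lt_top.ne
  set c : ℝ := r / T with hc
  have hc0 : 0 ≤ c := div_nonneg hr hTpos.le
  refine ⟨(Metric.ball (0:Space) 1).indicator (fun _ => c), ?_, ?_, ?_, ?_⟩
  · intro v; exact Set.indicator_nonneg (fun _ _ => hc0) v
  · exact (integrableOn_const measure_ball_lt_top.ne).integrable_indicator
      measurableSet_ball
  · have heq : (fun v : Space => (1/2) * ‖v‖^2 * ((Metric.ball (0:Space) 1).indicator
        (fun _ => c) v) + Q ((Metric.ball (0:Space) 1).indicator (fun _ => c) v))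
        = (Metric.ball (0:Space) 1).indicator (fun v => (1/2) * ‖v‖^2 * c + Q c) := by
      funext v
      by_cases hv : v ∈ Metric.ball (0:Space) 1 <;>
        simp [Set.indicator_of_mem, Set.indicator_of_notMem, hv, hQ.zero]
    rw [heq]
    apply IntegrableOn.integrable_indicator _ measurableSet_ball
    apply IntegrableOn.mono_set _ Metric.ball_subset_closedBall
    apply ContinuousOn.integrableOn_compact (isCompact_closedBall _ _)
    exact (((continuous_const.mul ((continuous_norm).pow 2)).mul
      continuous_const).add continuous_const).continuousOn
  · rw [integral_indicator_const c measurableSet_ball]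
    simp only [smul_eq_mul, measureReal_def, ← hT]
    rw [hc]; field_simp [hTpos.ne']

lemma Phi_nonneg (hQ : QHyp Q Q') (r : ℝ) : 0 ≤ Phi Q r := by
  apply Real.sInf_nonneg
  rintro x ⟨g, hg, rfl⟩
  exact kinQint_nonneg hQ hg.1

lemma Phi_le (hQ : QHyp Q Q') {r : ℝ} {g : Space → ℝ} (hg : g ∈ Gset Q r) :
    Phi Q r ≤ kinQint Q g :=
  csInf_le ⟨0, by rintro x ⟨g', hg', rfl⟩; exact kinQint_nonneg hQ hg'.1⟩ ⟨g, hg, rfl⟩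

lemma Phi_zero (hQ : QHyp Q Q') : Phi Q 0 = 0 := by
  have h0 : (fun _ : Space => (0:ℝ)) ∈ Gset Q 0 := by
    refine ⟨fun v => le_refl 0, integrable_zero _ _ _, ?_, by simp⟩
    have : (fun v : Space => (1/2) * ‖v‖^2 * (0:ℝ) + Q 0) = fun _ => (0:ℝ) := by
      funext v; rw [hQ.zero]; ring
    rw [this]; exact integrable_zero _ _ _
  have h1 : Phi Q 0 ≤ kinQint Q (fun _ => 0) := Phi_le hQ h0
  have h2 : kinQint Q (fun _ => 0) = 0 := by
    unfold kinQint
    have : (fun v : Space => (1/2) * ‖v‖^2 * (0:ℝ) + Q 0) = fun _ => (0:ℝ) := by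
      funext v; rw [hQ.zero]; ring
    rw [this, integral_zero]
  exact le_antisymm (h1.trans_eq h2) (Phi_nonneg hQ 0)


lemma integrable_aux (lam : ℝ) {F : ℝ → ℝ} (hmono : Monotone F)
    (hF0 : ∀ s : ℝ, s ≤ 0 → F s = 0) (hFnn : ∀ s : ℝ, 0 ≤ F s) :
    Integrable (fun v : Space => F (lam - (1/2) * ‖v‖^2)) := by
  set R := Real.sqrt (2 * |lam|) with hR
  have hscont : Continuous (fun v : Space => lam - (1/2) * ‖v‖^2) :=
    continuous_const.sub (continuous_const.mul ((continuous_norm).pow 2))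
  have hind : Integrable ((Metric.closedBall (0:Space) R).indicator (fun _ => F lam)) :=
    (integrableOn_const measure_closedBall_lt_top.ne).integrable_indicator
      measurableSet_closedBall
  apply Integrable.mono' hind (hmono.measurable.comp hscont.measurable).aestronglyMeasurable
  apply ae_of_all
  intro v
  simp only [Function.comp_apply]
  by_cases hv : v ∈ Metric.closedBall (0:Space) R
  · rw [Set.indicator_of_mem hv, Real.norm_eq_abs, abs_of_nonneg (hFnn _)]
    exact hmono (by nlinarith [sq_nonneg ‖v‖])
  · rw [Set.indicator_of_notMem hv]
    have hvR : R < ‖v‖ := by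
      simpa [Metric.mem_closedBall, dist_zero_right] using hv
    have hR2 : R^2 = 2 * |lam| := Real.sq_sqrt (by positivity)
    have h2 : 2 * |lam| ≤ ‖v‖^2 := by
      nlinarith [Real.sqrt_nonneg (2 * |lam|), norm_nonneg v]
    have h3 : lam - (1/2) * ‖v‖^2 ≤ 0 := by
      have := le_abs_self lam; linarith
    rw [hF0 _ h3]; simp

end LegAux

/-- With `Q` and `Φ` extended by `+∞` on `(-∞,0)` (i.e. the Legendre
suprema are taken over `[0,∞)`), one has `Φ*(λ) = ∫ Q*(λ - (1/2)|v|²) dv` for every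
`λ ∈ ℝ`; in particular `Q*(λ) = 0 = Φ*(λ)` for `λ < 0`. -/
theorem legendre_Phi_eq (Q Q' : ℝ → ℝ) (hQ : QHyp Q Q') :
    (∀ lam : ℝ, legendre (Phi Q) (Set.Ici 0) lam =
      ∫ v : Space, legendre Q (Set.Ici 0) (lam - (1/2) * ‖v‖^2)) ∧
    (∀ lam : ℝ, lam < 0 →
      legendre Q (Set.Ici 0) lam = 0 ∧ legendre (Phi Q) (Set.Ici 0) lam = 0) := by
  have main : ∀ lam : ℝ, legendre (Phi Q) (Set.Ici 0) lam =
      ∫ v : Space, legendre Q (Set.Ici 0) (lam - (1/2) * ‖v‖^2) := by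
    intro lam
    set I := ∫ v : Space, legendre Q (Set.Ici 0) (lam - (1/2) * ‖v‖^2) with hI
    have hQsfInt : Integrable
        (fun v : Space => legendre Q (Set.Ici 0) (lam - (1/2) * ‖v‖^2)) :=
      LegAux.integrable_aux lam (LegAux.Qs_mono hQ) (fun s hs => LegAux.Qs_zero hQ hs)
        (LegAux.Qs_nonneg hQ)
    -- upper bound : for every admissible g, `lam * r - kinQint Q g ≤ I`
    have key : ∀ ⦃r : ℝ⦄, 0 ≤ r → ∀ g ∈ Gset Q r, lam * r - kinQint Q g ≤ I := by
      intro r hr g hg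
      obtain ⟨hg0, hg1, hg2, hg3⟩ := hg
      have h1 : lam * r - kinQint Q g
          = ∫ v : Space, (lam * g v - ((1/2) * ‖v‖^2 * g v + Q (g v))) := by
        unfold kinQint
        rw [integral_sub (hg1.const_mul lam) hg2, integral_const_mul, hg3]
      rw [h1]
      apply integral_mono ((hg1.const_mul lam).sub hg2) hQsfInt
      intro v
      simp only [Pi.sub_apply]
      have hb := LegAux.obj_le_Qs hQ (lam - (1/2) * ‖v‖^2) (hg0 v)
      have heq : lam * g v - ((1/2) * ‖v‖^2 * g v + Q (g v))
          = (lam - (1/2) * ‖v‖^2) * g v - Q (g v) := by ring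
      rw [heq]; exact hb
    have hub : ∀ x ∈ ((fun r => lam * r - Phi Q r) '' Set.Ici 0), x ≤ I := by
      rintro x ⟨r, hr, rfl⟩
      show lam * r - Phi Q r ≤ I
      have hr' : (0:ℝ) ≤ r := hr
      have hPhi : lam * r - I ≤ Phi Q r := by
        apply le_csInf ((LegAux.Gset_nonempty hQ hr').image _)
        rintro b ⟨g, hg, rfl⟩
        have := key hr' g hg
        have hk : kinQint Q g ≥ lam * r - I := by linarith
        exact hk
      linarith
    -- the maximizer
    set g₀ : Space → ℝ := fun v => LegAux.yfun Q (lam - (1/2) * ‖v‖^2) with hg₀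
    have hg₀Int : Integrable g₀ :=
      LegAux.integrable_aux lam (LegAux.yfun_mono hQ) (fun s hs => LegAux.yfun_zero hQ hs)
        (LegAux.yfun_nonneg hQ)
    have hpw : ∀ v : Space, (1/2) * ‖v‖^2 * g₀ v + Q (g₀ v)
        = lam * g₀ v - legendre Q (Set.Ici 0) (lam - (1/2) * ‖v‖^2) := by
      intro v
      have := LegAux.fenchel hQ (lam - (1/2) * ‖v‖^2)
      simp only [hg₀]
      linarith
    have hcombInt : Integrable (fun v : Space => (1/2) * ‖v‖^2 * g₀ v + Q (g₀ v)) := by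
      have : (fun v : Space => (1/2) * ‖v‖^2 * g₀ v + Q (g₀ v))
          = fun v : Space => lam * g₀ v - legendre Q (Set.Ici 0) (lam - (1/2) * ‖v‖^2) := by
        funext v; exact hpw v
      rw [this]
      exact (hg₀Int.const_mul lam).sub hQsfInt
    set r₀ : ℝ := ∫ v : Space, g₀ v with hr₀def
    have hr₀ : 0 ≤ r₀ := integral_nonneg fun v => LegAux.yfun_nonneg hQ _
    have hg₀mem : g₀ ∈ Gset Q r₀ :=
      ⟨fun v => LegAux.yfun_nonneg hQ _, hg₀Int, hcombInt, rfl⟩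
    have hkin : kinQint Q g₀ = lam * r₀ - I := by
      unfold kinQint
      have : (fun v : Space => (1/2) * ‖v‖^2 * g₀ v + Q (g₀ v))
          = fun v : Space => lam * g₀ v - legendre Q (Set.Ici 0) (lam - (1/2) * ‖v‖^2) := by
        funext v; exact hpw v
      rw [this, integral_sub (hg₀Int.const_mul lam) hQsfInt, integral_const_mul]
    have hle : I ≤ lam * r₀ - Phi Q r₀ := by
      have := LegAux.Phi_le hQ hg₀mem
      rw [hkin] at this
      linarith
    refine le_antisymm (csSup_le (Set.nonempty_Ici.image _) hub) ?_
    have hmem := le_csSup (⟨I, hub⟩ : BddAbove ((fun r => lam * r - Phi Q r) '' Set.Ici 0))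
      (Set.mem_image_of_mem _ (Set.mem_Ici.mpr hr₀))
    calc I ≤ lam * r₀ - Phi Q r₀ := hle
      _ ≤ _ := hmem
  refine ⟨main, fun lam hlam => ⟨LegAux.Qs_zero hQ hlam.le, ?_⟩⟩
  rw [main lam]
  have hz : ∀ v : Space, legendre Q (Set.Ici 0) (lam - (1/2) * ‖v‖^2) = 0 := fun v =>
    LegAux.Qs_zero hQ (by nlinarith [sq_nonneg ‖v‖])
  simp only [hz, integral_zero]
end
end

section
/- The function Φ belongs to C¹([0,∞)), is strictly convex, and satisfies Φ(0) = Φ'(0) = 0. -/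
open MeasureTheory Real Filter Topology

noncomputable section

namespace PhiAux

variable {Q Q' : ℝ → ℝ}

lemma contQ (hQ : QHyp Q Q') : ContinuousOn Q (Set.Ici 0) :=
  fun x hx => (hQ.hasDeriv x hx).continuousWithinAt

lemma strictMonoQ' (hQ : QHyp Q Q') : StrictMonoOn Q' (Set.Ici 0) := by
  intro x hx y hy hxy
  have h1 : Q' x < slope Q x y :=
    hQ.strictConvex.lt_slope_of_hasDerivWithinAt hx hy hxy (hQ.hasDeriv x hx)
  have h2 : slope Q x y < Q' y :=
    hQ.strictConvex.slope_lt_of_hasDerivWithinAt hx hy hxy (hQ.hasDeriv y hy)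
  exact h1.trans h2

lemma Q'nonneg (hQ : QHyp Q Q') {s : ℝ} (hs : 0 ≤ s) : 0 ≤ Q' s := by
  rcases eq_or_lt_of_le hs with h | h
  · rw [← h, hQ.derivZero]
  · have := strictMonoQ' hQ Set.self_mem_Ici (Set.mem_Ici.2 hs) h
    rw [hQ.derivZero] at this; exact this.le

lemma tangent (hQ : QHyp Q Q') {x y : ℝ} (hx : 0 ≤ x) (hy : 0 ≤ y) :
    Q x + Q' x * (y - x) ≤ Q y := by
  rcases lt_trichotomy x y with h | h | h
  · have := hQ.strictConvex.convexOn.le_slope_of_hasDerivWithinAt hx hy h (hQ.hasDeriv x hx)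
    rw [slope_def_field, le_div_iff₀ (by linarith)] at this
    nlinarith [this]
  · simp [h]
  · have := hQ.strictConvex.convexOn.slope_le_of_hasDerivWithinAt hy hx h (hQ.hasDeriv x hx)
    rw [slope_def_field, div_le_iff₀ (by linarith)] at this
    nlinarith [this]

lemma Qnonneg (hQ : QHyp Q Q') {t : ℝ} (ht : 0 ≤ t) : 0 ≤ Q t := by
  have := tangent hQ le_rfl ht
  rw [hQ.zero, hQ.derivZero] at this; linarith

lemma Q'_atTop (hQ : QHyp Q Q') : Filter.Tendsto Q' Filter.atTop Filter.atTop := by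
  refine Filter.tendsto_atTop_mono' _ ?_ hQ.superlinear
  filter_upwards [Filter.eventually_gt_atTop 0] with t ht
  have := tangent hQ (le_of_lt ht) le_rfl
  rw [hQ.zero] at this
  rw [div_le_iff₀ ht]
  nlinarith [this]

/-- `Q'` extended to all of `ℝ` as a strictly monotone surjective function. -/
def Aext (Q' : ℝ → ℝ) : ℝ → ℝ := fun t => min t 0 + Q' (max t 0)

lemma Aext_of_nonneg {t : ℝ} (ht : 0 ≤ t) : Aext Q' t = Q' t := by
  simp [Aext, min_eq_right ht, max_eq_left ht]

lemma Aext_zero (hQ : QHyp Q Q') : Aext Q' 0 = 0 := by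
  simp [Aext, hQ.derivZero]

lemma contA (hQ : QHyp Q Q') : Continuous (Aext Q') := by
  refine (continuous_id.min continuous_const).add ?_
  exact (hQ.contDeriv).comp_continuous (continuous_id.max continuous_const)
    (fun t => Set.mem_Ici.2 (le_max_right _ _))

lemma strictMonoA (hQ : QHyp Q Q') : StrictMono (Aext Q') := by
  intro x y hxy
  rcases le_or_gt 0 x with hx | hx
  · have hy : 0 ≤ y := hx.trans hxy.le
    rw [Aext_of_nonneg hx, Aext_of_nonneg hy]
    exact strictMonoQ' hQ hx hy hxy
  · rcases le_or_gt y 0 with hy | hy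
    · simp only [Aext, min_eq_left hx.le, min_eq_left hy, max_eq_right hx.le, max_eq_right hy]
      exact add_lt_add_of_lt_of_le hxy le_rfl
    · simp only [Aext, min_eq_left hx.le, max_eq_right hx.le, min_eq_right hy.le,
        max_eq_left hy.le, hQ.derivZero]
      have h1 : Q' 0 ≤ Q' y := (strictMonoQ' hQ).monotoneOn Set.self_mem_Ici
        (Set.mem_Ici.2 hy.le) hy.le
      rw [hQ.derivZero] at h1
      linarith

lemma surjA (hQ : QHyp Q Q') : Function.Surjective (Aext Q') := by
  refine (contA hQ).surjective ?_ ?_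
  · refine Filter.tendsto_atTop_mono' _ ?_ (Q'_atTop hQ)
    filter_upwards [Filter.eventually_ge_atTop 0] with t ht
    rw [Aext_of_nonneg ht]
  · refine Filter.tendsto_atBot_mono' _ ?_ Filter.tendsto_id
    filter_upwards [Filter.eventually_le_atBot 0] with t ht
    have : Q' (max t 0) = Q' 0 := by rw [max_eq_right ht]
    simp only [Aext, this, hQ.derivZero, add_zero, min_eq_left ht, id]
    exact le_rfl

/-- The inverse of `Q'` (via the extension `Aext`). -/
def bIso (hQ : QHyp Q Q') : ℝ ≃o ℝ :=
  StrictMono.orderIsoOfSurjective _ (strictMonoA hQ) (surjA hQ)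

def binv (hQ : QHyp Q Q') : ℝ → ℝ := fun s => (bIso hQ).symm s

lemma binv_Aext (hQ : QHyp Q Q') (t : ℝ) : binv hQ (Aext Q' t) = t :=
  StrictMono.orderIsoOfSurjective_symm_apply_self _ (strictMonoA hQ) (surjA hQ) t

lemma Aext_binv (hQ : QHyp Q Q') (s : ℝ) : Aext Q' (binv hQ s) = s :=
  StrictMono.orderIsoOfSurjective_self_symm_apply _ (strictMonoA hQ) (surjA hQ) s

lemma binv_zero (hQ : QHyp Q Q') : binv hQ 0 = 0 := by
  conv_lhs => rw [← Aext_zero hQ]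
  exact binv_Aext hQ 0

lemma strictMono_binv (hQ : QHyp Q Q') : StrictMono (binv hQ) :=
  (bIso hQ).symm.strictMono

lemma cont_binv (hQ : QHyp Q Q') : Continuous (binv hQ) :=
  ((bIso hQ).symm.toHomeomorph).continuous

lemma binv_nonneg (hQ : QHyp Q Q') {s : ℝ} (hs : 0 ≤ s) : 0 ≤ binv hQ s := by
  have := (strictMono_binv hQ).monotone hs
  rwa [binv_zero hQ] at this

lemma Q'_binv (hQ : QHyp Q Q') {s : ℝ} (hs : 0 ≤ s) : Q' (binv hQ s) = s := by
  rw [← Aext_of_nonneg (Q' := Q') (binv_nonneg hQ hs), Aext_binv]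

lemma binv_atTop (hQ : QHyp Q Q') : Filter.Tendsto (binv hQ) Filter.atTop Filter.atTop := by
  refine tendsto_atTop_atTop_of_monotone' (strictMono_binv hQ).monotone ?_
  have : Set.range (binv hQ) = Set.univ := (bIso hQ).symm.surjective.range_eq
  rw [this]
  exact not_bddAbove_univ

/-- Young's inequality `s·t ≤ Q(t) + Q*(s⁺)` with `Q*(σ) = σ b(σ) - Q(b(σ))`. -/
lemma young (hQ : QHyp Q Q') {s t : ℝ} (ht : 0 ≤ t) :
    s * t ≤ Q t + (max s 0 * binv hQ (max s 0) - Q (binv hQ (max s 0))) := by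
  rcases le_or_gt s 0 with hs | hs
  · rw [max_eq_right hs, binv_zero hQ, hQ.zero]
    nlinarith [Qnonneg hQ ht, mul_nonneg (neg_nonneg.2 hs) ht]
  · rw [max_eq_left hs.le]
    have hb : 0 ≤ binv hQ s := binv_nonneg hQ hs.le
    have := tangent hQ hb ht
    rw [Q'_binv hQ hs.le] at this
    nlinarith [this]

end PhiAux


namespace PhiAux

variable {Q Q' : ℝ → ℝ}

/-- `s(λ,v) = (λ - |v|²/2)₊`. -/
def sfn (lam : ℝ) (v : Space) : ℝ := max (lam - (1/2) * ‖v‖^2) 0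

/-- The optimal profile `g_λ(v) = (Q')⁻¹((λ - |v|²/2)₊)`. -/
def gfn (hQ : QHyp Q Q') (lam : ℝ) (v : Space) : ℝ := binv hQ (sfn lam v)

/-- `W_λ(v) = Q*((λ - |v|²/2)₊)`. -/
def Wfn (hQ : QHyp Q Q') (lam : ℝ) (v : Space) : ℝ :=
  sfn lam v * binv hQ (sfn lam v) - Q (binv hQ (sfn lam v))

def Gfn (hQ : QHyp Q Q') (lam : ℝ) : ℝ := ∫ v : Space, gfn hQ lam v

def hfn (hQ : QHyp Q Q') (lam : ℝ) : ℝ := ∫ v : Space, Wfn hQ lam v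

lemma sfn_nonneg (lam : ℝ) (v : Space) : 0 ≤ sfn lam v := le_max_right _ _

lemma cont_sfn (lam : ℝ) : Continuous (sfn lam) := by
  refine (Continuous.sub continuous_const ?_).max continuous_const
  exact (continuous_const.mul ((continuous_norm).pow 2))

lemma cont_sfn_lam (v : Space) : Continuous (fun lam => sfn lam v) :=
  ((continuous_id.sub continuous_const).max continuous_const)

lemma sfn_mono_lam (v : Space) : Monotone (fun lam => sfn lam v) :=
  fun _ _ h => max_le_max (by simpa using h) le_rfl

lemma gfn_nonneg (hQ : QHyp Q Q') (lam : ℝ) (v : Space) : 0 ≤ gfn hQ lam v :=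
  binv_nonneg hQ (sfn_nonneg lam v)

lemma cont_gfn (hQ : QHyp Q Q') (lam : ℝ) : Continuous (gfn hQ lam) :=
  (cont_binv hQ).comp (cont_sfn lam)

lemma sfn_eq_zero (hQ : QHyp Q Q') {lam : ℝ} {v : Space}
    (hv : v ∉ Metric.closedBall (0:Space) (Real.sqrt (2 * max lam 0))) : sfn lam v = 0 := by
  simp only [Metric.mem_closedBall, dist_zero_right, not_le] at hv
  have h0 : (0:ℝ) ≤ 2 * max lam 0 := by positivity
  have hs := Real.sq_sqrt h0
  have h2 : 2 * max lam 0 < ‖v‖^2 := by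
    nlinarith [Real.sqrt_nonneg (2 * max lam 0)]
  have hl : lam ≤ max lam 0 := le_max_left _ _
  have hneg : lam - (1/2) * ‖v‖^2 ≤ 0 := by nlinarith
  rw [sfn, max_eq_right hneg]

lemma compactSupport_sfn (hQ : QHyp Q Q') (lam : ℝ) : HasCompactSupport (sfn lam) :=
  HasCompactSupport.intro (isCompact_closedBall (0:Space) _)
    (fun v hv => sfn_eq_zero hQ hv)

lemma compactSupport_gfn (hQ : QHyp Q Q') (lam : ℝ) : HasCompactSupport (gfn hQ lam) :=
  HasCompactSupport.intro (isCompact_closedBall (0:Space) (Real.sqrt (2 * max lam 0)))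
    (fun v hv => by rw [gfn, sfn_eq_zero hQ hv, binv_zero hQ])

lemma integrable_gfn (hQ : QHyp Q Q') (lam : ℝ) : Integrable (gfn hQ lam) :=
  (cont_gfn hQ lam).integrable_of_hasCompactSupport (compactSupport_gfn hQ lam)

lemma cont_Qgfn (hQ : QHyp Q Q') (lam : ℝ) : Continuous (fun v => Q (gfn hQ lam v)) :=
  (contQ hQ).comp_continuous (cont_gfn hQ lam) (fun v => gfn_nonneg hQ lam v)

lemma cont_Wfn (hQ : QHyp Q Q') (lam : ℝ) : Continuous (Wfn hQ lam) := by
  refine Continuous.sub (Continuous.mul (cont_sfn lam) (cont_gfn hQ lam)) ?_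
  exact cont_Qgfn hQ lam

lemma compactSupport_Wfn (hQ : QHyp Q Q') (lam : ℝ) : HasCompactSupport (Wfn hQ lam) :=
  HasCompactSupport.intro (isCompact_closedBall (0:Space) (Real.sqrt (2 * max lam 0)))
    (fun v hv => by rw [Wfn, sfn_eq_zero hQ hv, binv_zero hQ, hQ.zero]; ring)

lemma integrable_Wfn (hQ : QHyp Q Q') (lam : ℝ) : Integrable (Wfn hQ lam) :=
  (cont_Wfn hQ lam).integrable_of_hasCompactSupport (compactSupport_Wfn hQ lam)

/-- The pointwise identity showing `g_λ` attains equality in Young's inequality. -/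
lemma pointwise_eq (hQ : QHyp Q Q') (lam : ℝ) (v : Space) :
    (1/2) * ‖v‖^2 * gfn hQ lam v + Q (gfn hQ lam v)
      = lam * gfn hQ lam v - Wfn hQ lam v := by
  rcases le_or_gt (lam - (1/2) * ‖v‖^2) 0 with h | h
  · have hs : sfn lam v = 0 := max_eq_right h
    simp only [gfn, Wfn, hs, binv_zero hQ, hQ.zero]
    ring
  · have hs : sfn lam v = lam - (1/2) * ‖v‖^2 := max_eq_left h.le
    simp only [gfn, Wfn, hs]
    ring

lemma integrable_kin_gfn (hQ : QHyp Q Q') (lam : ℝ) :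
    Integrable (fun v : Space => (1/2) * ‖v‖^2 * gfn hQ lam v + Q (gfn hQ lam v)) := by
  refine Continuous.integrable_of_hasCompactSupport ?_ ?_
  · exact ((continuous_const.mul ((continuous_norm).pow 2)).mul (cont_gfn hQ lam)).add
      (cont_Qgfn hQ lam)
  · refine HasCompactSupport.intro (isCompact_closedBall (0:Space)
      (Real.sqrt (2 * max lam 0))) (fun v hv => ?_)
    rw [gfn, sfn_eq_zero hQ hv, binv_zero hQ, hQ.zero]
    ring

lemma kinQint_gfn (hQ : QHyp Q Q') (lam : ℝ) :
    kinQint Q (gfn hQ lam) = lam * Gfn hQ lam - hfn hQ lam := by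
  have : kinQint Q (gfn hQ lam) = ∫ v : Space, (lam * gfn hQ lam v - Wfn hQ lam v) := by
    rw [kinQint]
    congr 1
    funext v
    exact pointwise_eq hQ lam v
  rw [this, integral_sub ((integrable_gfn hQ lam).const_mul lam) (integrable_Wfn hQ lam),
    integral_const_mul, Gfn, hfn]

lemma gfn_mono_lam (hQ : QHyp Q Q') (v : Space) : Monotone (fun lam => gfn hQ lam v) :=
  fun _ _ h => (strictMono_binv hQ).monotone (sfn_mono_lam v h)

lemma Gfn_mono (hQ : QHyp Q Q') : Monotone (Gfn hQ) := by
  intro a b hab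
  exact integral_mono (integrable_gfn hQ a) (integrable_gfn hQ b)
    (fun v => gfn_mono_lam hQ v hab)

lemma Gfn_of_nonpos (hQ : QHyp Q Q') {lam : ℝ} (h : lam ≤ 0) : Gfn hQ lam = 0 := by
  have : gfn hQ lam = fun _ => 0 := by
    funext v
    have hs : sfn lam v = 0 := max_eq_right (by nlinarith [sq_nonneg ‖v‖])
    rw [gfn, hs, binv_zero hQ]
  rw [Gfn, this, integral_zero]

lemma cont_Gfn (hQ : QHyp Q Q') : Continuous (Gfn hQ) := by
  rw [continuous_iff_continuousAt]
  intro l0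
  refine MeasureTheory.continuousAt_of_dominated
      (bound := gfn hQ (l0 + 1)) ?_ ?_ (integrable_gfn hQ (l0+1)) ?_
  · exact Filter.Eventually.of_forall fun lam =>
      (cont_gfn hQ lam).aestronglyMeasurable
  · filter_upwards [eventually_le_nhds (lt_add_one l0)] with lam hlam
    refine Filter.Eventually.of_forall fun v => ?_
    rw [Real.norm_of_nonneg (gfn_nonneg hQ lam v)]
    exact gfn_mono_lam hQ v hlam
  · exact Filter.Eventually.of_forall fun v =>
      ((cont_binv hQ).comp (cont_sfn_lam v)).continuousAt

lemma Gfn_strictMonoOn (hQ : QHyp Q Q') : StrictMonoOn (Gfn hQ) (Set.Ici 0) := by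
  intro l1 h1 l2 h2 h12
  have hl2 : 0 < l2 := lt_of_le_of_lt h1 h12
  have hint : Integrable (fun v => gfn hQ l2 v - gfn hQ l1 v) :=
    (integrable_gfn hQ l2).sub (integrable_gfn hQ l1)
  have hpos : 0 < ∫ v : Space, (gfn hQ l2 v - gfn hQ l1 v) := by
    rw [integral_pos_iff_support_of_nonneg
      (fun v => sub_nonneg.2 (gfn_mono_lam hQ v h12.le)) hint]
    have hsub : Metric.ball (0:Space) (Real.sqrt (2 * l2)) ⊆
        Function.support (fun v => gfn hQ l2 v - gfn hQ l1 v) := by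
      intro v hv
      simp only [Metric.mem_ball, dist_zero_right] at hv
      have hv2 : ‖v‖^2 < 2 * l2 := by
        have h0 : (0:ℝ) ≤ ‖v‖ := norm_nonneg v
        nlinarith [Real.sq_sqrt (by linarith : (0:ℝ) ≤ 2 * l2),
          Real.sqrt_nonneg (2*l2)]
      have hslt : sfn l1 v < sfn l2 v := by
        have h2' : 0 < l2 - (1/2) * ‖v‖^2 := by nlinarith
        have : sfn l2 v = l2 - (1/2)*‖v‖^2 := max_eq_left h2'.le
        rw [this]
        rcases le_or_gt (l1 - (1/2)*‖v‖^2) 0 with h | h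
        · rw [sfn, max_eq_right h]; exact h2'
        · rw [sfn, max_eq_left h.le]; linarith
      have : gfn hQ l1 v < gfn hQ l2 v := strictMono_binv hQ hslt
      simp only [Function.mem_support]
      intro hc
      rw [sub_eq_zero] at hc
      exact absurd hc (ne_of_gt this)
    refine lt_of_lt_of_le ?_ (measure_mono hsub)
    refine Metric.isOpen_ball.measure_pos _ ?_
    refine Metric.nonempty_ball.2 ?_
    exact Real.sqrt_pos.2 (by linarith)
  have := integral_sub (integrable_gfn hQ l2) (integrable_gfn hQ l1)
  rw [this] at hpos
  have : Gfn hQ l1 < Gfn hQ l2 := by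
    simp only [Gfn]; linarith
  exact this

lemma Gfn_atTop (hQ : QHyp Q Q') : Filter.Tendsto (Gfn hQ) Filter.atTop Filter.atTop := by
  set C : ℝ := (volume (Metric.closedBall (0:Space) 1)).toReal with hC
  have hvol : 0 < C := by
    refine ENNReal.toReal_pos (ne_of_gt ?_) (ne_of_lt measure_closedBall_lt_top)
    exact Metric.measure_closedBall_pos volume 0 one_pos
  have key : ∀ lam : ℝ, 1 ≤ lam → C * binv hQ (lam/2) ≤ Gfn hQ lam := by
    intro lam hlam
    have hb : 0 ≤ binv hQ (lam/2) := binv_nonneg hQ (by linarith)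
    have hind : ∀ v : Space,
        (Metric.closedBall (0:Space) 1).indicator (fun _ => binv hQ (lam/2)) v
          ≤ gfn hQ lam v := by
      intro v
      rcases em (v ∈ Metric.closedBall (0:Space) 1) with hv | hv
      · rw [Set.indicator_of_mem hv]
        refine (strictMono_binv hQ).monotone ?_
        simp only [Metric.mem_closedBall, dist_zero_right] at hv
        have : lam/2 ≤ lam - (1/2) * ‖v‖^2 := by nlinarith [norm_nonneg v]
        exact le_trans this (le_max_left _ _)
      · rw [Set.indicator_of_notMem hv]
        exact gfn_nonneg hQ lam v
    have hint : Integrable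
        ((Metric.closedBall (0:Space) 1).indicator (fun _ => binv hQ (lam/2))) :=
      (integrable_indicator_iff measurableSet_closedBall).2
        (integrableOn_const measure_closedBall_lt_top.ne)
    have := integral_mono hint (integrable_gfn hQ lam) hind
    rwa [integral_indicator_const _ measurableSet_closedBall, smul_eq_mul] at this
  have hbdd : Filter.Tendsto (fun lam => C * binv hQ (lam/2)) Filter.atTop Filter.atTop := by
    refine Filter.Tendsto.const_mul_atTop hvol ?_
    exact (binv_atTop hQ).comp (Filter.tendsto_id.atTop_div_const two_pos)
  refine Filter.tendsto_atTop_mono' Filter.atTop ?_ hbdd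
  filter_upwards [Filter.eventually_ge_atTop 1] with lam hlam
  exact key lam hlam

end PhiAux


namespace PhiAux

variable {Q Q' : ℝ → ℝ}

/-- `Gfn` extended to a strictly monotone surjection of `ℝ`. -/
def GE (hQ : QHyp Q Q') : ℝ → ℝ := fun t => Gfn hQ t + min t 0

lemma strictMono_GE (hQ : QHyp Q Q') : StrictMono (GE hQ) := by
  intro t1 t2 h12
  rcases le_or_gt t2 0 with h2 | h2
  · have h1 : t1 ≤ 0 := h12.le.trans h2
    simp only [GE, Gfn_of_nonpos hQ h1, Gfn_of_nonpos hQ h2, min_eq_left h1, min_eq_left h2]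
    linarith
  · rcases le_or_gt 0 t1 with h1 | h1
    · simp only [GE, min_eq_right h1, min_eq_right h2.le]
      have := Gfn_strictMonoOn hQ (Set.mem_Ici.2 h1) (Set.mem_Ici.2 h2.le) h12
      linarith
    · have hG1 : Gfn hQ t1 = 0 := Gfn_of_nonpos hQ h1.le
      have hG2 : 0 < Gfn hQ t2 := by
        have := Gfn_strictMonoOn hQ Set.self_mem_Ici (Set.mem_Ici.2 h2.le) h2
        rwa [Gfn_of_nonpos hQ le_rfl] at this
      simp only [GE, hG1, min_eq_left h1.le, min_eq_right h2.le]
      linarith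

lemma cont_GE (hQ : QHyp Q Q') : Continuous (GE hQ) :=
  (cont_Gfn hQ).add (continuous_id.min continuous_const)

lemma surj_GE (hQ : QHyp Q Q') : Function.Surjective (GE hQ) := by
  refine (cont_GE hQ).surjective ?_ ?_
  · refine ((Gfn_atTop hQ).congr' ?_)
    filter_upwards [Filter.eventually_ge_atTop 0] with t ht
    simp [GE, min_eq_right ht]
  · refine (Filter.tendsto_id.congr' ?_)
    filter_upwards [Filter.eventually_le_atBot 0] with t ht
    simp [GE, min_eq_left ht, Gfn_of_nonpos hQ ht]

def LIso (hQ : QHyp Q Q') : ℝ ≃o ℝ :=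
  StrictMono.orderIsoOfSurjective _ (strictMono_GE hQ) (surj_GE hQ)

/-- `Lfn r` is the Lagrange multiplier `λ(r)`, i.e. `Gfn (Lfn r) = r`. -/
def Lfn (hQ : QHyp Q Q') : ℝ → ℝ := fun r => (LIso hQ).symm r

lemma GE_Lfn (hQ : QHyp Q Q') (r : ℝ) : GE hQ (Lfn hQ r) = r :=
  StrictMono.orderIsoOfSurjective_self_symm_apply _ (strictMono_GE hQ) (surj_GE hQ) r

lemma Lfn_GE (hQ : QHyp Q Q') (t : ℝ) : Lfn hQ (GE hQ t) = t :=
  StrictMono.orderIsoOfSurjective_symm_apply_self _ (strictMono_GE hQ) (surj_GE hQ) t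

lemma strictMono_Lfn (hQ : QHyp Q Q') : StrictMono (Lfn hQ) := (LIso hQ).symm.strictMono

lemma cont_Lfn (hQ : QHyp Q Q') : Continuous (Lfn hQ) :=
  ((LIso hQ).symm.toHomeomorph).continuous

lemma GE_zero (hQ : QHyp Q Q') : GE hQ 0 = 0 := by
  simp [GE, Gfn_of_nonpos hQ le_rfl]

lemma Lfn_zero (hQ : QHyp Q Q') : Lfn hQ 0 = 0 := by
  conv_lhs => rw [← GE_zero hQ]
  exact Lfn_GE hQ 0

lemma Lfn_nonneg (hQ : QHyp Q Q') {r : ℝ} (hr : 0 ≤ r) : 0 ≤ Lfn hQ r := by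
  have := (strictMono_Lfn hQ).monotone hr
  rwa [Lfn_zero hQ] at this

lemma Gfn_Lfn (hQ : QHyp Q Q') {r : ℝ} (hr : 0 ≤ r) : Gfn hQ (Lfn hQ r) = r := by
  have h := GE_Lfn hQ r
  rw [GE, min_eq_right (Lfn_nonneg hQ hr)] at h
  linarith

lemma gfn_mem_Gset (hQ : QHyp Q Q') (lam : ℝ) : gfn hQ lam ∈ Gset Q (Gfn hQ lam) :=
  ⟨gfn_nonneg hQ lam, integrable_gfn hQ lam, integrable_kin_gfn hQ lam, rfl⟩

/-- The key lower bound `λ r - h(λ) ≤ ∫ (|v|²/2) g + Q(g)` for any `g ∈ G_r`. -/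
lemma lower (hQ : QHyp Q Q') {r lam : ℝ} (hlam : 0 ≤ lam) {g : Space → ℝ}
    (hg : g ∈ Gset Q r) : lam * r - hfn hQ lam ≤ kinQint Q g := by
  obtain ⟨hg0, hgi, hgki, hgr⟩ := hg
  have hpt : ∀ v : Space, lam * g v - Wfn hQ lam v
      ≤ (1/2) * ‖v‖^2 * g v + Q (g v) := by
    intro v
    have := young hQ (s := lam - (1/2) * ‖v‖^2) (hg0 v)
    simp only [Wfn, sfn]
    nlinarith [this]
  have hmono : ∫ v : Space, (lam * g v - Wfn hQ lam v)
      ≤ ∫ v : Space, ((1/2) * ‖v‖^2 * g v + Q (g v)) :=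
    integral_mono ((hgi.const_mul lam).sub (integrable_Wfn hQ lam)) hgki hpt
  rw [integral_sub (hgi.const_mul lam) (integrable_Wfn hQ lam), integral_const_mul, hgr] at hmono
  exact hmono

lemma Phi_eq (hQ : QHyp Q Q') {r : ℝ} (hr : 0 ≤ r) :
    Phi Q r = Lfn hQ r * r - hfn hQ (Lfn hQ r) := by
  have hlam : 0 ≤ Lfn hQ r := Lfn_nonneg hQ hr
  have hmemset : gfn hQ (Lfn hQ r) ∈ Gset Q r := by
    have := gfn_mem_Gset hQ (Lfn hQ r)
    rwa [Gfn_Lfn hQ hr] at this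
  have hval : kinQint Q (gfn hQ (Lfn hQ r)) = Lfn hQ r * r - hfn hQ (Lfn hQ r) := by
    rw [kinQint_gfn hQ, Gfn_Lfn hQ hr]
  have hmem : Lfn hQ r * r - hfn hQ (Lfn hQ r) ∈ kinQint Q '' Gset Q r :=
    ⟨gfn hQ (Lfn hQ r), hmemset, hval⟩
  refine le_antisymm (csInf_le ⟨Lfn hQ r * r - hfn hQ (Lfn hQ r), ?_⟩ hmem) ?_
  · rintro b ⟨g, hg, rfl⟩
    exact lower hQ hlam hg
  · refine le_csInf ⟨_, hmem⟩ ?_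
    rintro b ⟨g, hg, rfl⟩
    exact lower hQ hlam hg

lemma Phi_ge (hQ : QHyp Q Q') {r lam : ℝ} (hr : 0 ≤ r) (hlam : 0 ≤ lam) :
    lam * r - hfn hQ lam ≤ Phi Q r := by
  have hmemset : gfn hQ (Lfn hQ r) ∈ Gset Q r := by
    have := gfn_mem_Gset hQ (Lfn hQ r)
    rwa [Gfn_Lfn hQ hr] at this
  have := lower hQ hlam hmemset
  rw [kinQint_gfn hQ, Gfn_Lfn hQ hr, ← Phi_eq hQ hr] at this
  exact this

lemma hasDeriv_Phi (hQ : QHyp Q Q') {r : ℝ} (hr : 0 ≤ r) :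
    HasDerivWithinAt (Phi Q) (Lfn hQ r) (Set.Ici 0) r := by
  rw [hasDerivWithinAt_iff_tendsto_slope]
  have hLc : Filter.Tendsto (Lfn hQ) (nhdsWithin r (Set.Ici 0 \ {r})) (nhds (Lfn hQ r)) :=
    ((cont_Lfn hQ).continuousAt).tendsto.mono_left nhdsWithin_le_nhds
  have hmin : Filter.Tendsto (fun x => min (Lfn hQ x) (Lfn hQ r))
      (nhdsWithin r (Set.Ici 0 \ {r})) (nhds (Lfn hQ r)) := by
    have := hLc.min (tendsto_const_nhds (x := Lfn hQ r))
    simpa using this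
  have hmax : Filter.Tendsto (fun x => max (Lfn hQ x) (Lfn hQ r))
      (nhdsWithin r (Set.Ici 0 \ {r})) (nhds (Lfn hQ r)) := by
    have := hLc.max (tendsto_const_nhds (x := Lfn hQ r))
    simpa using this
  refine tendsto_of_tendsto_of_tendsto_of_le_of_le' hmin hmax ?_ ?_
  all_goals {
    filter_upwards [self_mem_nhdsWithin] with x hx
    obtain ⟨hx0, hxr⟩ := hx
    have hx0 : (0:ℝ) ≤ x := hx0
    have hxr : x ≠ r := hxr
    have key1 : Lfn hQ r * (x - r) ≤ Phi Q x - Phi Q r := by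
      have h1 := Phi_ge hQ (r := x) (lam := Lfn hQ r) hx0 (Lfn_nonneg hQ hr)
      have h2 := Phi_eq hQ hr
      nlinarith [h1]
    have key2 : Phi Q x - Phi Q r ≤ Lfn hQ x * (x - r) := by
      have h1 := Phi_ge hQ (r := r) (lam := Lfn hQ x) hr (Lfn_nonneg hQ hx0)
      have h2 := Phi_eq hQ hx0
      nlinarith [h1]
    rw [slope_def_field]
    rcases lt_or_gt_of_ne hxr with h | h
    · -- x < r
      have hd : x - r < 0 := by linarith
      first
      | { refine le_trans (min_le_left _ _) ?_
          rw [le_div_iff_of_neg hd]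
          exact key2 }
      | { refine le_trans ?_ (le_max_right _ _)
          rw [div_le_iff_of_neg hd]
          exact key1 }
    · -- r < x
      have hd : 0 < x - r := by linarith
      first
      | { refine le_trans (min_le_right _ _) ?_
          rw [le_div_iff₀ hd]
          exact key1 }
      | { refine le_trans ?_ (le_max_left _ _)
          rw [div_le_iff₀ hd]
          exact key2 }
  }

lemma hfn_zero (hQ : QHyp Q Q') : hfn hQ 0 = 0 := by
  have : Wfn hQ 0 = fun _ => 0 := by
    funext v
    have hs : sfn 0 v = 0 := max_eq_right (by nlinarith [sq_nonneg ‖v‖])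
    rw [Wfn, hs, binv_zero hQ, hQ.zero]
    ring
  rw [hfn, this, integral_zero]

end PhiAux


/-- `Φ ∈ C¹([0,∞))`, `Φ` is strictly convex on `[0,∞)`, and
`Φ(0) = Φ'(0) = 0`. -/
theorem Phi_C1_strictConvex (Q Q' : ℝ → ℝ) (hQ : QHyp Q Q') :
    (∃ Φ' : ℝ → ℝ,
      (∀ r ∈ Set.Ici (0:ℝ), HasDerivWithinAt (Phi Q) (Φ' r) (Set.Ici 0) r) ∧
      ContinuousOn Φ' (Set.Ici 0) ∧ Φ' 0 = 0) ∧
    StrictConvexOn ℝ (Set.Ici 0) (Phi Q) ∧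
    Phi Q 0 = 0 := by
  refine ⟨⟨PhiAux.Lfn hQ, fun r hr => PhiAux.hasDeriv_Phi hQ hr,
      (PhiAux.cont_Lfn hQ).continuousOn, PhiAux.Lfn_zero hQ⟩, ?_, ?_⟩
  · have hcont : ContinuousOn (Phi Q) (Set.Ici 0) :=
      fun r hr => (PhiAux.hasDeriv_Phi hQ hr).continuousWithinAt
    refine StrictMonoOn.strictConvexOn_of_deriv (convex_Ici 0) hcont ?_
    rw [interior_Ici]
    intro x hx y hy hxy
    have hx' : (0:ℝ) < x := hx
    have hy' : (0:ℝ) < y := hy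
    have dx : deriv (Phi Q) x = PhiAux.Lfn hQ x :=
      ((PhiAux.hasDeriv_Phi hQ hx'.le).hasDerivAt (Ici_mem_nhds hx')).deriv
    have dy : deriv (Phi Q) y = PhiAux.Lfn hQ y :=
      ((PhiAux.hasDeriv_Phi hQ hy'.le).hasDerivAt (Ici_mem_nhds hy')).deriv
    rw [dx, dy]
    exact PhiAux.strictMono_Lfn hQ hxy
  · rw [PhiAux.Phi_eq hQ le_rfl, PhiAux.Lfn_zero hQ, PhiAux.hfn_zero hQ]
    ring
end
end
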